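/- arXiv:1112.4879 — 4 statements merged into one kernel-verified Lean document; each statement's English description precedes it below -/
import Mathlib

section
/- Let β ∈ (0,1] and let A0, A1, Q0, Q1, Q2 be positive integers with Q2 ≤ A0·Q0. Let B′ be the union over all integer triples (q0,q1,q2) ≠ (0,0,0) with |q0| ≤ Q0, |q1| ≤ Q1, |q2| ≤ Q2 of the sets {(g0,g1,g2) ∈ (1,4]³ : |A0·g0·q0 + A1·g1·q1 + g2·q2| < β}. Then μ(B′) ≤ 6552·β·max{Q2/A0, Q0·Q2/A1}. -/
open MeasureTheory

namespace Stmt4Aux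

open Set

/-! ### One-dimensional measure bound -/

lemma ball1d (c d β : ℝ) (hc : c ≠ 0) :
    {z : ℝ | |c*z + d| < β} ⊆ Metric.ball (-(d/c)) (β/|c|) := by
  intro z hz
  simp only [Metric.mem_ball, Real.dist_eq, mem_setOf_eq] at *
  rw [lt_div_iff₀ (abs_pos.mpr hc)]
  calc |z - -(d/c)| * |c| = |c*z + d| := by
        rw [← abs_mul]; congr 1; field_simp; ring
    _ < β := hz

lemma vol1d (c d β : ℝ) (hc : c ≠ 0) :
    volume {z : ℝ | |c*z + d| < β} ≤ ENNReal.ofReal (2*β/|c|) := by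
  calc volume {z : ℝ | |c*z + d| < β} ≤ volume (Metric.ball (-(d/c)) (β/|c|)) :=
        measure_mono (ball1d c d β hc)
    _ = ENNReal.ofReal (2*(β/|c|)) := Real.volume_ball _ _
    _ = ENNReal.ofReal (2*β/|c|) := by rw [mul_div_assoc]

/-! ### Two-dimensional measure bounds -/

def Sset2 (s t d β : ℝ) : Set (ℝ × ℝ) :=
  {p | p.1 ∈ Ioc (1:ℝ) 4 ∧ p.2 ∈ Ioc (1:ℝ) 4 ∧ |s*p.1 + t*p.2 + d| < β}

lemma measSset2 (s t d β : ℝ) : MeasurableSet (Sset2 s t d β) := by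
  have h : Measurable fun p : ℝ×ℝ => |s*p.1 + t*p.2 + d| := by fun_prop
  have heq : Sset2 s t d β =
      (Prod.fst ⁻¹' Ioc (1:ℝ) 4) ∩ ((Prod.snd ⁻¹' Ioc (1:ℝ) 4) ∩
        ((fun p : ℝ×ℝ => |s*p.1 + t*p.2 + d|) ⁻¹' Iio β)) := by
    ext p; simp [Sset2, and_assoc]
  rw [heq]
  exact (measurable_fst measurableSet_Ioc).inter
    ((measurable_snd measurableSet_Ioc).inter (h measurableSet_Iio))

lemma vol2_t (s t d β : ℝ) (hβ : 0 ≤ β) (ht : t ≠ 0) :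
    volume (Sset2 s t d β) ≤ ENNReal.ofReal (6*β/|t|) := by
  rw [show (volume : Measure (ℝ×ℝ)) = (volume : Measure ℝ).prod volume from rfl,
    Measure.prod_apply (measSset2 s t d β)]
  have key : ∀ x : ℝ, volume (Prod.mk x ⁻¹' Sset2 s t d β) ≤
      (Ioc (1:ℝ) 4).indicator (fun _ => ENNReal.ofReal (2*β/|t|)) x := by
    intro x
    by_cases hx : x ∈ Ioc (1:ℝ) 4
    · rw [indicator_of_mem hx]
      refine le_trans (measure_mono ?_) (vol1d t (s*x + d) β ht)
      intro z hz
      simp only [mem_setOf_eq]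
      calc |t*z + (s*x + d)| = |s*x + t*z + d| := by ring_nf
        _ < β := hz.2.2
    · rw [indicator_of_notMem hx]
      have h0 : Prod.mk x ⁻¹' Sset2 s t d β = ∅ := by
        ext z; simp only [mem_preimage, mem_empty_iff_false, iff_false]
        intro hz; exact hx hz.1
      simp [h0]
  calc ∫⁻ x, volume (Prod.mk x ⁻¹' Sset2 s t d β) ≤
      ∫⁻ x, (Ioc (1:ℝ) 4).indicator (fun _ => ENNReal.ofReal (2*β/|t|)) x :=
        lintegral_mono key
    _ = ENNReal.ofReal (2*β/|t|) * volume (Ioc (1:ℝ) 4) := by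
        rw [lintegral_indicator measurableSet_Ioc, setLIntegral_const]
    _ = ENNReal.ofReal (2*β/|t|) * ENNReal.ofReal 3 := by
        rw [Real.volume_Ioc]; norm_num
    _ = ENNReal.ofReal (6*β/|t|) := by
        rw [← ENNReal.ofReal_mul (div_nonneg (by linarith) (abs_nonneg _))]; congr 1; ring

lemma vol2_s (s t d β : ℝ) (hβ : 0 ≤ β) (hs : s ≠ 0) :
    volume (Sset2 s t d β) ≤ ENNReal.ofReal (6*β/|s|) := by
  rw [show (volume : Measure (ℝ×ℝ)) = (volume : Measure ℝ).prod volume from rfl,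
    Measure.prod_apply_symm (measSset2 s t d β)]
  have key : ∀ y : ℝ, volume ((fun x => (x, y)) ⁻¹' Sset2 s t d β) ≤
      (Ioc (1:ℝ) 4).indicator (fun _ => ENNReal.ofReal (2*β/|s|)) y := by
    intro y
    by_cases hy : y ∈ Ioc (1:ℝ) 4
    · rw [indicator_of_mem hy]
      refine le_trans (measure_mono ?_) (vol1d s (t*y + d) β hs)
      intro x hx
      simp only [mem_setOf_eq]
      calc |s*x + (t*y + d)| = |s*x + t*y + d| := by ring_nf
        _ < β := hx.2.2
    · rw [indicator_of_notMem hy]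
      have h0 : (fun x => (x, y)) ⁻¹' Sset2 s t d β = ∅ := by
        ext x; simp only [mem_preimage, mem_empty_iff_false, iff_false]
        intro hx; exact hy hx.2.1
      simp [h0]
  calc ∫⁻ y, volume ((fun x => (x, y)) ⁻¹' Sset2 s t d β) ≤
      ∫⁻ y, (Ioc (1:ℝ) 4).indicator (fun _ => ENNReal.ofReal (2*β/|s|)) y :=
        lintegral_mono key
    _ = ENNReal.ofReal (2*β/|s|) * volume (Ioc (1:ℝ) 4) := by
        rw [lintegral_indicator measurableSet_Ioc, setLIntegral_const]
    _ = ENNReal.ofReal (2*β/|s|) * ENNReal.ofReal 3 := by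
        rw [Real.volume_Ioc]; norm_num
    _ = ENNReal.ofReal (6*β/|s|) := by
        rw [← ENNReal.ofReal_mul (div_nonneg (by linarith) (abs_nonneg _))]; congr 1; ring

/-! ### Three-dimensional measure bounds -/

def Sset3 (r s t β : ℝ) : Set (ℝ × ℝ × ℝ) :=
  {g | g.1 ∈ Ioc (1:ℝ) 4 ∧ g.2.1 ∈ Ioc (1:ℝ) 4 ∧ g.2.2 ∈ Ioc (1:ℝ) 4 ∧
    |r*g.1 + s*g.2.1 + t*g.2.2| < β}

lemma measSset3 (r s t β : ℝ) : MeasurableSet (Sset3 r s t β) := by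
  have h : Measurable fun g : ℝ×ℝ×ℝ => |r*g.1 + s*g.2.1 + t*g.2.2| := by fun_prop
  have heq : Sset3 r s t β =
      (Prod.fst ⁻¹' Ioc (1:ℝ) 4) ∩ (((fun g : ℝ×ℝ×ℝ => g.2.1) ⁻¹' Ioc (1:ℝ) 4) ∩
        (((fun g : ℝ×ℝ×ℝ => g.2.2) ⁻¹' Ioc (1:ℝ) 4) ∩
          ((fun g : ℝ×ℝ×ℝ => |r*g.1 + s*g.2.1 + t*g.2.2|) ⁻¹' Iio β))) := by
    ext g; simp [Sset3, and_assoc]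
  rw [heq]
  exact (measurable_fst measurableSet_Ioc).inter
    (((measurable_fst.comp measurable_snd) measurableSet_Ioc).inter
      (((measurable_snd.comp measurable_snd) measurableSet_Ioc).inter (h measurableSet_Iio)))

lemma vol3_s (r s t β : ℝ) (hβ : 0 ≤ β) (hs : s ≠ 0) :
    volume (Sset3 r s t β) ≤ ENNReal.ofReal (18*β/|s|) := by
  rw [show (volume : Measure (ℝ×ℝ×ℝ)) = (volume : Measure ℝ).prod volume from rfl,
    Measure.prod_apply (measSset3 r s t β)]
  have key : ∀ x : ℝ, volume (Prod.mk x ⁻¹' Sset3 r s t β) ≤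
      (Ioc (1:ℝ) 4).indicator (fun _ => ENNReal.ofReal (6*β/|s|)) x := by
    intro x
    by_cases hx : x ∈ Ioc (1:ℝ) 4
    · rw [indicator_of_mem hx]
      refine le_trans (measure_mono ?_) (vol2_s s t (r*x) β hβ hs)
      intro p hp
      refine ⟨hp.2.1, hp.2.2.1, ?_⟩
      calc |s*p.1 + t*p.2 + r*x| = |r*x + s*p.1 + t*p.2| := by ring_nf
        _ < β := hp.2.2.2
    · rw [indicator_of_notMem hx]
      have h0 : Prod.mk x ⁻¹' Sset3 r s t β = ∅ := by
        ext p; simp only [mem_preimage, mem_empty_iff_false, iff_false]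
        intro hp; exact hx hp.1
      simp [h0]
  calc ∫⁻ x, volume (Prod.mk x ⁻¹' Sset3 r s t β) ≤
      ∫⁻ x, (Ioc (1:ℝ) 4).indicator (fun _ => ENNReal.ofReal (6*β/|s|)) x :=
        lintegral_mono key
    _ = ENNReal.ofReal (6*β/|s|) * volume (Ioc (1:ℝ) 4) := by
        rw [lintegral_indicator measurableSet_Ioc, setLIntegral_const]
    _ = ENNReal.ofReal (6*β/|s|) * ENNReal.ofReal 3 := by
        rw [Real.volume_Ioc]; norm_num
    _ = ENNReal.ofReal (18*β/|s|) := by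
        rw [← ENNReal.ofReal_mul (div_nonneg (by linarith) (abs_nonneg _))]; congr 1; ring

lemma vol3_t (r s t β : ℝ) (hβ : 0 ≤ β) (ht : t ≠ 0) :
    volume (Sset3 r s t β) ≤ ENNReal.ofReal (18*β/|t|) := by
  rw [show (volume : Measure (ℝ×ℝ×ℝ)) = (volume : Measure ℝ).prod volume from rfl,
    Measure.prod_apply (measSset3 r s t β)]
  have key : ∀ x : ℝ, volume (Prod.mk x ⁻¹' Sset3 r s t β) ≤
      (Ioc (1:ℝ) 4).indicator (fun _ => ENNReal.ofReal (6*β/|t|)) x := by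
    intro x
    by_cases hx : x ∈ Ioc (1:ℝ) 4
    · rw [indicator_of_mem hx]
      refine le_trans (measure_mono ?_) (vol2_t s t (r*x) β hβ ht)
      intro p hp
      refine ⟨hp.2.1, hp.2.2.1, ?_⟩
      calc |s*p.1 + t*p.2 + r*x| = |r*x + s*p.1 + t*p.2| := by ring_nf
        _ < β := hp.2.2.2
    · rw [indicator_of_notMem hx]
      have h0 : Prod.mk x ⁻¹' Sset3 r s t β = ∅ := by
        ext p; simp only [mem_preimage, mem_empty_iff_false, iff_false]
        intro hp; exact hx hp.1
      simp [h0]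
  calc ∫⁻ x, volume (Prod.mk x ⁻¹' Sset3 r s t β) ≤
      ∫⁻ x, (Ioc (1:ℝ) 4).indicator (fun _ => ENNReal.ofReal (6*β/|t|)) x :=
        lintegral_mono key
    _ = ENNReal.ofReal (6*β/|t|) * volume (Ioc (1:ℝ) 4) := by
        rw [lintegral_indicator measurableSet_Ioc, setLIntegral_const]
    _ = ENNReal.ofReal (6*β/|t|) * ENNReal.ofReal 3 := by
        rw [Real.volume_Ioc]; norm_num
    _ = ENNReal.ofReal (18*β/|t|) := by
        rw [← ENNReal.ofReal_mul (div_nonneg (by linarith) (abs_nonneg _))]; congr 1; ring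

lemma vol3_r (r s t β : ℝ) (hβ : 0 ≤ β) (hr : r ≠ 0) :
    volume (Sset3 r s t β) ≤ ENNReal.ofReal (18*β/|r|) := by
  rw [show (volume : Measure (ℝ×ℝ×ℝ)) = (volume : Measure ℝ).prod volume from rfl,
    Measure.prod_apply_symm (measSset3 r s t β)]
  have key : ∀ p : ℝ×ℝ, volume ((fun x => (x, p)) ⁻¹' Sset3 r s t β) ≤
      (Ioc (1:ℝ) 4 ×ˢ Ioc (1:ℝ) 4).indicator (fun _ => ENNReal.ofReal (2*β/|r|)) p := by
    intro p
    by_cases hp : p ∈ Ioc (1:ℝ) 4 ×ˢ Ioc (1:ℝ) 4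
    · rw [indicator_of_mem hp]
      refine le_trans (measure_mono ?_) (vol1d r (s*p.1 + t*p.2) β hr)
      intro x hx
      simp only [mem_setOf_eq]
      calc |r*x + (s*p.1 + t*p.2)| = |r*x + s*p.1 + t*p.2| := by ring_nf
        _ < β := hx.2.2.2
    · rw [indicator_of_notMem hp]
      have h0 : (fun x => (x, p)) ⁻¹' Sset3 r s t β = ∅ := by
        ext x; simp only [mem_preimage, mem_empty_iff_false, iff_false]
        intro hx; exact hp ⟨hx.2.1, hx.2.2.1⟩
      simp [h0]
  calc ∫⁻ p : ℝ×ℝ, volume ((fun x => (x, p)) ⁻¹' Sset3 r s t β) ≤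
      ∫⁻ p, (Ioc (1:ℝ) 4 ×ˢ Ioc (1:ℝ) 4).indicator (fun _ => ENNReal.ofReal (2*β/|r|)) p :=
        lintegral_mono key
    _ = ENNReal.ofReal (2*β/|r|) * volume (Ioc (1:ℝ) 4 ×ˢ Ioc (1:ℝ) 4) := by
        rw [lintegral_indicator (measurableSet_Ioc.prod measurableSet_Ioc), setLIntegral_const]
    _ = ENNReal.ofReal (2*β/|r|) * ENNReal.ofReal 9 := by
        rw [show (volume : Measure (ℝ×ℝ)) = (volume : Measure ℝ).prod volume from rfl,
          Measure.prod_prod, Real.volume_Ioc]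
        congr 1
        rw [← ENNReal.ofReal_mul (by norm_num)]
        norm_num
    _ = ENNReal.ofReal (18*β/|r|) := by
        rw [← ENNReal.ofReal_mul (div_nonneg (by linarith) (abs_nonneg _))]; congr 1; ring

/-! ### Facts forced by nonemptiness -/

lemma triple_bound {x y z β a b c : ℝ} (hx : x ∈ Ioc (1:ℝ) 4) (hy : y ∈ Ioc (1:ℝ) 4)
    (hz : z ∈ Ioc (1:ℝ) 4) (habs : |a*x + b*y + c*z| < β) :
    |a| ≤ 4*|b| + 4*|c| + β ∧ (a ≠ 0 → |a| < 4*|b| + 4*|c| + β) := by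
  obtain ⟨hx1, hx4⟩ := hx
  obtain ⟨hy1, hy4⟩ := hy
  obtain ⟨hz1, hz4⟩ := hz
  have h1 : |a*x| ≤ β + |b*y| + |c*z| := by
    have e : a*x = ((a*x+b*y+c*z) + (-(b*y))) + (-(c*z)) := by ring
    calc |a*x| = |((a*x+b*y+c*z) + (-(b*y))) + (-(c*z))| := by rw [← e]
      _ ≤ |(a*x+b*y+c*z) + (-(b*y))| + |(-(c*z))| := abs_add_le _ _
      _ ≤ (|a*x+b*y+c*z| + |(-(b*y))|) + |(-(c*z))| := by
          exact add_le_add (abs_add_le _ _) le_rfl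
      _ ≤ β + |b*y| + |c*z| := by rw [abs_neg, abs_neg]; linarith
  have hby : |b*y| ≤ 4*|b| := by rw [abs_mul, abs_of_pos (by linarith : (0:ℝ) < y)]
                                 nlinarith [abs_nonneg b]
  have hcz : |c*z| ≤ 4*|c| := by rw [abs_mul, abs_of_pos (by linarith : (0:ℝ) < z)]
                                 nlinarith [abs_nonneg c]
  have hax : |a| ≤ |a*x| := by
    rw [abs_mul, abs_of_pos (by linarith : (0:ℝ) < x)]
    nlinarith [abs_nonneg a]
  constructor
  · linarith
  · intro ha
    have : |a| < |a*x| := by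
      rw [abs_mul, abs_of_pos (by linarith : (0:ℝ) < x)]
      nlinarith [abs_pos.mpr ha]
    linarith

lemma absCast1 (n : ℤ) : |(n:ℝ)| = (n.natAbs:ℝ) := by
  rw [Nat.cast_natAbs, Int.cast_abs]

lemma absCast (A : ℕ) (n : ℤ) : |(A:ℝ)*(n:ℝ)| = (A:ℝ)*(n.natAbs:ℝ) := by
  rw [abs_mul, Nat.abs_cast, absCast1]

lemma empt_facts (A0 A1 : ℕ) (hA0 : 0 < A0) (hA1 : 0 < A1) (β : ℝ) (hβ0 : 0 < β)
    (hβ1 : β ≤ 1) (q0 q1 q2 : ℤ)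
    (hne : (Sset3 ((A0:ℝ)*(q0:ℝ)) ((A1:ℝ)*(q1:ℝ)) ((q2:ℝ)) β).Nonempty) :
    (A0*q0.natAbs ≤ 4*(A1*q1.natAbs) + 4*q2.natAbs + 1)
    ∧ (q0.natAbs ≠ 0 → A0*q0.natAbs ≤ 4*(A1*q1.natAbs) + 4*q2.natAbs)
    ∧ (A1*q1.natAbs ≤ 4*(A0*q0.natAbs) + 4*q2.natAbs + 1)
    ∧ (q1.natAbs ≠ 0 → A1*q1.natAbs ≤ 4*(A0*q0.natAbs) + 4*q2.natAbs)
    ∧ (q2.natAbs ≤ 4*(A0*q0.natAbs) + 4*(A1*q1.natAbs) + 1)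
    ∧ (q2.natAbs ≠ 0 → q2.natAbs ≤ 4*(A0*q0.natAbs) + 4*(A1*q1.natAbs)) := by
  obtain ⟨g, hg1, hg2, hg3, habs⟩ := hne
  set r : ℝ := (A0:ℝ)*(q0:ℝ) with hr
  set s : ℝ := (A1:ℝ)*(q1:ℝ) with hs
  set t : ℝ := (q2:ℝ) with ht
  have habs1 : |s*g.2.1 + r*g.1 + t*g.2.2| < β := by
    rw [show s*g.2.1 + r*g.1 + t*g.2.2 = r*g.1 + s*g.2.1 + t*g.2.2 from by ring]
    exact habs
  have habs2 : |t*g.2.2 + s*g.2.1 + r*g.1| < β := by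
    rw [show t*g.2.2 + s*g.2.1 + r*g.1 = r*g.1 + s*g.2.1 + t*g.2.2 from by ring]
    exact habs
  have tb0 := triple_bound hg1 hg2 hg3 habs
  have tb1 := triple_bound hg2 hg1 hg3 habs1
  have tb2 := triple_bound hg3 hg2 hg1 habs2
  rw [hr, hs, ht, absCast, absCast, absCast1] at tb0 tb1 tb2
  refine ⟨?_, ?_, ?_, ?_, ?_, ?_⟩
  · have h := tb0.1
    have h' : ((A0*q0.natAbs : ℕ) : ℝ) ≤ ((4*(A1*q1.natAbs) + 4*q2.natAbs + 1 : ℕ) : ℝ) := by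
      push_cast
      linarith
    exact_mod_cast h'
  · intro h0
    have hrne : (A0:ℝ)*(q0:ℝ) ≠ 0 := by
      apply mul_ne_zero (by exact_mod_cast hA0.ne')
      exact_mod_cast Int.natAbs_ne_zero.mp h0
    have h := tb0.2 hrne
    have h' : ((A0*q0.natAbs : ℕ) : ℝ) < ((4*(A1*q1.natAbs) + 4*q2.natAbs + 1 : ℕ) : ℝ) := by
      push_cast
      linarith
    have h2 : A0*q0.natAbs < 4*(A1*q1.natAbs) + 4*q2.natAbs + 1 := by exact_mod_cast h'
    omega
  · have h := tb1.1
    have h' : ((A1*q1.natAbs : ℕ) : ℝ) ≤ ((4*(A0*q0.natAbs) + 4*q2.natAbs + 1 : ℕ) : ℝ) := by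
      push_cast
      linarith
    exact_mod_cast h'
  · intro h0
    have hsne : (A1:ℝ)*(q1:ℝ) ≠ 0 := by
      apply mul_ne_zero (by exact_mod_cast hA1.ne')
      exact_mod_cast Int.natAbs_ne_zero.mp h0
    have h := tb1.2 hsne
    have h' : ((A1*q1.natAbs : ℕ) : ℝ) < ((4*(A0*q0.natAbs) + 4*q2.natAbs + 1 : ℕ) : ℝ) := by
      push_cast
      linarith
    have h2 : A1*q1.natAbs < 4*(A0*q0.natAbs) + 4*q2.natAbs + 1 := by exact_mod_cast h'
    omega
  · have h := tb2.1
    have h' : ((q2.natAbs : ℕ) : ℝ) ≤ ((4*(A0*q0.natAbs) + 4*(A1*q1.natAbs) + 1 : ℕ) : ℝ) := by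
      push_cast
      linarith
    exact_mod_cast h'
  · intro h0
    have htne : ((q2:ℤ):ℝ) ≠ 0 := by
      exact_mod_cast Int.natAbs_ne_zero.mp h0
    have h := tb2.2 htne
    have h' : ((q2.natAbs : ℕ) : ℝ) < ((4*(A0*q0.natAbs) + 4*(A1*q1.natAbs) + 1 : ℕ) : ℝ) := by
      push_cast
      linarith
    have h2 : q2.natAbs < 4*(A0*q0.natAbs) + 4*(A1*q1.natAbs) + 1 := by exact_mod_cast h'
    omega

/-! ### Coverage -/

set_option maxHeartbeats 1000000 in
lemma coverage (A0 A1 Q2 : ℕ) (hA0 : 0 < A0) (hA1 : 0 < A1) (n0 n1 n2 : ℕ)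
    (hq : ¬(n0 = 0 ∧ n1 = 0 ∧ n2 = 0)) (hn2Q : n2 ≤ Q2)
    (e1 : A0*n0 ≤ 4*(A1*n1) + 4*n2 + 1) (e1' : n0 ≠ 0 → A0*n0 ≤ 4*(A1*n1) + 4*n2)
    (e2 : A1*n1 ≤ 4*(A0*n0) + 4*n2 + 1) (e2' : n1 ≠ 0 → A1*n1 ≤ 4*(A0*n0) + 4*n2)
    (e3 : n2 ≤ 4*(A0*n0) + 4*(A1*n1) + 1) (e3' : n2 ≠ 0 → n2 ≤ 4*(A0*n0) + 4*(A1*n1)) :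
    (n0 ≠ 0 ∧ (n1 ≠ 0 ∧ A1*n1 ≤ 9*(A0*n0))) ∨
    ((n0 ≠ 0 ∧ A0*n0 ≤ 9*Q2) ∧ (A1*n1 ≤ A0*n0) ∧ (n2 ≠ 0 ∧ 1*n2 ≤ A0*n0)) ∨
    ((n0 ≠ 0 ∧ A0*n0 ≤ Q2) ∧ (A1*n1 ≤ A0*n0) ∧ (n2 ≠ 0 ∧ 1*n2 ≤ 9*(A0*n0))) ∨
    (n2 ≠ 0 ∧ (A0*n0 ≤ n2) ∧ (n1 ≠ 0 ∧ A1*n1 ≤ 9*n2)) := by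
  have h0 : n0 = 0 ↔ A0*n0 = 0 := by rw [Nat.mul_eq_zero]; omega
  have h1 : n1 = 0 ↔ A1*n1 = 0 := by rw [Nat.mul_eq_zero]; omega
  have g0 : n0 ≤ A0*n0 := Nat.le_mul_of_pos_left n0 hA0
  have g1 : n1 ≤ A1*n1 := Nat.le_mul_of_pos_left n1 hA1
  generalize hm0 : A0*n0 = m0 at *
  generalize hm1 : A1*n1 = m1 at *
  omega

/-! ### Counting lemmas -/

lemma mem_Icc_of_natAbs_le {n : ℤ} {m : ℕ} (h : n.natAbs ≤ m) :
    n ∈ Finset.Icc (-(m:ℤ)) (m:ℤ) := by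
  rw [Finset.mem_Icc]; omega

lemma countNZ (Q : ℤ) (A B : ℕ) (hA : 0 < A) :
    ((((Finset.Icc (-Q) Q)).filter (fun n : ℤ => n ≠ 0 ∧ A * n.natAbs ≤ B)).card : ℝ)
      ≤ 2 * B / A := by
  have hsub : ((Finset.Icc (-Q) Q)).filter (fun n : ℤ => n ≠ 0 ∧ A * n.natAbs ≤ B) ⊆
      (Finset.Icc (-((B/A : ℕ) : ℤ)) ((B/A : ℕ) : ℤ)).erase 0 := by
    intro n hn
    simp only [Finset.mem_filter] at hn
    obtain ⟨-, hn0, hle⟩ := hn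
    refine Finset.mem_erase.mpr ⟨hn0, mem_Icc_of_natAbs_le ?_⟩
    exact Nat.le_div_iff_mul_le hA |>.mpr (by rw [Nat.mul_comm]; exact hle)
  have h1 := Finset.card_le_card hsub
  have h2 : ((Finset.Icc (-((B/A : ℕ) : ℤ)) ((B/A : ℕ) : ℤ)).erase 0).card ≤ 2 * (B/A) := by
    have hc : (Finset.Icc (-((B/A : ℕ) : ℤ)) ((B/A : ℕ) : ℤ)).card = 2*(B/A) + 1 := by
      rw [Int.card_Icc]; omega
    have h0 : (0:ℤ) ∈ Finset.Icc (-((B/A : ℕ) : ℤ)) ((B/A : ℕ) : ℤ) := by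
      rw [Finset.mem_Icc]; omega
    rw [Finset.card_erase_of_mem h0, hc]
    omega
  have h3 : (((Finset.Icc (-Q) Q)).filter (fun n : ℤ => n ≠ 0 ∧ A * n.natAbs ≤ B)).card
      ≤ 2 * (B/A) := le_trans h1 h2
  calc ((((Finset.Icc (-Q) Q)).filter (fun n : ℤ => n ≠ 0 ∧ A * n.natAbs ≤ B)).card : ℝ)
      ≤ (2 * (B/A) : ℕ) := by exact_mod_cast h3
    _ = 2 * ((B/A : ℕ) : ℝ) := by push_cast; ring
    _ ≤ 2 * ((B:ℝ)/A) := by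
        have := Nat.cast_div_le (m := B) (n := A) (α := ℝ)
        linarith
    _ = 2 * B / A := by ring

lemma countZ (Q : ℤ) (A B : ℕ) (hA : 0 < A) :
    ((((Finset.Icc (-Q) Q)).filter (fun n : ℤ => A * n.natAbs ≤ B)).card : ℝ)
      ≤ 2 * B / A + 1 := by
  have hsub : ((Finset.Icc (-Q) Q)).filter (fun n : ℤ => A * n.natAbs ≤ B) ⊆
      Finset.Icc (-((B/A : ℕ) : ℤ)) ((B/A : ℕ) : ℤ) := by
    intro n hn
    simp only [Finset.mem_filter] at hn
    exact mem_Icc_of_natAbs_le (Nat.le_div_iff_mul_le hA |>.mpr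
      (by rw [Nat.mul_comm]; exact hn.2))
  have h1 := Finset.card_le_card hsub
  have hc : (Finset.Icc (-((B/A : ℕ) : ℤ)) ((B/A : ℕ) : ℤ)).card = 2*(B/A) + 1 := by
    rw [Int.card_Icc]; omega
  calc ((((Finset.Icc (-Q) Q)).filter (fun n : ℤ => A * n.natAbs ≤ B)).card : ℝ)
      ≤ ((2 * (B/A) + 1 : ℕ) : ℝ) := by exact_mod_cast hc ▸ h1
    _ = 2 * ((B/A : ℕ) : ℝ) + 1 := by push_cast; ring
    _ ≤ 2 * ((B:ℝ)/A) + 1 := by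
        have := Nat.cast_div_le (m := B) (n := A) (α := ℝ)
        linarith
    _ = 2 * B / A + 1 := by ring

lemma countNZtriv (Q : ℕ) (P : ℤ → Prop) [DecidablePred P] :
    ((((Finset.Icc (-(Q:ℤ)) (Q:ℤ))).filter (fun n : ℤ => n ≠ 0 ∧ P n)).card : ℝ) ≤ 2 * Q := by
  have hsub : ((Finset.Icc (-(Q:ℤ)) (Q:ℤ))).filter (fun n : ℤ => n ≠ 0 ∧ P n) ⊆
      (Finset.Icc (-(Q:ℤ)) (Q:ℤ)).erase 0 := by
    intro n hn
    simp only [Finset.mem_filter] at hn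
    exact Finset.mem_erase.mpr ⟨hn.2.1, hn.1⟩
  have h1 := Finset.card_le_card hsub
  have h0 : (0:ℤ) ∈ Finset.Icc (-(Q:ℤ)) (Q:ℤ) := by rw [Finset.mem_Icc]; omega
  have h2 : ((Finset.Icc (-(Q:ℤ)) (Q:ℤ)).erase 0).card = 2*Q := by
    rw [Finset.card_erase_of_mem h0, Int.card_Icc]; omega
  calc ((((Finset.Icc (-(Q:ℤ)) (Q:ℤ))).filter (fun n : ℤ => n ≠ 0 ∧ P n)).card : ℝ)
      ≤ ((2*Q : ℕ) : ℝ) := by exact_mod_cast h2 ▸ h1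
    _ = 2 * Q := by push_cast; ring

lemma cardIcc (Q : ℕ) : (((Finset.Icc (-(Q:ℤ)) (Q:ℤ))).card : ℝ) = 2*Q+1 := by
  have h : (Finset.Icc (-(Q:ℤ)) (Q:ℤ)).card = 2*Q+1 := by rw [Int.card_Icc]; omega
  exact_mod_cast h

lemma cardErase (Q : ℕ) :
    (((Finset.Icc (-(Q:ℤ)) (Q:ℤ)).filter (fun n : ℤ => n ≠ 0)).card : ℝ) = 2*Q := by
  rw [Finset.filter_ne']
  have h0 : (0:ℤ) ∈ Finset.Icc (-(Q:ℤ)) (Q:ℤ) := by rw [Finset.mem_Icc]; omega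
  have h : ((Finset.Icc (-(Q:ℤ)) (Q:ℤ)).erase 0).card = 2*Q := by
    rw [Finset.card_erase_of_mem h0, Int.card_Icc]; omega
  exact_mod_cast h

/-! ### Sum factorization -/

lemma sum3_eq (I0 I1 I2 : Finset ℤ) (P0 : ℤ → Prop) (Pa Pb : ℤ → ℤ → Prop)
    [DecidablePred P0] [∀ a, DecidablePred (Pa a)] [∀ a, DecidablePred (Pb a)]
    (v : ℤ → ℝ) :
    ∑ q ∈ I0 ×ˢ I1 ×ˢ I2,
      (if P0 q.1 ∧ Pa q.1 q.2.1 ∧ Pb q.1 q.2.2 then v q.1 else 0)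
    = ∑ q0 ∈ I0.filter P0,
        ((I1.filter (Pa q0)).card : ℝ) * (((I2.filter (Pb q0)).card : ℝ) * v q0) := by
  rw [Finset.sum_product]
  rw [Finset.sum_filter]
  apply Finset.sum_congr rfl
  intro q0 _
  by_cases h0 : P0 q0
  · simp only [h0, if_true, true_and]
    rw [Finset.sum_product]
    calc ∑ q1 ∈ I1, ∑ q2 ∈ I2, (if Pa q0 q1 ∧ Pb q0 q2 then v q0 else 0)
        = ∑ q1 ∈ I1, (if Pa q0 q1 then ((I2.filter (Pb q0)).card : ℝ) * v q0 else 0) := by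
          apply Finset.sum_congr rfl
          intro q1 _
          by_cases ha : Pa q0 q1
          · simp only [ha, true_and, if_true]
            rw [← Finset.sum_filter, Finset.sum_const, nsmul_eq_mul]
          · simp [ha]
      _ = ((I1.filter (Pa q0)).card : ℝ) * (((I2.filter (Pb q0)).card : ℝ) * v q0) := by
          rw [← Finset.sum_filter, Finset.sum_const, nsmul_eq_mul]
  · simp [h0]

lemma sum3_eq' (I0 I1 I2 : Finset ℤ) (P0 : ℤ → Prop) (Pa Pb : ℤ → ℤ → Prop)
    [DecidablePred P0] [∀ a, DecidablePred (Pa a)] [∀ a, DecidablePred (Pb a)]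
    (v : ℤ → ℝ) :
    ∑ q ∈ I0 ×ˢ I1 ×ˢ I2,
      (if P0 q.2.2 ∧ Pa q.2.2 q.1 ∧ Pb q.2.2 q.2.1 then v q.2.2 else 0)
    = ∑ q2 ∈ I2.filter P0,
        ((I0.filter (Pa q2)).card : ℝ) * (((I1.filter (Pb q2)).card : ℝ) * v q2) := by
  rw [Finset.sum_product]
  have swap1 : ∀ q0 : ℤ, ∑ p ∈ I1 ×ˢ I2,
      (if P0 p.2 ∧ Pa p.2 q0 ∧ Pb p.2 p.1 then v p.2 else 0)
      = ∑ q2 ∈ I2, ∑ q1 ∈ I1, (if P0 q2 ∧ Pa q2 q0 ∧ Pb q2 q1 then v q2 else 0) := by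
    intro q0
    rw [Finset.sum_product]
    exact Finset.sum_comm
  simp only [swap1]
  rw [Finset.sum_comm]
  rw [Finset.sum_filter]
  apply Finset.sum_congr rfl
  intro q2 _
  by_cases h0 : P0 q2
  · simp only [h0, true_and, if_true]
    calc ∑ q0 ∈ I0, ∑ q1 ∈ I1, (if Pa q2 q0 ∧ Pb q2 q1 then v q2 else 0)
        = ∑ q0 ∈ I0, (if Pa q2 q0 then ((I1.filter (Pb q2)).card : ℝ) * v q2 else 0) := by
          apply Finset.sum_congr rfl
          intro q0 _
          by_cases ha : Pa q2 q0
          · simp only [ha, true_and, if_true]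
            rw [← Finset.sum_filter, Finset.sum_const, nsmul_eq_mul]
          · simp [ha]
      _ = ((I0.filter (Pa q2)).card : ℝ) * (((I1.filter (Pb q2)).card : ℝ) * v q2) := by
          rw [← Finset.sum_filter, Finset.sum_const, nsmul_eq_mul]
  · simp [h0]

/-! ### The four class bounds -/

lemma classB1 (β : ℝ) (hβ : 0 ≤ β) (A0 A1 Q0 Q1 Q2 : ℕ) (hA0 : 0 < A0) (hA1 : 0 < A1)
    (hQ2 : 0 < Q2) :
    ∑ q ∈ (Finset.Icc (-(Q0:ℤ)) (Q0:ℤ)) ×ˢ (Finset.Icc (-(Q1:ℤ)) (Q1:ℤ)) ×ˢ (Finset.Icc (-(Q2:ℤ)) (Q2:ℤ)),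
      (if (fun n : ℤ => n ≠ 0) q.1 ∧
          (fun (a n : ℤ) => n ≠ 0 ∧ A1 * n.natAbs ≤ 9*(A0*a.natAbs)) q.1 q.2.1 ∧
          (fun (_ _ : ℤ) => True) q.1 q.2.2
        then (fun n : ℤ => 18*β/((A0:ℝ)*(n.natAbs:ℝ))) q.1 else 0)
    ≤ 1944*β*((Q0:ℝ)*(Q2:ℝ)/(A1:ℝ)) := by
  refine le_trans (le_of_eq (sum3_eq (Finset.Icc (-(Q0:ℤ)) (Q0:ℤ)) (Finset.Icc (-(Q1:ℤ)) (Q1:ℤ))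
    (Finset.Icc (-(Q2:ℤ)) (Q2:ℤ)) (fun n : ℤ => n ≠ 0)
    (fun a n => n ≠ 0 ∧ A1 * n.natAbs ≤ 9*(A0*a.natAbs)) (fun _ _ => True)
    (fun n => 18*β/((A0:ℝ)*(n.natAbs:ℝ))))) ?_
  have hbound : ∀ q0 ∈ (Finset.Icc (-(Q0:ℤ)) (Q0:ℤ)).filter (fun n : ℤ => n ≠ 0),
      (((Finset.Icc (-(Q1:ℤ)) (Q1:ℤ)).filter
          ((fun (a n : ℤ) => n ≠ 0 ∧ A1 * n.natAbs ≤ 9*(A0*a.natAbs)) q0)).card : ℝ) *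
        ((((Finset.Icc (-(Q2:ℤ)) (Q2:ℤ)).filter ((fun (_ _ : ℤ) => True) q0)).card : ℝ) *
          (18*β/((A0:ℝ)*(q0.natAbs:ℝ))))
      ≤ 972*β*(Q2:ℝ)/(A1:ℝ) := by
    intro q0 hq0
    rw [Finset.mem_filter] at hq0
    have hn0 : 0 < q0.natAbs := Int.natAbs_pos.mpr hq0.2
    have hca := countNZ (Q1:ℤ) A1 (9*(A0*q0.natAbs)) hA1
    have hcb : ((((Finset.Icc (-(Q2:ℤ)) (Q2:ℤ)).filter ((fun (_ _ : ℤ) => True) q0)).card : ℝ)) ≤ 3*Q2 := by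
      simp only [Finset.filter_true]
      rw [cardIcc]
      have : (1:ℝ) ≤ Q2 := by exact_mod_cast hQ2
      linarith
    have hv : (0:ℝ) ≤ 18*β/((A0:ℝ)*(q0.natAbs:ℝ)) := by positivity
    have hA0R : (0:ℝ) < (A0:ℝ) := by exact_mod_cast hA0
    have hn0R : (0:ℝ) < (q0.natAbs:ℝ) := by exact_mod_cast hn0
    calc _ ≤ (2 * ((9*(A0*q0.natAbs) : ℕ) : ℝ) / (A1:ℝ)) *
          ((3*(Q2:ℝ)) * (18*β/((A0:ℝ)*(q0.natAbs:ℝ)))) := by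
          gcongr
      _ = 972*β*(Q2:ℝ)/(A1:ℝ) := by
          push_cast
          field_simp
          ring
  calc _ ≤ ∑ _q0 ∈ (Finset.Icc (-(Q0:ℤ)) (Q0:ℤ)).filter (fun n : ℤ => n ≠ 0),
        (972*β*(Q2:ℝ)/(A1:ℝ)) := Finset.sum_le_sum hbound
    _ = (((Finset.Icc (-(Q0:ℤ)) (Q0:ℤ)).filter (fun n : ℤ => n ≠ 0)).card : ℝ) *
        (972*β*(Q2:ℝ)/(A1:ℝ)) := by rw [Finset.sum_const, nsmul_eq_mul]
    _ ≤ (2*(Q0:ℝ)) * (972*β*(Q2:ℝ)/(A1:ℝ)) := by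
        rw [cardErase]
    _ = 1944*β*((Q0:ℝ)*(Q2:ℝ)/(A1:ℝ)) := by ring

lemma classB2 (β : ℝ) (hβ : 0 ≤ β) (A0 A1 Q0 Q1 Q2 : ℕ) (hA0 : 0 < A0) (hA1 : 0 < A1) :
    ∑ q ∈ (Finset.Icc (-(Q0:ℤ)) (Q0:ℤ)) ×ˢ (Finset.Icc (-(Q1:ℤ)) (Q1:ℤ)) ×ˢ (Finset.Icc (-(Q2:ℤ)) (Q2:ℤ)),
      (if (fun n : ℤ => n ≠ 0 ∧ A0 * n.natAbs ≤ 9*Q2) q.1 ∧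
          (fun (a n : ℤ) => A1 * n.natAbs ≤ A0*a.natAbs) q.1 q.2.1 ∧
          (fun (a n : ℤ) => n ≠ 0 ∧ 1 * n.natAbs ≤ A0*a.natAbs) q.1 q.2.2
        then (fun n : ℤ => 18*β/((A0:ℝ)*(n.natAbs:ℝ))) q.1 else 0)
    ≤ 144*β*((Q0:ℝ)*(Q2:ℝ)/(A1:ℝ)) + 648*β*((Q2:ℝ)/(A0:ℝ)) := by
  refine le_trans (le_of_eq (sum3_eq (Finset.Icc (-(Q0:ℤ)) (Q0:ℤ)) (Finset.Icc (-(Q1:ℤ)) (Q1:ℤ))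
    (Finset.Icc (-(Q2:ℤ)) (Q2:ℤ)) (fun n : ℤ => n ≠ 0 ∧ A0 * n.natAbs ≤ 9*Q2)
    (fun a n => A1 * n.natAbs ≤ A0*a.natAbs)
    (fun a n => n ≠ 0 ∧ 1 * n.natAbs ≤ A0*a.natAbs)
    (fun n => 18*β/((A0:ℝ)*(n.natAbs:ℝ))))) ?_
  set F0 := (Finset.Icc (-(Q0:ℤ)) (Q0:ℤ)).filter (fun n : ℤ => n ≠ 0 ∧ A0 * n.natAbs ≤ 9*Q2) with hF0
  have hA0R : (0:ℝ) < (A0:ℝ) := by exact_mod_cast hA0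
  have hbound : ∀ q0 ∈ F0,
      (((Finset.Icc (-(Q1:ℤ)) (Q1:ℤ)).filter
          ((fun (a n : ℤ) => A1 * n.natAbs ≤ A0*a.natAbs) q0)).card : ℝ) *
        ((((Finset.Icc (-(Q2:ℤ)) (Q2:ℤ)).filter
          ((fun (a n : ℤ) => n ≠ 0 ∧ 1 * n.natAbs ≤ A0*a.natAbs) q0)).card : ℝ) *
          (18*β/((A0:ℝ)*(q0.natAbs:ℝ))))
      ≤ 72*β*(Q2:ℝ)/(A1:ℝ) + 36*β := by
    intro q0 hq0
    rw [hF0, Finset.mem_filter] at hq0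
    have hn0 : 0 < q0.natAbs := Int.natAbs_pos.mpr hq0.2.1
    have hn0R : (0:ℝ) < (q0.natAbs:ℝ) := by exact_mod_cast hn0
    set X : ℝ := (A0:ℝ)*(q0.natAbs:ℝ) with hX
    have hXpos : 0 < X := by positivity
    set ca : ℝ := (((Finset.Icc (-(Q1:ℤ)) (Q1:ℤ)).filter
          ((fun (a n : ℤ) => A1 * n.natAbs ≤ A0*a.natAbs) q0)).card : ℝ)
    set cb : ℝ := (((Finset.Icc (-(Q2:ℤ)) (Q2:ℤ)).filter
          ((fun (a n : ℤ) => n ≠ 0 ∧ 1 * n.natAbs ≤ A0*a.natAbs) q0)).card : ℝ)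
    have hca : ca ≤ 2*X/(A1:ℝ) + 1 := by
      refine le_trans (countZ (Q1:ℤ) A1 (A0*q0.natAbs) hA1) ?_
      push_cast
      rw [hX]
    have hcbQ : cb ≤ 2*(Q2:ℝ) := by
      refine le_trans (countNZtriv Q2 (fun n => 1 * n.natAbs ≤ A0*q0.natAbs)) ?_
      norm_num
    have hcbX : cb ≤ 2*X := by
      refine le_trans (countNZ (Q2:ℤ) 1 (A0*q0.natAbs) (by norm_num)) ?_
      push_cast
      rw [hX]
      norm_num
    have hv : (0:ℝ) ≤ 18*β/X := by positivity
    have hcb0 : (0:ℝ) ≤ cb := by positivity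
    have h1 : ca*(cb*(18*β/X)) ≤ (2*X/(A1:ℝ) + 1)*(cb*(18*β/X)) := by
      have : (0:ℝ) ≤ cb*(18*β/X) := by positivity
      exact mul_le_mul_of_nonneg_right hca this
    have h2 : (2*X/(A1:ℝ))*(cb*(18*β/X)) ≤ (2*X/(A1:ℝ))*((2*(Q2:ℝ))*(18*β/X)) := by
      have h0 : (0:ℝ) ≤ 2*X/(A1:ℝ) := by positivity
      exact mul_le_mul_of_nonneg_left (mul_le_mul_of_nonneg_right hcbQ hv) h0
    have h3 : cb*(18*β/X) ≤ (2*X)*(18*β/X) := mul_le_mul_of_nonneg_right hcbX hv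
    have e2 : (2*X/(A1:ℝ))*((2*(Q2:ℝ))*(18*β/X)) = 72*β*(Q2:ℝ)/(A1:ℝ) := by
      field_simp
      ring
    have e3 : (2*X)*(18*β/X) = 36*β := by
      field_simp
      ring
    calc ca*(cb*(18*β/X)) ≤ (2*X/(A1:ℝ) + 1)*(cb*(18*β/X)) := h1
      _ = (2*X/(A1:ℝ))*(cb*(18*β/X)) + cb*(18*β/X) := by ring
      _ ≤ (2*X/(A1:ℝ))*((2*(Q2:ℝ))*(18*β/X)) + (2*X)*(18*β/X) := add_le_add h2 h3
      _ = 72*β*(Q2:ℝ)/(A1:ℝ) + 36*β := by rw [e2, e3]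
  have hcard1 : (F0.card : ℝ) ≤ 2*(Q0:ℝ) := by
    have hsub : F0 ⊆ (Finset.Icc (-(Q0:ℤ)) (Q0:ℤ)).filter (fun n : ℤ => n ≠ 0) := by
      rw [hF0]
      intro n hn
      rw [Finset.mem_filter] at *
      exact ⟨hn.1, hn.2.1⟩
    refine le_trans ?_ (le_of_eq (cardErase Q0))
    exact_mod_cast Finset.card_le_card hsub
  have hcard2 : (F0.card : ℝ) ≤ 18*(Q2:ℝ)/(A0:ℝ) := by
    refine le_trans (countNZ (Q0:ℤ) A0 (9*Q2) hA0) ?_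
    push_cast
    rw [show (2:ℝ)*(9*(Q2:ℝ))/(A0:ℝ) = 18*(Q2:ℝ)/(A0:ℝ) by ring]
  calc _ ≤ ∑ _q0 ∈ F0, (72*β*(Q2:ℝ)/(A1:ℝ) + 36*β) := Finset.sum_le_sum hbound
    _ = (F0.card : ℝ) * (72*β*(Q2:ℝ)/(A1:ℝ)) + (F0.card : ℝ) * (36*β) := by
        rw [Finset.sum_const, nsmul_eq_mul]; ring
    _ ≤ (2*(Q0:ℝ)) * (72*β*(Q2:ℝ)/(A1:ℝ)) + (18*(Q2:ℝ)/(A0:ℝ)) * (36*β) := by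
        have t1 : (0:ℝ) ≤ 72*β*(Q2:ℝ)/(A1:ℝ) := by positivity
        have t2 : (0:ℝ) ≤ 36*β := by positivity
        exact add_le_add (mul_le_mul_of_nonneg_right hcard1 t1) (mul_le_mul_of_nonneg_right hcard2 t2)
    _ = 144*β*((Q0:ℝ)*(Q2:ℝ)/(A1:ℝ)) + 648*β*((Q2:ℝ)/(A0:ℝ)) := by ring

lemma classB3 (β : ℝ) (hβ : 0 ≤ β) (A0 A1 Q0 Q1 Q2 : ℕ) (hA0 : 0 < A0) (hA1 : 0 < A1) :
    ∑ q ∈ (Finset.Icc (-(Q0:ℤ)) (Q0:ℤ)) ×ˢ (Finset.Icc (-(Q1:ℤ)) (Q1:ℤ)) ×ˢ (Finset.Icc (-(Q2:ℤ)) (Q2:ℤ)),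
      (if (fun n : ℤ => n ≠ 0 ∧ A0 * n.natAbs ≤ Q2) q.1 ∧
          (fun (a n : ℤ) => A1 * n.natAbs ≤ A0*a.natAbs) q.1 q.2.1 ∧
          (fun (a n : ℤ) => n ≠ 0 ∧ 1 * n.natAbs ≤ 9*(A0*a.natAbs)) q.1 q.2.2
        then (fun n : ℤ => 18*β/((A0:ℝ)*(n.natAbs:ℝ))) q.1 else 0)
    ≤ 144*β*((Q0:ℝ)*(Q2:ℝ)/(A1:ℝ)) + 648*β*((Q2:ℝ)/(A0:ℝ)) := by
  refine le_trans (le_of_eq (sum3_eq (Finset.Icc (-(Q0:ℤ)) (Q0:ℤ)) (Finset.Icc (-(Q1:ℤ)) (Q1:ℤ))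
    (Finset.Icc (-(Q2:ℤ)) (Q2:ℤ)) (fun n : ℤ => n ≠ 0 ∧ A0 * n.natAbs ≤ Q2)
    (fun a n => A1 * n.natAbs ≤ A0*a.natAbs)
    (fun a n => n ≠ 0 ∧ 1 * n.natAbs ≤ 9*(A0*a.natAbs))
    (fun n => 18*β/((A0:ℝ)*(n.natAbs:ℝ))))) ?_
  set F0 := (Finset.Icc (-(Q0:ℤ)) (Q0:ℤ)).filter (fun n : ℤ => n ≠ 0 ∧ A0 * n.natAbs ≤ Q2) with hF0
  have hA0R : (0:ℝ) < (A0:ℝ) := by exact_mod_cast hA0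
  have hbound : ∀ q0 ∈ F0,
      (((Finset.Icc (-(Q1:ℤ)) (Q1:ℤ)).filter
          ((fun (a n : ℤ) => A1 * n.natAbs ≤ A0*a.natAbs) q0)).card : ℝ) *
        ((((Finset.Icc (-(Q2:ℤ)) (Q2:ℤ)).filter
          ((fun (a n : ℤ) => n ≠ 0 ∧ 1 * n.natAbs ≤ 9*(A0*a.natAbs)) q0)).card : ℝ) *
          (18*β/((A0:ℝ)*(q0.natAbs:ℝ))))
      ≤ 72*β*(Q2:ℝ)/(A1:ℝ) + 324*β := by
    intro q0 hq0
    rw [hF0, Finset.mem_filter] at hq0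
    have hn0 : 0 < q0.natAbs := Int.natAbs_pos.mpr hq0.2.1
    have hn0R : (0:ℝ) < (q0.natAbs:ℝ) := by exact_mod_cast hn0
    set X : ℝ := (A0:ℝ)*(q0.natAbs:ℝ) with hX
    have hXpos : 0 < X := by positivity
    set ca : ℝ := (((Finset.Icc (-(Q1:ℤ)) (Q1:ℤ)).filter
          ((fun (a n : ℤ) => A1 * n.natAbs ≤ A0*a.natAbs) q0)).card : ℝ)
    set cb : ℝ := (((Finset.Icc (-(Q2:ℤ)) (Q2:ℤ)).filter
          ((fun (a n : ℤ) => n ≠ 0 ∧ 1 * n.natAbs ≤ 9*(A0*a.natAbs)) q0)).card : ℝ)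
    have hca : ca ≤ 2*X/(A1:ℝ) + 1 := by
      refine le_trans (countZ (Q1:ℤ) A1 (A0*q0.natAbs) hA1) ?_
      push_cast
      rw [hX]
    have hcbQ : cb ≤ 2*(Q2:ℝ) := by
      refine le_trans (countNZtriv Q2 (fun n => 1 * n.natAbs ≤ 9*(A0*q0.natAbs))) ?_
      norm_num
    have hcbX : cb ≤ 18*X := by
      refine le_trans (countNZ (Q2:ℤ) 1 (9*(A0*q0.natAbs)) (by norm_num)) ?_
      push_cast
      rw [hX]
      ring_nf
      nlinarith [hXpos]
    have hv : (0:ℝ) ≤ 18*β/X := by positivity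
    have hcb0 : (0:ℝ) ≤ cb := by positivity
    have h1 : ca*(cb*(18*β/X)) ≤ (2*X/(A1:ℝ) + 1)*(cb*(18*β/X)) := by
      have : (0:ℝ) ≤ cb*(18*β/X) := by positivity
      exact mul_le_mul_of_nonneg_right hca this
    have h2 : (2*X/(A1:ℝ))*(cb*(18*β/X)) ≤ (2*X/(A1:ℝ))*((2*(Q2:ℝ))*(18*β/X)) := by
      have h0 : (0:ℝ) ≤ 2*X/(A1:ℝ) := by positivity
      exact mul_le_mul_of_nonneg_left (mul_le_mul_of_nonneg_right hcbQ hv) h0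
    have h3 : cb*(18*β/X) ≤ (18*X)*(18*β/X) := mul_le_mul_of_nonneg_right hcbX hv
    have e2 : (2*X/(A1:ℝ))*((2*(Q2:ℝ))*(18*β/X)) = 72*β*(Q2:ℝ)/(A1:ℝ) := by
      field_simp
      ring
    have e3 : (18*X)*(18*β/X) = 324*β := by
      field_simp
      ring
    calc ca*(cb*(18*β/X)) ≤ (2*X/(A1:ℝ) + 1)*(cb*(18*β/X)) := h1
      _ = (2*X/(A1:ℝ))*(cb*(18*β/X)) + cb*(18*β/X) := by ring
      _ ≤ (2*X/(A1:ℝ))*((2*(Q2:ℝ))*(18*β/X)) + (18*X)*(18*β/X) := add_le_add h2 h3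
      _ = 72*β*(Q2:ℝ)/(A1:ℝ) + 324*β := by rw [e2, e3]
  have hcard1 : (F0.card : ℝ) ≤ 2*(Q0:ℝ) := by
    have hsub : F0 ⊆ (Finset.Icc (-(Q0:ℤ)) (Q0:ℤ)).filter (fun n : ℤ => n ≠ 0) := by
      rw [hF0]
      intro n hn
      rw [Finset.mem_filter] at *
      exact ⟨hn.1, hn.2.1⟩
    refine le_trans ?_ (le_of_eq (cardErase Q0))
    exact_mod_cast Finset.card_le_card hsub
  have hcard2 : (F0.card : ℝ) ≤ 2*(Q2:ℝ)/(A0:ℝ) := by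
    exact_mod_cast countNZ (Q0:ℤ) A0 Q2 hA0
  calc _ ≤ ∑ _q0 ∈ F0, (72*β*(Q2:ℝ)/(A1:ℝ) + 324*β) := Finset.sum_le_sum hbound
    _ = (F0.card : ℝ) * (72*β*(Q2:ℝ)/(A1:ℝ)) + (F0.card : ℝ) * (324*β) := by
        rw [Finset.sum_const, nsmul_eq_mul]; ring
    _ ≤ (2*(Q0:ℝ)) * (72*β*(Q2:ℝ)/(A1:ℝ)) + (2*(Q2:ℝ)/(A0:ℝ)) * (324*β) := by
        have t1 : (0:ℝ) ≤ 72*β*(Q2:ℝ)/(A1:ℝ) := by positivity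
        have t2 : (0:ℝ) ≤ 324*β := by positivity
        exact add_le_add (mul_le_mul_of_nonneg_right hcard1 t1) (mul_le_mul_of_nonneg_right hcard2 t2)
    _ = 144*β*((Q0:ℝ)*(Q2:ℝ)/(A1:ℝ)) + 648*β*((Q2:ℝ)/(A0:ℝ)) := by ring

lemma classB45 (β : ℝ) (hβ : 0 ≤ β) (A0 A1 Q0 Q1 Q2 : ℕ) (hA0 : 0 < A0) (hA1 : 0 < A1) :
    ∑ q ∈ (Finset.Icc (-(Q0:ℤ)) (Q0:ℤ)) ×ˢ (Finset.Icc (-(Q1:ℤ)) (Q1:ℤ)) ×ˢ (Finset.Icc (-(Q2:ℤ)) (Q2:ℤ)),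
      (if (fun n : ℤ => n ≠ 0) q.2.2 ∧
          (fun (a n : ℤ) => A0 * n.natAbs ≤ a.natAbs) q.2.2 q.1 ∧
          (fun (a n : ℤ) => n ≠ 0 ∧ A1 * n.natAbs ≤ 9*a.natAbs) q.2.2 q.2.1
        then (fun n : ℤ => 18*β/((n.natAbs:ℝ))) q.2.2 else 0)
    ≤ 1296*β*((Q2:ℝ)*(Q2:ℝ)/((A0:ℝ)*(A1:ℝ))) + 648*β*((Q2:ℝ)/(A1:ℝ)) := by
  refine le_trans (le_of_eq (sum3_eq' (Finset.Icc (-(Q0:ℤ)) (Q0:ℤ)) (Finset.Icc (-(Q1:ℤ)) (Q1:ℤ))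
    (Finset.Icc (-(Q2:ℤ)) (Q2:ℤ)) (fun n : ℤ => n ≠ 0)
    (fun a n => A0 * n.natAbs ≤ a.natAbs)
    (fun a n => n ≠ 0 ∧ A1 * n.natAbs ≤ 9*a.natAbs)
    (fun n => 18*β/((n.natAbs:ℝ))))) ?_
  set F2 := (Finset.Icc (-(Q2:ℤ)) (Q2:ℤ)).filter (fun n : ℤ => n ≠ 0) with hF2
  have hA0R : (0:ℝ) < (A0:ℝ) := by exact_mod_cast hA0
  have hA1R : (0:ℝ) < (A1:ℝ) := by exact_mod_cast hA1
  have hbound : ∀ q2 ∈ F2,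
      (((Finset.Icc (-(Q0:ℤ)) (Q0:ℤ)).filter
          ((fun (a n : ℤ) => A0 * n.natAbs ≤ a.natAbs) q2)).card : ℝ) *
        ((((Finset.Icc (-(Q1:ℤ)) (Q1:ℤ)).filter
          ((fun (a n : ℤ) => n ≠ 0 ∧ A1 * n.natAbs ≤ 9*a.natAbs) q2)).card : ℝ) *
          (18*β/((q2.natAbs:ℝ))))
      ≤ 648*β*(Q2:ℝ)/((A0:ℝ)*(A1:ℝ)) + 324*β/(A1:ℝ) := by
    intro q2 hq2
    rw [hF2, Finset.mem_filter, Finset.mem_Icc] at hq2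
    have hn2 : 0 < q2.natAbs := Int.natAbs_pos.mpr hq2.2
    have hn2R : (0:ℝ) < (q2.natAbs:ℝ) := by exact_mod_cast hn2
    have hjQ : (q2.natAbs:ℝ) ≤ (Q2:ℝ) := by
      have h : q2.natAbs ≤ Q2 := by omega
      exact_mod_cast h
    set J : ℝ := (q2.natAbs:ℝ) with hJ
    set ca : ℝ := (((Finset.Icc (-(Q0:ℤ)) (Q0:ℤ)).filter
          ((fun (a n : ℤ) => A0 * n.natAbs ≤ a.natAbs) q2)).card : ℝ)
    set cb : ℝ := (((Finset.Icc (-(Q1:ℤ)) (Q1:ℤ)).filter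
          ((fun (a n : ℤ) => n ≠ 0 ∧ A1 * n.natAbs ≤ 9*a.natAbs) q2)).card : ℝ)
    have hca : ca ≤ 2*J/(A0:ℝ) + 1 := by
      refine le_trans (countZ (Q0:ℤ) A0 (q2.natAbs) hA0) ?_
      rw [hJ]
    have hcb : cb ≤ 18*J/(A1:ℝ) := by
      refine le_trans (countNZ (Q1:ℤ) A1 (9*q2.natAbs) hA1) ?_
      push_cast
      rw [hJ]
      rw [show (2:ℝ)*(9*J)/(A1:ℝ) = 18*J/(A1:ℝ) by ring]
    have hca0 : (0:ℝ) ≤ ca := by positivity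
    have hv : (0:ℝ) ≤ 18*β/J := by positivity
    have e1 : cb*(18*β/J) ≤ 324*β/(A1:ℝ) := by
      refine le_trans (mul_le_mul_of_nonneg_right hcb hv) (le_of_eq ?_)
      field_simp
      ring
    have h1 : ca*(cb*(18*β/J)) ≤ (2*J/(A0:ℝ) + 1)*(324*β/(A1:ℝ)) := by
      have hb0 : (0:ℝ) ≤ cb*(18*β/J) := by positivity
      have t0 : (0:ℝ) ≤ 2*J/(A0:ℝ) + 1 := by positivity
      calc ca*(cb*(18*β/J)) ≤ (2*J/(A0:ℝ) + 1)*(cb*(18*β/J)) :=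
            mul_le_mul_of_nonneg_right hca hb0
        _ ≤ (2*J/(A0:ℝ) + 1)*(324*β/(A1:ℝ)) := mul_le_mul_of_nonneg_left e1 t0
    calc ca*(cb*(18*β/J)) ≤ (2*J/(A0:ℝ) + 1)*(324*β/(A1:ℝ)) := h1
      _ = (2*J/(A0:ℝ))*(324*β/(A1:ℝ)) + 324*β/(A1:ℝ) := by ring
      _ ≤ (2*(Q2:ℝ)/(A0:ℝ))*(324*β/(A1:ℝ)) + 324*β/(A1:ℝ) := by
          have t1 : (0:ℝ) ≤ 324*β/(A1:ℝ) := by positivity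
          have t2 : 2*J/(A0:ℝ) ≤ 2*(Q2:ℝ)/(A0:ℝ) := by gcongr
          exact add_le_add (mul_le_mul_of_nonneg_right t2 t1) le_rfl
      _ = 648*β*(Q2:ℝ)/((A0:ℝ)*(A1:ℝ)) + 324*β/(A1:ℝ) := by
          rw [div_mul_div_comm]
          ring_nf
  have hcard : (F2.card : ℝ) ≤ 2*(Q2:ℝ) := by
    rw [hF2]
    exact le_of_eq (cardErase Q2)
  calc _ ≤ ∑ _q2 ∈ F2, (648*β*(Q2:ℝ)/((A0:ℝ)*(A1:ℝ)) + 324*β/(A1:ℝ)) := Finset.sum_le_sum hbound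
    _ = (F2.card : ℝ) * (648*β*(Q2:ℝ)/((A0:ℝ)*(A1:ℝ))) + (F2.card : ℝ) * (324*β/(A1:ℝ)) := by
        rw [Finset.sum_const, nsmul_eq_mul]; ring
    _ ≤ (2*(Q2:ℝ)) * (648*β*(Q2:ℝ)/((A0:ℝ)*(A1:ℝ))) + (2*(Q2:ℝ)) * (324*β/(A1:ℝ)) := by
        have t1 : (0:ℝ) ≤ 648*β*(Q2:ℝ)/((A0:ℝ)*(A1:ℝ)) := by positivity
        have t2 : (0:ℝ) ≤ 324*β/(A1:ℝ) := by positivity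
        exact add_le_add (mul_le_mul_of_nonneg_right hcard t1) (mul_le_mul_of_nonneg_right hcard t2)
    _ = 1296*β*((Q2:ℝ)*(Q2:ℝ)/((A0:ℝ)*(A1:ℝ))) + 648*β*((Q2:ℝ)/(A1:ℝ)) := by ring

lemma ite_nonneg {P : Prop} [Decidable P] {x : ℝ} (hx : 0 ≤ x) :
    0 ≤ (if P then x else 0) := by
  split <;> simp [hx]

end Stmt4Aux

open Stmt4Aux Set

set_option maxHeartbeats 4000000 in
/-- measure bound from the proof of Lemma 5 of the paper
(case in which the last scaling coefficient is the smallest). -/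
theorem stmt_4 (β : ℝ) (hβ : β ∈ Set.Ioc (0:ℝ) 1)
    (A0 A1 Q0 Q1 Q2 : ℕ) (hA0 : 0 < A0) (hA1 : 0 < A1)
    (hQ0 : 0 < Q0) (hQ1 : 0 < Q1) (hQ2 : 0 < Q2)
    (hle : Q2 ≤ A0 * Q0) :
    volume (⋃ (q0 : ℤ) (q1 : ℤ) (q2 : ℤ) (_ : (q0, q1, q2) ≠ (0, 0, 0))
        (_ : |q0| ≤ (Q0 : ℤ)) (_ : |q1| ≤ (Q1 : ℤ)) (_ : |q2| ≤ (Q2 : ℤ)),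
        {g : ℝ × ℝ × ℝ |
          g.1 ∈ Set.Ioc (1:ℝ) 4 ∧ g.2.1 ∈ Set.Ioc (1:ℝ) 4 ∧ g.2.2 ∈ Set.Ioc (1:ℝ) 4 ∧
          |(A0 : ℝ) * g.1 * (q0 : ℝ) + (A1 : ℝ) * g.2.1 * (q1 : ℝ) + g.2.2 * (q2 : ℝ)| < β})
      ≤ ENNReal.ofReal (6552 * β * max ((Q2 : ℝ) / (A0 : ℝ)) ((Q0 : ℝ) * (Q2 : ℝ) / (A1 : ℝ))) := by
  obtain ⟨hβ0, hβ1⟩ := hβ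
  set S : ℤ×ℤ×ℤ → Set (ℝ×ℝ×ℝ) :=
    fun q => Sset3 ((A0:ℝ)*(q.1:ℝ)) ((A1:ℝ)*(q.2.1:ℝ)) ((q.2.2:ℝ)) β with hSdef
  set w : ℤ×ℤ×ℤ → ℝ := fun q =>
    (if (fun n : ℤ => n ≠ 0) q.1 ∧
        (fun (a n : ℤ) => n ≠ 0 ∧ A1 * n.natAbs ≤ 9*(A0*a.natAbs)) q.1 q.2.1 ∧
        (fun (_ _ : ℤ) => True) q.1 q.2.2
      then (fun n : ℤ => 18*β/((A0:ℝ)*(n.natAbs:ℝ))) q.1 else 0) +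
    (if (fun n : ℤ => n ≠ 0 ∧ A0 * n.natAbs ≤ 9*Q2) q.1 ∧
        (fun (a n : ℤ) => A1 * n.natAbs ≤ A0*a.natAbs) q.1 q.2.1 ∧
        (fun (a n : ℤ) => n ≠ 0 ∧ 1 * n.natAbs ≤ A0*a.natAbs) q.1 q.2.2
      then (fun n : ℤ => 18*β/((A0:ℝ)*(n.natAbs:ℝ))) q.1 else 0) +
    (if (fun n : ℤ => n ≠ 0 ∧ A0 * n.natAbs ≤ Q2) q.1 ∧
        (fun (a n : ℤ) => A1 * n.natAbs ≤ A0*a.natAbs) q.1 q.2.1 ∧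
        (fun (a n : ℤ) => n ≠ 0 ∧ 1 * n.natAbs ≤ 9*(A0*a.natAbs)) q.1 q.2.2
      then (fun n : ℤ => 18*β/((A0:ℝ)*(n.natAbs:ℝ))) q.1 else 0) +
    (if (fun n : ℤ => n ≠ 0) q.2.2 ∧
        (fun (a n : ℤ) => A0 * n.natAbs ≤ a.natAbs) q.2.2 q.1 ∧
        (fun (a n : ℤ) => n ≠ 0 ∧ A1 * n.natAbs ≤ 9*a.natAbs) q.2.2 q.2.1
      then (fun n : ℤ => 18*β/((n.natAbs:ℝ))) q.2.2 else 0) with hwdef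
  set F' : Finset (ℤ×ℤ×ℤ) :=
    ((Finset.Icc (-(Q0:ℤ)) (Q0:ℤ)) ×ˢ (Finset.Icc (-(Q1:ℤ)) (Q1:ℤ)) ×ˢ
      (Finset.Icc (-(Q2:ℤ)) (Q2:ℤ))).filter (fun q : ℤ×ℤ×ℤ => q ≠ (0,0,0)) with hF'def
  have hwnonneg : ∀ q : ℤ×ℤ×ℤ, 0 ≤ w q := by
    intro q
    rw [hwdef]
    have b1 : (0:ℝ) ≤ 18*β/((A0:ℝ)*((q.1.natAbs:ℕ):ℝ)) :=
      div_nonneg (by linarith) (by positivity)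
    have b4 : (0:ℝ) ≤ 18*β/(((q.2.2.natAbs:ℕ):ℝ)) :=
      div_nonneg (by linarith) (by positivity)
    have i1 := ite_nonneg (P := (fun n : ℤ => n ≠ 0) q.1 ∧
        (fun (a n : ℤ) => n ≠ 0 ∧ A1 * n.natAbs ≤ 9*(A0*a.natAbs)) q.1 q.2.1 ∧
        (fun (_ _ : ℤ) => True) q.1 q.2.2) b1
    have i2 := ite_nonneg (P := (fun n : ℤ => n ≠ 0 ∧ A0 * n.natAbs ≤ 9*Q2) q.1 ∧
        (fun (a n : ℤ) => A1 * n.natAbs ≤ A0*a.natAbs) q.1 q.2.1 ∧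
        (fun (a n : ℤ) => n ≠ 0 ∧ 1 * n.natAbs ≤ A0*a.natAbs) q.1 q.2.2) b1
    have i3 := ite_nonneg (P := (fun n : ℤ => n ≠ 0 ∧ A0 * n.natAbs ≤ Q2) q.1 ∧
        (fun (a n : ℤ) => A1 * n.natAbs ≤ A0*a.natAbs) q.1 q.2.1 ∧
        (fun (a n : ℤ) => n ≠ 0 ∧ 1 * n.natAbs ≤ 9*(A0*a.natAbs)) q.1 q.2.2) b1
    have i4 := ite_nonneg (P := (fun n : ℤ => n ≠ 0) q.2.2 ∧
        (fun (a n : ℤ) => A0 * n.natAbs ≤ a.natAbs) q.2.2 q.1 ∧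
        (fun (a n : ℤ) => n ≠ 0 ∧ A1 * n.natAbs ≤ 9*a.natAbs) q.2.2 q.2.1) b4
    linarith
  have hsub : (⋃ (q0 : ℤ) (q1 : ℤ) (q2 : ℤ) (_ : (q0, q1, q2) ≠ (0, 0, 0))
        (_ : |q0| ≤ (Q0 : ℤ)) (_ : |q1| ≤ (Q1 : ℤ)) (_ : |q2| ≤ (Q2 : ℤ)),
        {g : ℝ × ℝ × ℝ |
          g.1 ∈ Set.Ioc (1:ℝ) 4 ∧ g.2.1 ∈ Set.Ioc (1:ℝ) 4 ∧ g.2.2 ∈ Set.Ioc (1:ℝ) 4 ∧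
          |(A0 : ℝ) * g.1 * (q0 : ℝ) + (A1 : ℝ) * g.2.1 * (q1 : ℝ) + g.2.2 * (q2 : ℝ)| < β})
      ⊆ ⋃ q ∈ F', S q := by
    intro g hg
    simp only [Set.mem_iUnion] at hg
    obtain ⟨q0, q1, q2, hne, h0, h1, h2, hgmem⟩ := hg
    refine Set.mem_iUnion₂.mpr ⟨(q0, q1, q2), ?_, ?_⟩
    · rw [hF'def]
      refine Finset.mem_filter.mpr ⟨?_, hne⟩
      simp only [Finset.mem_product, Finset.mem_Icc]
      obtain ⟨h0a, h0b⟩ := abs_le.mp h0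
      obtain ⟨h1a, h1b⟩ := abs_le.mp h1
      obtain ⟨h2a, h2b⟩ := abs_le.mp h2
      exact ⟨⟨h0a, h0b⟩, ⟨h1a, h1b⟩, ⟨h2a, h2b⟩⟩
    · obtain ⟨hgm1, hgm2, hgm3, hgm4⟩ := hgmem
      rw [hSdef]
      refine ⟨hgm1, hgm2, hgm3, ?_⟩
      rw [show ((A0:ℝ)*(q0:ℝ))*g.1 + ((A1:ℝ)*(q1:ℝ))*g.2.1 + ((q2:ℝ))*g.2.2
        = (A0:ℝ)*g.1*(q0:ℝ) + (A1:ℝ)*g.2.1*(q1:ℝ) + g.2.2*(q2:ℝ) from by ring]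
      exact hgm4
  refine le_trans (measure_mono hsub) ?_
  refine le_trans (measure_biUnion_finset_le _ S) ?_
  have hptwise : ∀ q ∈ F', volume (S q) ≤ ENNReal.ofReal (w q) := by
    rintro ⟨q0, q1, q2⟩ hq
    rw [hF'def, Finset.mem_filter] at hq
    obtain ⟨hqmem, hqne0⟩ := hq
    simp only [Finset.mem_product, Finset.mem_Icc] at hqmem
    rcases Set.eq_empty_or_nonempty (S (q0, q1, q2)) with hemp | hne
    · rw [hemp, measure_empty]
      exact zero_le
    · have hne' : (Sset3 ((A0:ℝ)*(q0:ℝ)) ((A1:ℝ)*(q1:ℝ)) ((q2:ℝ)) β).Nonempty := hne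
      obtain ⟨e1, e1', e2, e2', e3, e3'⟩ :=
        empt_facts A0 A1 hA0 hA1 β hβ0 hβ1 q0 q1 q2 hne'
      have hqne : ¬(q0.natAbs = 0 ∧ q1.natAbs = 0 ∧ q2.natAbs = 0) := by
        rintro ⟨a0, a1, a2⟩
        exact hqne0 (by
          rw [Int.natAbs_eq_zero] at a0 a1 a2
          simp [a0, a1, a2])
      have hn2Q : q2.natAbs ≤ Q2 := by omega
      have hcov := coverage A0 A1 Q2 hA0 hA1 q0.natAbs q1.natAbs q2.natAbs hqne hn2Q
        e1 e1' e2 e2' e3 e3'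
      have hvol_r : q0.natAbs ≠ 0 →
          volume (S (q0, q1, q2)) ≤ ENNReal.ofReal (18*β/((A0:ℝ)*(q0.natAbs:ℝ))) := by
        intro h0
        have hrne : (A0:ℝ)*(q0:ℝ) ≠ 0 := by
          apply mul_ne_zero (by exact_mod_cast hA0.ne')
          exact_mod_cast Int.natAbs_ne_zero.mp h0
        have := vol3_r ((A0:ℝ)*(q0:ℝ)) ((A1:ℝ)*(q1:ℝ)) ((q2:ℝ)) β hβ0.le hrne
        rwa [absCast] at this
      have hvol_t : q2.natAbs ≠ 0 →
          volume (S (q0, q1, q2)) ≤ ENNReal.ofReal (18*β/((q2.natAbs:ℝ))) := by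
        intro h2
        have htne : ((q2:ℤ):ℝ) ≠ 0 := by
          exact_mod_cast Int.natAbs_ne_zero.mp h2
        have := vol3_t ((A0:ℝ)*(q0:ℝ)) ((A1:ℝ)*(q1:ℝ)) ((q2:ℝ)) β hβ0.le htne
        rwa [absCast1] at this
      -- abbreviations for the four conditions at this point
      rw [hwdef]
      simp only []
      rcases hcov with hc | hc | hc | hc
      · -- class 1
        have hcond : (fun n : ℤ => n ≠ 0) q0 ∧
            (fun (a n : ℤ) => n ≠ 0 ∧ A1 * n.natAbs ≤ 9*(A0*a.natAbs)) q0 q1 ∧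
            (fun (_ _ : ℤ) => True) q0 q2 := by
          refine ⟨Int.natAbs_ne_zero.mp hc.1, ⟨Int.natAbs_ne_zero.mp hc.2.1, hc.2.2⟩, trivial⟩
        refine le_trans (hvol_r hc.1) (ENNReal.ofReal_le_ofReal ?_)
        rw [if_pos hcond]
        have b1 : (0:ℝ) ≤ 18*β/((A0:ℝ)*((q0.natAbs:ℕ):ℝ)) :=
          div_nonneg (by linarith) (by positivity)
        have b4 : (0:ℝ) ≤ 18*β/(((q2.natAbs:ℕ):ℝ)) :=
          div_nonneg (by linarith) (by positivity)
        have i2 := ite_nonneg (P := (fun n : ℤ => n ≠ 0 ∧ A0 * n.natAbs ≤ 9*Q2) q0 ∧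
            (fun (a n : ℤ) => A1 * n.natAbs ≤ A0*a.natAbs) q0 q1 ∧
            (fun (a n : ℤ) => n ≠ 0 ∧ 1 * n.natAbs ≤ A0*a.natAbs) q0 q2) b1
        have i3 := ite_nonneg (P := (fun n : ℤ => n ≠ 0 ∧ A0 * n.natAbs ≤ Q2) q0 ∧
            (fun (a n : ℤ) => A1 * n.natAbs ≤ A0*a.natAbs) q0 q1 ∧
            (fun (a n : ℤ) => n ≠ 0 ∧ 1 * n.natAbs ≤ 9*(A0*a.natAbs)) q0 q2) b1
        have i4 := ite_nonneg (P := (fun n : ℤ => n ≠ 0) q2 ∧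
            (fun (a n : ℤ) => A0 * n.natAbs ≤ a.natAbs) q2 q0 ∧
            (fun (a n : ℤ) => n ≠ 0 ∧ A1 * n.natAbs ≤ 9*a.natAbs) q2 q1) b4
        linarith
      · -- class 2
        have hcond : (fun n : ℤ => n ≠ 0 ∧ A0 * n.natAbs ≤ 9*Q2) q0 ∧
            (fun (a n : ℤ) => A1 * n.natAbs ≤ A0*a.natAbs) q0 q1 ∧
            (fun (a n : ℤ) => n ≠ 0 ∧ 1 * n.natAbs ≤ A0*a.natAbs) q0 q2 := by
          exact ⟨⟨Int.natAbs_ne_zero.mp hc.1.1, hc.1.2⟩, hc.2.1,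
            ⟨Int.natAbs_ne_zero.mp hc.2.2.1, hc.2.2.2⟩⟩
        refine le_trans (hvol_r hc.1.1) (ENNReal.ofReal_le_ofReal ?_)
        rw [if_pos hcond]
        have b1 : (0:ℝ) ≤ 18*β/((A0:ℝ)*((q0.natAbs:ℕ):ℝ)) :=
          div_nonneg (by linarith) (by positivity)
        have b4 : (0:ℝ) ≤ 18*β/(((q2.natAbs:ℕ):ℝ)) :=
          div_nonneg (by linarith) (by positivity)
        have i1 := ite_nonneg (P := (fun n : ℤ => n ≠ 0) q0 ∧
            (fun (a n : ℤ) => n ≠ 0 ∧ A1 * n.natAbs ≤ 9*(A0*a.natAbs)) q0 q1 ∧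
            (fun (_ _ : ℤ) => True) q0 q2) b1
        have i3 := ite_nonneg (P := (fun n : ℤ => n ≠ 0 ∧ A0 * n.natAbs ≤ Q2) q0 ∧
            (fun (a n : ℤ) => A1 * n.natAbs ≤ A0*a.natAbs) q0 q1 ∧
            (fun (a n : ℤ) => n ≠ 0 ∧ 1 * n.natAbs ≤ 9*(A0*a.natAbs)) q0 q2) b1
        have i4 := ite_nonneg (P := (fun n : ℤ => n ≠ 0) q2 ∧
            (fun (a n : ℤ) => A0 * n.natAbs ≤ a.natAbs) q2 q0 ∧
            (fun (a n : ℤ) => n ≠ 0 ∧ A1 * n.natAbs ≤ 9*a.natAbs) q2 q1) b4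
        linarith
      · -- class 3
        have hcond : (fun n : ℤ => n ≠ 0 ∧ A0 * n.natAbs ≤ Q2) q0 ∧
            (fun (a n : ℤ) => A1 * n.natAbs ≤ A0*a.natAbs) q0 q1 ∧
            (fun (a n : ℤ) => n ≠ 0 ∧ 1 * n.natAbs ≤ 9*(A0*a.natAbs)) q0 q2 := by
          exact ⟨⟨Int.natAbs_ne_zero.mp hc.1.1, hc.1.2⟩, hc.2.1,
            ⟨Int.natAbs_ne_zero.mp hc.2.2.1, hc.2.2.2⟩⟩
        refine le_trans (hvol_r hc.1.1) (ENNReal.ofReal_le_ofReal ?_)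
        rw [if_pos hcond]
        have b1 : (0:ℝ) ≤ 18*β/((A0:ℝ)*((q0.natAbs:ℕ):ℝ)) :=
          div_nonneg (by linarith) (by positivity)
        have b4 : (0:ℝ) ≤ 18*β/(((q2.natAbs:ℕ):ℝ)) :=
          div_nonneg (by linarith) (by positivity)
        have i1 := ite_nonneg (P := (fun n : ℤ => n ≠ 0) q0 ∧
            (fun (a n : ℤ) => n ≠ 0 ∧ A1 * n.natAbs ≤ 9*(A0*a.natAbs)) q0 q1 ∧
            (fun (_ _ : ℤ) => True) q0 q2) b1
        have i2 := ite_nonneg (P := (fun n : ℤ => n ≠ 0 ∧ A0 * n.natAbs ≤ 9*Q2) q0 ∧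
            (fun (a n : ℤ) => A1 * n.natAbs ≤ A0*a.natAbs) q0 q1 ∧
            (fun (a n : ℤ) => n ≠ 0 ∧ 1 * n.natAbs ≤ A0*a.natAbs) q0 q2) b1
        have i4 := ite_nonneg (P := (fun n : ℤ => n ≠ 0) q2 ∧
            (fun (a n : ℤ) => A0 * n.natAbs ≤ a.natAbs) q2 q0 ∧
            (fun (a n : ℤ) => n ≠ 0 ∧ A1 * n.natAbs ≤ 9*a.natAbs) q2 q1) b4
        linarith
      · -- class 45
        have hcond : (fun n : ℤ => n ≠ 0) q2 ∧
            (fun (a n : ℤ) => A0 * n.natAbs ≤ a.natAbs) q2 q0 ∧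
            (fun (a n : ℤ) => n ≠ 0 ∧ A1 * n.natAbs ≤ 9*a.natAbs) q2 q1 := by
          exact ⟨Int.natAbs_ne_zero.mp hc.1, hc.2.1,
            ⟨Int.natAbs_ne_zero.mp hc.2.2.1, hc.2.2.2⟩⟩
        refine le_trans (hvol_t hc.1) (ENNReal.ofReal_le_ofReal ?_)
        rw [if_pos hcond]
        have b1 : (0:ℝ) ≤ 18*β/((A0:ℝ)*((q0.natAbs:ℕ):ℝ)) :=
          div_nonneg (by linarith) (by positivity)
        have i1 := ite_nonneg (P := (fun n : ℤ => n ≠ 0) q0 ∧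
            (fun (a n : ℤ) => n ≠ 0 ∧ A1 * n.natAbs ≤ 9*(A0*a.natAbs)) q0 q1 ∧
            (fun (_ _ : ℤ) => True) q0 q2) b1
        have i2 := ite_nonneg (P := (fun n : ℤ => n ≠ 0 ∧ A0 * n.natAbs ≤ 9*Q2) q0 ∧
            (fun (a n : ℤ) => A1 * n.natAbs ≤ A0*a.natAbs) q0 q1 ∧
            (fun (a n : ℤ) => n ≠ 0 ∧ 1 * n.natAbs ≤ A0*a.natAbs) q0 q2) b1
        have i3 := ite_nonneg (P := (fun n : ℤ => n ≠ 0 ∧ A0 * n.natAbs ≤ Q2) q0 ∧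
            (fun (a n : ℤ) => A1 * n.natAbs ≤ A0*a.natAbs) q0 q1 ∧
            (fun (a n : ℤ) => n ≠ 0 ∧ 1 * n.natAbs ≤ 9*(A0*a.natAbs)) q0 q2) b1
        linarith
  refine le_trans (Finset.sum_le_sum hptwise) ?_
  rw [← ENNReal.ofReal_sum_of_nonneg (fun q _ => hwnonneg q)]
  apply ENNReal.ofReal_le_ofReal
  -- real-valued estimate
  have hsum_ext : ∑ q ∈ F', w q ≤
      ∑ q ∈ ((Finset.Icc (-(Q0:ℤ)) (Q0:ℤ)) ×ˢ (Finset.Icc (-(Q1:ℤ)) (Q1:ℤ)) ×ˢ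
        (Finset.Icc (-(Q2:ℤ)) (Q2:ℤ))), w q := by
    apply Finset.sum_le_sum_of_subset_of_nonneg
    · rw [hF'def]; exact Finset.filter_subset _ _
    · intro q _ _; exact hwnonneg q
  refine le_trans hsum_ext ?_
  rw [hwdef]
  rw [show (∑ q ∈ ((Finset.Icc (-(Q0:ℤ)) (Q0:ℤ)) ×ˢ (Finset.Icc (-(Q1:ℤ)) (Q1:ℤ)) ×ˢ
        (Finset.Icc (-(Q2:ℤ)) (Q2:ℤ))), ((fun q : ℤ×ℤ×ℤ =>
    (if (fun n : ℤ => n ≠ 0) q.1 ∧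
        (fun (a n : ℤ) => n ≠ 0 ∧ A1 * n.natAbs ≤ 9*(A0*a.natAbs)) q.1 q.2.1 ∧
        (fun (_ _ : ℤ) => True) q.1 q.2.2
      then (fun n : ℤ => 18*β/((A0:ℝ)*(n.natAbs:ℝ))) q.1 else 0) +
    (if (fun n : ℤ => n ≠ 0 ∧ A0 * n.natAbs ≤ 9*Q2) q.1 ∧
        (fun (a n : ℤ) => A1 * n.natAbs ≤ A0*a.natAbs) q.1 q.2.1 ∧
        (fun (a n : ℤ) => n ≠ 0 ∧ 1 * n.natAbs ≤ A0*a.natAbs) q.1 q.2.2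
      then (fun n : ℤ => 18*β/((A0:ℝ)*(n.natAbs:ℝ))) q.1 else 0) +
    (if (fun n : ℤ => n ≠ 0 ∧ A0 * n.natAbs ≤ Q2) q.1 ∧
        (fun (a n : ℤ) => A1 * n.natAbs ≤ A0*a.natAbs) q.1 q.2.1 ∧
        (fun (a n : ℤ) => n ≠ 0 ∧ 1 * n.natAbs ≤ 9*(A0*a.natAbs)) q.1 q.2.2
      then (fun n : ℤ => 18*β/((A0:ℝ)*(n.natAbs:ℝ))) q.1 else 0) +
    (if (fun n : ℤ => n ≠ 0) q.2.2 ∧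
        (fun (a n : ℤ) => A0 * n.natAbs ≤ a.natAbs) q.2.2 q.1 ∧
        (fun (a n : ℤ) => n ≠ 0 ∧ A1 * n.natAbs ≤ 9*a.natAbs) q.2.2 q.2.1
      then (fun n : ℤ => 18*β/((n.natAbs:ℝ))) q.2.2 else 0)) q))
    = (∑ q ∈ ((Finset.Icc (-(Q0:ℤ)) (Q0:ℤ)) ×ˢ (Finset.Icc (-(Q1:ℤ)) (Q1:ℤ)) ×ˢ
        (Finset.Icc (-(Q2:ℤ)) (Q2:ℤ))),
      (if (fun n : ℤ => n ≠ 0) q.1 ∧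
          (fun (a n : ℤ) => n ≠ 0 ∧ A1 * n.natAbs ≤ 9*(A0*a.natAbs)) q.1 q.2.1 ∧
          (fun (_ _ : ℤ) => True) q.1 q.2.2
        then (fun n : ℤ => 18*β/((A0:ℝ)*(n.natAbs:ℝ))) q.1 else 0))
    + ((∑ q ∈ ((Finset.Icc (-(Q0:ℤ)) (Q0:ℤ)) ×ˢ (Finset.Icc (-(Q1:ℤ)) (Q1:ℤ)) ×ˢ
        (Finset.Icc (-(Q2:ℤ)) (Q2:ℤ))),
      (if (fun n : ℤ => n ≠ 0 ∧ A0 * n.natAbs ≤ 9*Q2) q.1 ∧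
          (fun (a n : ℤ) => A1 * n.natAbs ≤ A0*a.natAbs) q.1 q.2.1 ∧
          (fun (a n : ℤ) => n ≠ 0 ∧ 1 * n.natAbs ≤ A0*a.natAbs) q.1 q.2.2
        then (fun n : ℤ => 18*β/((A0:ℝ)*(n.natAbs:ℝ))) q.1 else 0)))
    + ((∑ q ∈ ((Finset.Icc (-(Q0:ℤ)) (Q0:ℤ)) ×ˢ (Finset.Icc (-(Q1:ℤ)) (Q1:ℤ)) ×ˢ
        (Finset.Icc (-(Q2:ℤ)) (Q2:ℤ))),
      (if (fun n : ℤ => n ≠ 0 ∧ A0 * n.natAbs ≤ Q2) q.1 ∧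
          (fun (a n : ℤ) => A1 * n.natAbs ≤ A0*a.natAbs) q.1 q.2.1 ∧
          (fun (a n : ℤ) => n ≠ 0 ∧ 1 * n.natAbs ≤ 9*(A0*a.natAbs)) q.1 q.2.2
        then (fun n : ℤ => 18*β/((A0:ℝ)*(n.natAbs:ℝ))) q.1 else 0)))
    + ((∑ q ∈ ((Finset.Icc (-(Q0:ℤ)) (Q0:ℤ)) ×ˢ (Finset.Icc (-(Q1:ℤ)) (Q1:ℤ)) ×ˢ
        (Finset.Icc (-(Q2:ℤ)) (Q2:ℤ))),
      (if (fun n : ℤ => n ≠ 0) q.2.2 ∧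
          (fun (a n : ℤ) => A0 * n.natAbs ≤ a.natAbs) q.2.2 q.1 ∧
          (fun (a n : ℤ) => n ≠ 0 ∧ A1 * n.natAbs ≤ 9*a.natAbs) q.2.2 q.2.1
        then (fun n : ℤ => 18*β/((n.natAbs:ℝ))) q.2.2 else 0)))
    from by rw [← Finset.sum_add_distrib, ← Finset.sum_add_distrib, ← Finset.sum_add_distrib]]
  have hB1 := classB1 β hβ0.le A0 A1 Q0 Q1 Q2 hA0 hA1 hQ2
  have hB2 := classB2 β hβ0.le A0 A1 Q0 Q1 Q2 hA0 hA1
  have hB3 := classB3 β hβ0.le A0 A1 Q0 Q1 Q2 hA0 hA1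
  have hB45 := classB45 β hβ0.le A0 A1 Q0 Q1 Q2 hA0 hA1
  have hA0R : (0:ℝ) < (A0:ℝ) := by exact_mod_cast hA0
  have hA1R : (0:ℝ) < (A1:ℝ) := by exact_mod_cast hA1
  have hQ0R : (1:ℝ) ≤ (Q0:ℝ) := by exact_mod_cast hQ0
  have hQ2R : (0:ℝ) < (Q2:ℝ) := by exact_mod_cast hQ2
  have hleR : (Q2:ℝ) ≤ (A0:ℝ)*(Q0:ℝ) := by exact_mod_cast hle
  set M : ℝ := max ((Q2:ℝ)/(A0:ℝ)) ((Q0:ℝ)*(Q2:ℝ)/(A1:ℝ)) with hM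
  have hM1 : (Q2:ℝ)/(A0:ℝ) ≤ M := le_max_left _ _
  have hM2 : (Q0:ℝ)*(Q2:ℝ)/(A1:ℝ) ≤ M := le_max_right _ _
  have hQQ : (Q2:ℝ)*(Q2:ℝ)/((A0:ℝ)*(A1:ℝ)) ≤ (Q0:ℝ)*(Q2:ℝ)/(A1:ℝ) := by
    rw [div_le_div_iff₀ (by positivity) (by positivity)]
    nlinarith [mul_le_mul_of_nonneg_right hleR (mul_nonneg hQ2R.le hA1R.le)]
  have hQ2A1 : (Q2:ℝ)/(A1:ℝ) ≤ (Q0:ℝ)*(Q2:ℝ)/(A1:ℝ) := by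
    gcongr
    nlinarith
  have hM0 : (0:ℝ) ≤ M := le_trans (by positivity) hM1
  have p1 : β*((Q2:ℝ)/(A0:ℝ)) ≤ β*M := mul_le_mul_of_nonneg_left hM1 hβ0.le
  have p2 : β*((Q0:ℝ)*(Q2:ℝ)/(A1:ℝ)) ≤ β*M := mul_le_mul_of_nonneg_left hM2 hβ0.le
  have p3 : β*((Q2:ℝ)*(Q2:ℝ)/((A0:ℝ)*(A1:ℝ))) ≤ β*M :=
    le_trans (mul_le_mul_of_nonneg_left hQQ hβ0.le) p2
  have p4 : β*((Q2:ℝ)/(A1:ℝ)) ≤ β*M :=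
    le_trans (mul_le_mul_of_nonneg_left hQ2A1 hβ0.le) p2
  refine le_trans (add_le_add (add_le_add (add_le_add hB1 hB2) hB3) hB45) ?_
  nlinarith [p1, p2, p3, p4, hM0, hβ0.le]
end

section
/- Let δ ∈ (0,1] and let n0, n1, n2, R̄0, R̄1, R̄2, R̄3 be nonnegative integers with n1 ≥ n0 ≥ n2 satisfying R̄0 + R̄1 + R̄2 + R̄3 ≤ n1 − 6 − log₂(6652/δ), R̄0 + R̄2 + R̄3 ≤ n0 − 6 − log₂(6652/δ), and R̄2 + R̄3 ≤ n2 − 6. Let B be the set of (g0,g1,g2) ∈ (1,4]³ for which there exist integers q0, q1, q2 with (q0,q1,q2) ≠ (0,0,0), |q0| ≤ 2^{R̄0}, |q1| ≤ 2^{R̄1}, |q2| ≤ 2^{R̄2}, and |2^{n0−R̄0}·g0·q0 + 2^{n1−R̄1}·g1·q1 + 2^{n2−R̄2}·g2·q2| ≤ 2^{R̄3+6}. Then μ(B) ≤ δ. -/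
open MeasureTheory
open MeasureTheory Set
open scoped ENNReal

lemma oneD (a c T : ℝ) (ha : 0 < a) (hT : 0 < T) (h2 : 2 * T ≤ a) :
    volume {g : ℝ | g ∈ Set.Ioc (1:ℝ) 4 ∧ ∃ q : ℤ, q ≠ 0 ∧ |a * g * q + c| ≤ T}
      ≤ ENNReal.ofReal (20 * (T / a)) := by
  set ε : ℝ := T / a with hε
  set x : ℝ := |c| / a with hx
  set L : ℝ := max 1 ((x - ε) / 4) with hL
  clear_value ε x L
  rw [hε]
  have hεpos : 0 < ε := hε ▸ div_pos hT ha
  have hεhalf : ε ≤ 1/2 := by rw [hε, div_le_iff₀ ha]; linarith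
  have hxnn : 0 ≤ x := hx ▸ div_nonneg (abs_nonneg c) ha.le
  have hL1 : (1:ℝ) ≤ L := hL ▸ le_max_left _ _
  have hLpos : 0 < L := lt_of_lt_of_le one_pos hL1
  -- window facts for any witness
  have key : ∀ (g : ℝ) (q : ℤ), g ∈ Set.Ioc (1:ℝ) 4 → q ≠ 0 → |a * g * q + c| ≤ T →
      L ≤ |(q:ℝ)| ∧ |(q:ℝ)| ≤ x + ε := by
    intro g q hg hq habs
    have hg1 : 1 < g := hg.1
    have hg4 : g ≤ 4 := hg.2
    have hgpos : 0 < g := lt_trans one_pos hg1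
    have hq1 : (1:ℝ) ≤ |(q:ℝ)| := by
      have := Int.one_le_abs hq
      calc (1:ℝ) = ((1:ℤ):ℝ) := by norm_num
        _ ≤ ((|q|:ℤ):ℝ) := by exact_mod_cast this
        _ = |(q:ℝ)| := by push_cast; ring
    have e1 : |a * g * (q:ℝ)| = a * g * |(q:ℝ)| := by
      rw [abs_mul, abs_mul, abs_of_pos ha, abs_of_pos hgpos]
    have up : a * g * |(q:ℝ)| ≤ |c| + T := by
      have h1 : |a * g * (q:ℝ)| ≤ |c| + T := by
        have := abs_add_le (a * g * (q:ℝ) + c) (-c)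
        simp only [add_neg_cancel_right, abs_neg] at this
        linarith
      linarith [e1 ▸ h1]
    have low : |c| - T ≤ a * g * |(q:ℝ)| := by
      have h1 : |c| ≤ |a * g * (q:ℝ)| + T := by
        have := abs_add_le (a * g * (q:ℝ) + c) (-(a * g * (q:ℝ)))
        simp only [abs_neg] at this
        have h2 : a * g * (q:ℝ) + c + -(a * g * (q:ℝ)) = c := by ring
        rw [h2] at this
        linarith
      linarith [e1 ▸ h1]
    have haq1 : a * |(q:ℝ)| ≤ a * g * |(q:ℝ)| := by
      nlinarith [mul_nonneg ha.le (abs_nonneg (q:ℝ))]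
    have haq4 : a * g * |(q:ℝ)| ≤ 4 * (a * |(q:ℝ)|) := by
      nlinarith [mul_nonneg ha.le (abs_nonneg (q:ℝ))]
    refine ⟨hL ▸ max_le hq1 ?_, ?_⟩
    · rw [hx, hε, ← sub_div, div_div, div_le_iff₀ (by positivity : (0:ℝ) < a*4)]
      nlinarith
    · rw [hx, hε, ← add_div, le_div_iff₀ ha]
      nlinarith
  classical
  set W : Finset ℤ := Finset.Icc ⌈L⌉ ⌊x + ε⌋ ∪ Finset.Icc (-⌊x + ε⌋) (-⌈L⌉) with hW
  have hceil1 : (1:ℤ) ≤ ⌈L⌉ := by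
    have h := Int.ceil_le_ceil (R := ℝ) hL1
    simpa using h
  have hWabs : ∀ q ∈ W, L ≤ |(q:ℝ)| ∧ q ≠ 0 := by
    intro q hq
    rw [hW, Finset.mem_union, Finset.mem_Icc, Finset.mem_Icc] at hq
    rcases hq with ⟨h1, _⟩ | ⟨_, h2⟩
    · have hq1 : (1:ℤ) ≤ q := le_trans hceil1 h1
      have hLq : L ≤ (q:ℝ) := Int.ceil_le.1 h1
      have habs : |(q:ℝ)| = (q:ℝ) := abs_of_pos (by exact_mod_cast hq1)
      exact ⟨by rw [habs]; exact hLq, by omega⟩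
    · have hq1 : q ≤ -1 := le_trans h2 (by omega)
      have hLq : L ≤ ((-q : ℤ):ℝ) := Int.ceil_le.1 (by omega)
      have habs : |(q:ℝ)| = -(q:ℝ) := abs_of_neg (by exact_mod_cast (by omega : q < 0))
      refine ⟨by rw [habs]; push_cast at hLq; linarith, by omega⟩
  have hsub : {g : ℝ | g ∈ Set.Ioc (1:ℝ) 4 ∧ ∃ q : ℤ, q ≠ 0 ∧ |a * g * q + c| ≤ T}
      ⊆ ⋃ q ∈ W, {g : ℝ | |a * g * q + c| ≤ T} := by
    rintro g ⟨hg, q, hq, habs⟩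
    have hk := key g q hg hq habs
    have hqW : q ∈ W := by
      rw [hW, Finset.mem_union, Finset.mem_Icc, Finset.mem_Icc]
      rcases lt_or_gt_of_ne hq with hneg | hpos
      · right
        have habsq : |(q:ℝ)| = -(q:ℝ) := abs_of_neg (by exact_mod_cast hneg)
        rw [habsq] at hk
        constructor
        · rw [neg_le]; apply Int.le_floor.2; push_cast; linarith [hk.2]
        · rw [le_neg]; apply Int.ceil_le.2; push_cast; linarith [hk.1]
      · left
        have habsq : |(q:ℝ)| = (q:ℝ) := abs_of_pos (by exact_mod_cast hpos)
        rw [habsq] at hk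
        exact ⟨Int.ceil_le.2 hk.1, Int.le_floor.2 hk.2⟩
    exact mem_iUnion₂.2 ⟨q, hqW, habs⟩
  have hvol : ∀ q ∈ W, volume {g : ℝ | |a * g * q + c| ≤ T}
      ≤ ENNReal.ofReal (2 * (T / (a * L))) := by
    intro q hq
    obtain ⟨hLq, hq0⟩ := hWabs q hq
    have hqabs : (0:ℝ) < |(q:ℝ)| := lt_of_lt_of_le hLpos hLq
    have hqne : (q:ℝ) ≠ 0 := by exact_mod_cast hq0
    have hball : {g : ℝ | |a * g * q + c| ≤ T}
        ⊆ Metric.closedBall (-c / (a * q)) (T / (a * L)) := by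
      intro g hg
      simp only [mem_setOf_eq] at hg
      rw [Metric.mem_closedBall, Real.dist_eq]
      have e2 : |g - -c / (a * q)| * (a * |(q:ℝ)|) = |a * g * q + c| := by
        have haq : a * |(q:ℝ)| = |a * (q:ℝ)| := by rw [abs_mul, abs_of_pos ha]
        rw [haq, ← abs_mul]
        congr 1
        field_simp
        ring
      have h3 : |g - -c / (a * q)| ≤ T / (a * |(q:ℝ)|) := by
        rw [le_div_iff₀ (by positivity : (0:ℝ) < a * |(q:ℝ)|)]
        rw [e2]; exact hg
      apply le_trans h3
      apply div_le_div_of_nonneg_left hT.le (by positivity)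
      exact mul_le_mul_of_nonneg_left hLq ha.le
    calc volume {g : ℝ | |a * g * q + c| ≤ T}
        ≤ volume (Metric.closedBall (-c / (a * q)) (T / (a * L))) := measure_mono hball
      _ = ENNReal.ofReal (2 * (T / (a * L))) := Real.volume_closedBall _ _
  -- combine
  have hcard : (W.card : ℝ) ≤ 2 * (x + ε + 1 - L) := by
    have h0 : (0:ℝ) ≤ x + ε + 1 - L := by
      rw [hL]
      rcases max_cases (1:ℝ) ((x - ε)/4) with ⟨he, _⟩ | ⟨he, _⟩ <;> rw [he] <;> linarith
    have hone : ∀ k : ℤ, ((k.toNat : ℝ)) ≤ max (k:ℝ) 0 := by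
      intro k
      rcases le_or_gt k 0 with h | h
      · rw [Int.toNat_of_nonpos h]; simpa using le_max_right  (k:ℝ) 0
      · rw [show ((k.toNat:ℕ):ℝ) = ((k.toNat:ℤ):ℝ) by push_cast; ring,
          Int.toNat_of_nonneg h.le]
        exact le_max_left _ _
    have hIcc : ∀ (l u : ℤ), ((Finset.Icc l u).card : ℝ) ≤ max ((u:ℝ) + 1 - l) 0 := by
      intro l u
      rw [Int.card_Icc]
      refine le_trans (hone _) (max_le_max ?_ le_rfl)
      push_cast; linarith
    have hfloor : ((⌊x + ε⌋ : ℝ)) ≤ x + ε := Int.floor_le _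
    have hceil : L ≤ ((⌈L⌉ : ℝ)) := Int.le_ceil _
    calc (W.card : ℝ) ≤ ((Finset.Icc ⌈L⌉ ⌊x + ε⌋).card : ℝ)
          + ((Finset.Icc (-⌊x + ε⌋) (-⌈L⌉)).card : ℝ) := by
          rw [hW]; exact_mod_cast Finset.card_union_le _ _
      _ ≤ max ((⌊x+ε⌋:ℝ) + 1 - ⌈L⌉) 0 + max (((-⌈L⌉:ℤ):ℝ) + 1 - ((-⌊x+ε⌋:ℤ):ℝ)) 0 := by
          exact add_le_add (hIcc _ _) (hIcc _ _)
      _ ≤ (x + ε + 1 - L) + (x + ε + 1 - L) := by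
          apply add_le_add <;> (apply max_le _ h0) <;> push_cast <;> linarith
      _ = 2 * (x + ε + 1 - L) := by ring
  have h6L : x + ε + 1 ≤ 6 * L := by
    rw [hL]
    rcases max_cases (1:ℝ) ((x - ε)/4) with ⟨he, hc⟩ | ⟨he, hc⟩ <;> rw [he] <;> linarith
  calc volume {g : ℝ | g ∈ Set.Ioc (1:ℝ) 4 ∧ ∃ q : ℤ, q ≠ 0 ∧ |a * g * q + c| ≤ T}
      ≤ volume (⋃ q ∈ W, {g : ℝ | |a * g * q + c| ≤ T}) := measure_mono hsub
    _ ≤ ∑ q ∈ W, volume {g : ℝ | |a * g * q + c| ≤ T} := measure_biUnion_finset_le _ _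
    _ ≤ ∑ _q ∈ W, ENNReal.ofReal (2 * (T / (a * L))) := Finset.sum_le_sum hvol
    _ = (W.card : ℝ≥0∞) * ENNReal.ofReal (2 * (T / (a * L))) := by
        rw [Finset.sum_const, nsmul_eq_mul]
    _ = ENNReal.ofReal ((W.card : ℝ) * (2 * (T / (a * L)))) := by
        rw [← ENNReal.ofReal_natCast W.card,
          ← ENNReal.ofReal_mul (by positivity : (0:ℝ) ≤ (W.card:ℝ))]
    _ ≤ ENNReal.ofReal (20 * (T / a)) := by
        apply ENNReal.ofReal_le_ofReal
        have h1 : (W.card : ℝ) * (2 * (T / (a * L))) ≤ (2 * (x + ε + 1 - L)) * (2 * (T / (a * L))) := by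
          apply mul_le_mul_of_nonneg_right hcard (by positivity)
        have h2 : (2 * (x + ε + 1 - L)) * (2 * (T / (a * L))) ≤ (2 * (5 * L)) * (2 * (T / (a * L))) := by
          apply mul_le_mul_of_nonneg_right _ (by positivity)
          linarith
        have h3 : (2 * (5 * L)) * (2 * (T / (a * L))) = 20 * (T / a) := by
          field_simp
          ring
        linarith

lemma fubFirst (A : Set (ℝ × ℝ × ℝ)) (hA : MeasurableSet A) (K : ℝ) (hK0 : 0 ≤ K)
    (hsub : ∀ p : ℝ × ℝ × ℝ, p ∈ A → p.2.1 ∈ Set.Ioc (1:ℝ) 4 ∧ p.2.2 ∈ Set.Ioc (1:ℝ) 4)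
    (hK : ∀ y z : ℝ, volume {x : ℝ | (x, y, z) ∈ A} ≤ ENNReal.ofReal K) :
    volume A ≤ ENNReal.ofReal (9 * K) := by
  rw [Measure.volume_eq_prod, Measure.prod_apply_symm hA]
  have hbound : ∀ w : ℝ × ℝ, volume ((fun x => (x, w)) ⁻¹' A)
      ≤ (Set.Ioc (1:ℝ) 4 ×ˢ Set.Ioc (1:ℝ) 4).indicator (fun _ => ENNReal.ofReal K) w := by
    intro w
    by_cases hw : w ∈ Set.Ioc (1:ℝ) 4 ×ˢ Set.Ioc (1:ℝ) 4
    · rw [indicator_of_mem hw]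
      exact hK w.1 w.2
    · rw [indicator_of_notMem hw]
      have hempty : ((fun x => (x, w)) ⁻¹' A) = (∅ : Set ℝ) := by
        ext x
        simp only [mem_preimage, mem_empty_iff_false, iff_false]
        intro hx
        exact hw (Set.mk_mem_prod (hsub _ hx).1 (hsub _ hx).2)
      rw [hempty]
      simp
  calc ∫⁻ w, volume ((fun x => (x, w)) ⁻¹' A)
      ≤ ∫⁻ w, (Set.Ioc (1:ℝ) 4 ×ˢ Set.Ioc (1:ℝ) 4).indicator (fun _ => ENNReal.ofReal K) w :=
        lintegral_mono hbound
    _ = ENNReal.ofReal K * volume (Set.Ioc (1:ℝ) 4 ×ˢ Set.Ioc (1:ℝ) 4) := by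
        rw [lintegral_indicator (measurableSet_Ioc.prod measurableSet_Ioc)]
        simp [Measure.restrict_apply]
    _ = ENNReal.ofReal (9 * K) := by
        rw [Measure.volume_eq_prod, Measure.prod_prod, Real.volume_Ioc]
        rw [← ENNReal.ofReal_mul (by norm_num : (0:ℝ) ≤ 4 - 1), ← ENNReal.ofReal_mul hK0]
        congr 1
        norm_num
        ring

lemma fubMid (A : Set (ℝ × ℝ × ℝ)) (hA : MeasurableSet A) (K : ℝ) (hK0 : 0 ≤ K)
    (hsub : ∀ p : ℝ × ℝ × ℝ, p ∈ A → p.1 ∈ Set.Ioc (1:ℝ) 4 ∧ p.2.2 ∈ Set.Ioc (1:ℝ) 4)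
    (hK : ∀ x z : ℝ, volume {y : ℝ | (x, y, z) ∈ A} ≤ ENNReal.ofReal K) :
    volume A ≤ ENNReal.ofReal (9 * K) := by
  have hIoc3 : volume (Set.Ioc (1:ℝ) 4) = ENNReal.ofReal 3 := by
    rw [Real.volume_Ioc]; norm_num
  have hinner : ∀ x : ℝ, (volume : Measure (ℝ × ℝ)) (Prod.mk x ⁻¹' A)
      ≤ (Set.Ioc (1:ℝ) 4).indicator (fun _ => ENNReal.ofReal K * ENNReal.ofReal 3) x := by
    intro x
    have hAx : MeasurableSet (Prod.mk x ⁻¹' A) := hA.preimage measurable_prodMk_left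
    have hx1 : (volume : Measure (ℝ × ℝ)) (Prod.mk x ⁻¹' A)
        = ∫⁻ z : ℝ, volume {y : ℝ | (x, y, z) ∈ A} := by
      rw [Measure.volume_eq_prod, Measure.prod_apply_symm hAx]
      rfl
    by_cases hx : x ∈ Set.Ioc (1:ℝ) 4
    · rw [indicator_of_mem hx, hx1]
      calc ∫⁻ z : ℝ, volume {y : ℝ | (x, y, z) ∈ A}
          ≤ ∫⁻ z : ℝ, (Set.Ioc (1:ℝ) 4).indicator (fun _ => ENNReal.ofReal K) z := by
            apply lintegral_mono
            intro z
            by_cases hz : z ∈ Set.Ioc (1:ℝ) 4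
            · rw [indicator_of_mem hz]; exact hK x z
            · rw [indicator_of_notMem hz]
              have : {y : ℝ | (x, y, z) ∈ A} = ∅ := by
                ext y
                simp only [mem_setOf_eq, mem_empty_iff_false, iff_false]
                intro hy
                exact hz (hsub _ hy).2
              show volume {y : ℝ | (x, y, z) ∈ A} ≤ 0
              rw [this]; simp
        _ = ENNReal.ofReal K * ENNReal.ofReal 3 := by
            rw [lintegral_indicator measurableSet_Ioc]
            simp [hIoc3]
    · rw [indicator_of_notMem hx, hx1]
      have : ∀ z : ℝ, {y : ℝ | (x, y, z) ∈ A} = ∅ := by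
        intro z
        ext y
        simp only [mem_setOf_eq, mem_empty_iff_false, iff_false]
        intro hy
        exact hx (hsub _ hy).1
      simp [this]
  rw [Measure.volume_eq_prod, Measure.prod_apply hA]
  calc ∫⁻ x : ℝ, (volume : Measure (ℝ × ℝ)) (Prod.mk x ⁻¹' A)
      ≤ ∫⁻ x : ℝ, (Set.Ioc (1:ℝ) 4).indicator (fun _ => ENNReal.ofReal K * ENNReal.ofReal 3) x :=
        lintegral_mono hinner
    _ = ENNReal.ofReal K * ENNReal.ofReal 3 * ENNReal.ofReal 3 := by
        rw [lintegral_indicator measurableSet_Ioc]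
        simp [hIoc3, mul_assoc]
    _ = ENNReal.ofReal (9 * K) := by
        rw [← ENNReal.ofReal_mul hK0, ← ENNReal.ofReal_mul (by positivity)]
        congr 1
        ring

set_option maxHeartbeats 2000000 in
/-- the nondegenerate core of Lemma 5 of the paper (Groshev-type
outage bound for the modulation constellation of the Gaussian X-channel). -/
theorem stmt_5 (δ : ℝ) (hδ : δ ∈ Set.Ioc (0:ℝ) 1)
    (n0 n1 n2 R0 R1 R2 R3 : ℕ)
    (hn10 : n0 ≤ n1) (hn02 : n2 ≤ n0)
    (hc1 : (R0 : ℝ) + R1 + R2 + R3 ≤ (n1 : ℝ) - 6 - Real.logb 2 (6652 / δ))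
    (hc2 : (R0 : ℝ) + R2 + R3 ≤ (n0 : ℝ) - 6 - Real.logb 2 (6652 / δ))
    (hc3 : (R2 : ℝ) + R3 ≤ (n2 : ℝ) - 6) :
    volume {g : ℝ × ℝ × ℝ |
        g.1 ∈ Set.Ioc (1:ℝ) 4 ∧ g.2.1 ∈ Set.Ioc (1:ℝ) 4 ∧ g.2.2 ∈ Set.Ioc (1:ℝ) 4 ∧
        ∃ q0 q1 q2 : ℤ, (q0, q1, q2) ≠ (0, 0, 0) ∧
          |q0| ≤ 2 ^ R0 ∧ |q1| ≤ 2 ^ R1 ∧ |q2| ≤ 2 ^ R2 ∧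
          |(2:ℝ) ^ ((n0 : ℤ) - (R0 : ℤ)) * g.1 * (q0 : ℝ)
            + (2:ℝ) ^ ((n1 : ℤ) - (R1 : ℤ)) * g.2.1 * (q1 : ℝ)
            + (2:ℝ) ^ ((n2 : ℤ) - (R2 : ℤ)) * g.2.2 * (q2 : ℝ)| ≤ 2 ^ (R3 + 6)}
      ≤ ENNReal.ofReal δ := by
  obtain ⟨hδpos, hδ1⟩ := hδ
  set a0 : ℝ := (2:ℝ) ^ ((n0:ℤ) - (R0:ℤ)) with ha0def
  set a1 : ℝ := (2:ℝ) ^ ((n1:ℤ) - (R1:ℤ)) with ha1def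
  set a2 : ℝ := (2:ℝ) ^ ((n2:ℤ) - (R2:ℤ)) with ha2def
  set T : ℝ := (2:ℝ) ^ (R3 + 6) with hTdef
  clear_value a0 a1 a2 T
  have ha0 : 0 < a0 := ha0def ▸ zpow_pos (by norm_num) _
  have ha1 : 0 < a1 := ha1def ▸ zpow_pos (by norm_num) _
  have ha2 : 0 < a2 := ha2def ▸ zpow_pos (by norm_num) _
  have hT : 0 < T := by rw [hTdef]; positivity
  have hδ6652 : (0:ℝ) < 6652 / δ := by positivity
  have hlog1 : (1:ℝ) ≤ Real.logb 2 (6652/δ) := by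
    rw [Real.le_logb_iff_rpow_le (by norm_num) hδ6652, Real.rpow_one, le_div_iff₀ hδpos]
    linarith
  have hR0 : (0:ℝ) ≤ (R0:ℝ) := Nat.cast_nonneg _
  have hR1 : (0:ℝ) ≤ (R1:ℝ) := Nat.cast_nonneg _
  have hR2 : (0:ℝ) ≤ (R2:ℝ) := Nat.cast_nonneg _
  -- integer exponent inequalities
  have hi1 : (R1:ℤ) + R3 + 7 ≤ (n1:ℤ) := by
    have : (R1:ℝ) + R3 + 7 ≤ (n1:ℝ) := by linarith
    exact_mod_cast this
  have hi2 : (R0:ℤ) + R3 + 7 ≤ (n0:ℤ) := by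
    have : (R0:ℝ) + R3 + 7 ≤ (n0:ℝ) := by linarith
    exact_mod_cast this
  have hi3 : (R2:ℤ) + R3 + 6 ≤ (n2:ℤ) := by
    have : (R2:ℝ) + R3 + 6 ≤ (n2:ℝ) := by linarith
    exact_mod_cast this
  have hTnat : T = (2:ℝ) ^ ((R3 + 6 : ℕ) : ℤ) := by
    rw [hTdef, zpow_natCast]
  have h2T1 : 2 * T ≤ a1 := by
    calc 2 * T = (2:ℝ) ^ ((R3 + 7 : ℕ) : ℤ) := by
          rw [zpow_natCast, hTdef, pow_succ]; ring
      _ ≤ a1 := by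
          rw [ha1def]
          apply zpow_le_zpow_right₀ one_le_two
          push_cast; omega
  have h2T0 : 2 * T ≤ a0 := by
    calc 2 * T = (2:ℝ) ^ ((R3 + 7 : ℕ) : ℤ) := by
          rw [zpow_natCast, hTdef, pow_succ]; ring
      _ ≤ a0 := by
          rw [ha0def]
          apply zpow_le_zpow_right₀ one_le_two
          push_cast; omega
  have hTa2 : T ≤ a2 := by
    rw [hTnat, ha2def]
    apply zpow_le_zpow_right₀ one_le_two
    push_cast; omega
  -- delta bounds
  have hrbound : ∀ s : ℤ, Real.logb 2 (6652/δ) ≤ (n1:ℝ) - (n1:ℝ) → True := fun _ _ => trivial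
  have hr1 : (2:ℝ) ^ ((R0:ℤ) + R1 + R2 + R3 + 6 - n1) ≤ δ / 6652 := by
    have h1 : 6652/δ ≤ (2:ℝ) ^ ((n1:ℤ) - ((R0:ℤ) + R1 + R2 + R3 + 6)) := by
      calc 6652/δ = (2:ℝ) ^ Real.logb 2 (6652/δ) :=
            (Real.rpow_logb (by norm_num) (by norm_num) hδ6652).symm
        _ ≤ (2:ℝ) ^ ((((n1:ℤ) - ((R0:ℤ) + R1 + R2 + R3 + 6) : ℤ) : ℝ)) := by
            apply Real.rpow_le_rpow_of_exponent_le one_le_two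
            push_cast; linarith
        _ = _ := Real.rpow_intCast 2 _
    calc (2:ℝ) ^ ((R0:ℤ) + R1 + R2 + R3 + 6 - n1)
        = ((2:ℝ) ^ ((n1:ℤ) - ((R0:ℤ) + R1 + R2 + R3 + 6)))⁻¹ := by
          rw [← zpow_neg]; congr 1; ring
      _ ≤ (6652/δ)⁻¹ := inv_anti₀ hδ6652 h1
      _ = δ/6652 := by rw [inv_div]
  have hr2 : (2:ℝ) ^ ((R0:ℤ) + R2 + R3 + 6 - n0) ≤ δ / 6652 := by
    have h1 : 6652/δ ≤ (2:ℝ) ^ ((n0:ℤ) - ((R0:ℤ) + R2 + R3 + 6)) := by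
      calc 6652/δ = (2:ℝ) ^ Real.logb 2 (6652/δ) :=
            (Real.rpow_logb (by norm_num) (by norm_num) hδ6652).symm
        _ ≤ (2:ℝ) ^ ((((n0:ℤ) - ((R0:ℤ) + R2 + R3 + 6) : ℤ) : ℝ)) := by
            apply Real.rpow_le_rpow_of_exponent_le one_le_two
            push_cast; linarith
        _ = _ := Real.rpow_intCast 2 _
    calc (2:ℝ) ^ ((R0:ℤ) + R2 + R3 + 6 - n0)
        = ((2:ℝ) ^ ((n0:ℤ) - ((R0:ℤ) + R2 + R3 + 6)))⁻¹ := by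
          rw [← zpow_neg]; congr 1; ring
      _ ≤ (6652/δ)⁻¹ := inv_anti₀ hδ6652 h1
      _ = δ/6652 := by rw [inv_div]
  have hTa1 : T / a1 = (2:ℝ) ^ ((R1:ℤ) + R3 + 6 - n1) := by
    rw [hTnat, ha1def, ← zpow_sub₀ (by norm_num : (2:ℝ) ≠ 0)]
    congr 1; push_cast; ring
  have hTa0 : T / a0 = (2:ℝ) ^ ((R0:ℤ) + R3 + 6 - n0) := by
    rw [hTnat, ha0def, ← zpow_sub₀ (by norm_num : (2:ℝ) ≠ 0)]
    congr 1; push_cast; ring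
  set F1 : Finset (ℤ × ℤ) := Finset.Icc (-(2^R0 : ℤ)) (2^R0) ×ˢ Finset.Icc (-(2^R2 : ℤ)) (2^R2)
    with hF1def
  set F2 : Finset ℤ := Finset.Icc (-(2^R2 : ℤ)) (2^R2) with hF2def
  clear_value F1 F2
  -- cardinalities
  have hcard0 : ((Finset.Icc (-(2^R0:ℤ)) (2^R0)).card : ℝ) = 2*2^R0 + 1 := by
    rw [Int.card_Icc, show ((2:ℤ)^R0 + 1 - -(2:ℤ)^R0) = ((2*2^R0 + 1 : ℕ) : ℤ) by push_cast; ring,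
      Int.toNat_natCast]
    push_cast; ring
  have hcard2 : ((Finset.Icc (-(2^R2:ℤ)) (2^R2)).card : ℝ) = 2*2^R2 + 1 := by
    rw [Int.card_Icc, show ((2:ℤ)^R2 + 1 - -(2:ℤ)^R2) = ((2*2^R2 + 1 : ℕ) : ℤ) by push_cast; ring,
      Int.toNat_natCast]
    push_cast; ring
  have hcardF1 : (F1.card : ℝ) = (2*2^R0 + 1) * (2*2^R2 + 1) := by
    rw [hF1def, hF2def, Finset.card_product, Nat.cast_mul, hcard0, hcard2]
  have hcardF2 : (F2.card : ℝ) = 2*2^R2 + 1 := by rw [hF2def, hcard2]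
  -- final real inequality
  have hP0 : (1:ℝ) ≤ 2^R0 := one_le_pow₀ (by norm_num)
  have hP2 : (1:ℝ) ≤ 2^R2 := one_le_pow₀ (by norm_num)
  have hz1pos : (0:ℝ) < (2:ℝ)^((R1:ℤ)+R3+6-n1) := zpow_pos (by norm_num) _
  have hz2pos : (0:ℝ) < (2:ℝ)^((R0:ℤ)+R3+6-n0) := zpow_pos (by norm_num) _
  have hprod1 : ((2:ℝ)^R0 * (2:ℝ)^R2) * (2:ℝ)^((R1:ℤ)+R3+6-n1)
      = (2:ℝ)^((R0:ℤ)+R1+R2+R3+6-n1) := by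
    rw [← zpow_natCast (2:ℝ) R0, ← zpow_natCast (2:ℝ) R2, ← zpow_add₀ (two_ne_zero),
      ← zpow_add₀ (two_ne_zero)]
    congr 1; push_cast; ring
  have hprod2 : (2:ℝ)^R2 * (2:ℝ)^((R0:ℤ)+R3+6-n0) = (2:ℝ)^((R0:ℤ)+R2+R3+6-n0) := by
    rw [← zpow_natCast (2:ℝ) R2, ← zpow_add₀ (two_ne_zero)]
    congr 1; push_cast; ring
  have ht1 : (F1.card:ℝ) * (9*(20*(T/a1))) ≤ 1620 * (δ/6652) := by
    rw [hcardF1, hTa1]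
    have hle : ((2*(2:ℝ)^R0+1)*(2*2^R2+1)) ≤ 9 * ((2:ℝ)^R0*2^R2) := by
      have h := mul_nonneg (sub_nonneg.2 hP0) (sub_nonneg.2 hP2)
      linarith only [h, hP0, hP2, mul_nonneg (sub_nonneg.2 hP0) (sub_nonneg.2 hP2)]
    calc (2*(2:ℝ)^R0+1)*(2*2^R2+1) * (9*(20*(2:ℝ)^((R1:ℤ)+R3+6-n1)))
        ≤ 9 * ((2:ℝ)^R0*2^R2) * (9*(20*(2:ℝ)^((R1:ℤ)+R3+6-n1))) := by
          apply mul_le_mul_of_nonneg_right hle (by positivity)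
      _ = 1620 * (((2:ℝ)^R0 * (2:ℝ)^R2) * (2:ℝ)^((R1:ℤ)+R3+6-n1)) := by ring
      _ = 1620 * (2:ℝ)^((R0:ℤ)+R1+R2+R3+6-n1) := by rw [hprod1]
      _ ≤ 1620 * (δ/6652) := by
          apply mul_le_mul_of_nonneg_left hr1 (by norm_num)
  have ht2 : (F2.card:ℝ) * (9*(20*(T/a0))) ≤ 540 * (δ/6652) := by
    rw [hcardF2, hTa0]
    have hle : (2*(2:ℝ)^R2+1) ≤ 3 * (2:ℝ)^R2 := by linarith only [hP2]
    calc (2*(2:ℝ)^R2+1) * (9*(20*(2:ℝ)^((R0:ℤ)+R3+6-n0)))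
        ≤ 3 * (2:ℝ)^R2 * (9*(20*(2:ℝ)^((R0:ℤ)+R3+6-n0))) := by
          apply mul_le_mul_of_nonneg_right hle (by positivity)
      _ = 540 * ((2:ℝ)^R2 * (2:ℝ)^((R0:ℤ)+R3+6-n0)) := by ring
      _ = 540 * (2:ℝ)^((R0:ℤ)+R2+R3+6-n0) := by rw [hprod2]
      _ ≤ 540 * (δ/6652) := by
          apply mul_le_mul_of_nonneg_left hr2 (by norm_num)
  -- the union sets
  set A1 : ℤ × ℤ → Set (ℝ × ℝ × ℝ) := fun p => ⋃ (q1 : ℤ) (_ : q1 ≠ 0),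
    {g : ℝ × ℝ × ℝ | (g.1 ∈ Set.Ioc (1:ℝ) 4 ∧ g.2.1 ∈ Set.Ioc (1:ℝ) 4 ∧ g.2.2 ∈ Set.Ioc (1:ℝ) 4) ∧
      |a0 * g.1 * (p.1:ℝ) + a1 * g.2.1 * (q1:ℝ) + a2 * g.2.2 * (p.2:ℝ)| ≤ T} with hA1def
  set A2 : ℤ → Set (ℝ × ℝ × ℝ) := fun q2 => ⋃ (q0 : ℤ) (_ : q0 ≠ 0),
    {g : ℝ × ℝ × ℝ | (g.1 ∈ Set.Ioc (1:ℝ) 4 ∧ g.2.1 ∈ Set.Ioc (1:ℝ) 4 ∧ g.2.2 ∈ Set.Ioc (1:ℝ) 4) ∧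
      |a0 * g.1 * (q0:ℝ) + a2 * g.2.2 * (q2:ℝ)| ≤ T} with hA2def
  clear_value A1 A2
  have hmeas : ∀ (f : ℝ × ℝ × ℝ → ℝ), Continuous f →
      MeasurableSet {g : ℝ × ℝ × ℝ | (g.1 ∈ Set.Ioc (1:ℝ) 4 ∧ g.2.1 ∈ Set.Ioc (1:ℝ) 4 ∧
        g.2.2 ∈ Set.Ioc (1:ℝ) 4) ∧ |f g| ≤ T} := by
    intro f hf
    have heq : {g : ℝ × ℝ × ℝ | (g.1 ∈ Set.Ioc (1:ℝ) 4 ∧ g.2.1 ∈ Set.Ioc (1:ℝ) 4 ∧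
        g.2.2 ∈ Set.Ioc (1:ℝ) 4) ∧ |f g| ≤ T}
        = (Set.Ioc (1:ℝ) 4 ×ˢ Set.Ioc (1:ℝ) 4 ×ˢ Set.Ioc (1:ℝ) 4) ∩ {g | |f g| ≤ T} := by
      ext g
      simp only [Set.mem_inter_iff, Set.mem_prod, Set.mem_setOf_eq]
    rw [heq]
    exact (measurableSet_Ioc.prod (measurableSet_Ioc.prod measurableSet_Ioc)).inter
      (measurableSet_le hf.abs.measurable measurable_const)
  have hA1meas : ∀ p, MeasurableSet (A1 p) := by
    intro p
    rw [hA1def]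
    apply MeasurableSet.iUnion; intro q1
    apply MeasurableSet.iUnion; intro _
    apply hmeas
    fun_prop
  have hA2meas : ∀ q2, MeasurableSet (A2 q2) := by
    intro q2
    rw [hA2def]
    apply MeasurableSet.iUnion; intro q0
    apply MeasurableSet.iUnion; intro _
    apply hmeas
    fun_prop
  -- main inclusion
  have hincl : {g : ℝ × ℝ × ℝ |
        g.1 ∈ Set.Ioc (1:ℝ) 4 ∧ g.2.1 ∈ Set.Ioc (1:ℝ) 4 ∧ g.2.2 ∈ Set.Ioc (1:ℝ) 4 ∧
        ∃ q0 q1 q2 : ℤ, (q0, q1, q2) ≠ (0, 0, 0) ∧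
          |q0| ≤ 2 ^ R0 ∧ |q1| ≤ 2 ^ R1 ∧ |q2| ≤ 2 ^ R2 ∧
          |a0 * g.1 * (q0 : ℝ) + a1 * g.2.1 * (q1 : ℝ) + a2 * g.2.2 * (q2 : ℝ)| ≤ T}
      ⊆ (⋃ p ∈ F1, A1 p) ∪ (⋃ q2 ∈ F2, A2 q2) := by
    rintro g ⟨hg0, hg1, hg2, q0, q1, q2, hne, hb0, hb1, hb2, habs⟩
    by_cases hq1 : q1 = 0
    · by_cases hq0 : q0 = 0
      · exfalso
        have hq2 : q2 ≠ 0 := by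
          intro h; exact hne (by rw [hq0, hq1, h])
        rw [hq0, hq1] at habs
        simp only [Int.cast_zero, mul_zero, zero_add] at habs
        have h1 : (1:ℝ) ≤ |(q2:ℝ)| := by
          have := Int.one_le_abs hq2
          calc (1:ℝ) = ((1:ℤ):ℝ) := by norm_num
            _ ≤ ((|q2|:ℤ):ℝ) := by exact_mod_cast this
            _ = |(q2:ℝ)| := by push_cast; ring
        have e : |a2 * g.2.2 * (q2:ℝ)| = a2 * g.2.2 * |(q2:ℝ)| := by
          rw [abs_mul, abs_mul, abs_of_pos ha2, abs_of_pos (lt_trans one_pos hg2.1)]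
        rw [e] at habs
        have c1 : a2 * g.2.2 ≤ a2 * g.2.2 * |(q2:ℝ)| :=
          le_mul_of_one_le_right (le_of_lt (mul_pos ha2 (lt_trans one_pos hg2.1))) h1
        have c2 : a2 < a2 * g.2.2 := lt_mul_of_one_lt_right ha2 hg2.1
        linarith only [habs, hTa2, c1, c2]
      · right
        have hq2F : q2 ∈ F2 := by
          rw [hF2def, Finset.mem_Icc]
          exact ⟨(abs_le.1 hb2).1, (abs_le.1 hb2).2⟩
        apply Set.mem_biUnion hq2F
        rw [hA2def]
        apply Set.mem_iUnion.2
        refine ⟨q0, Set.mem_iUnion.2 ⟨hq0, ⟨⟨hg0, hg1, hg2⟩, ?_⟩⟩⟩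
        rw [hq1] at habs
        simp only [Int.cast_zero, mul_zero, add_zero, zero_add] at habs
        convert habs using 2 <;> ring
    · left
      have hpF : (q0, q2) ∈ F1 := by
        rw [hF1def, hF2def, Finset.mem_product, Finset.mem_Icc, Finset.mem_Icc]
        exact ⟨⟨(abs_le.1 hb0).1, (abs_le.1 hb0).2⟩, (abs_le.1 hb2).1, (abs_le.1 hb2).2⟩
      apply Set.mem_biUnion hpF
      rw [hA1def]
      apply Set.mem_iUnion.2
      exact ⟨q1, Set.mem_iUnion.2 ⟨hq1, ⟨⟨hg0, hg1, hg2⟩, habs⟩⟩⟩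
  -- volume bounds for the pieces
  have hvolA1 : ∀ p ∈ F1, volume (A1 p) ≤ ENNReal.ofReal (9 * (20 * (T/a1))) := by
    intro p _
    apply fubMid _ (hA1meas p) _ (by positivity)
    · intro g hg
      rw [hA1def] at hg
      simp only [Set.mem_iUnion] at hg
      obtain ⟨q1, _, hbox, _⟩ := hg
      exact ⟨hbox.1, hbox.2.2⟩
    · intro x z
      have hsub2 : {y : ℝ | (x, y, z) ∈ A1 p}
          ⊆ {g : ℝ | g ∈ Set.Ioc (1:ℝ) 4 ∧ ∃ q : ℤ, q ≠ 0 ∧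
              |a1 * g * q + (a0 * x * (p.1:ℝ) + a2 * z * (p.2:ℝ))| ≤ T} := by
        intro y hy
        simp only [Set.mem_setOf_eq, hA1def, Set.mem_iUnion] at hy
        obtain ⟨q1, hq1, hbox, habs⟩ := hy
        refine ⟨hbox.2.1, q1, hq1, ?_⟩
        rw [show a1 * y * (q1:ℝ) + (a0 * x * (p.1:ℝ) + a2 * z * (p.2:ℝ))
          = a0 * x * (p.1:ℝ) + a1 * y * (q1:ℝ) + a2 * z * (p.2:ℝ) by ring]
        exact habs
      exact le_trans (measure_mono hsub2) (oneD a1 _ T ha1 hT h2T1)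
  have hvolA2 : ∀ q2 ∈ F2, volume (A2 q2) ≤ ENNReal.ofReal (9 * (20 * (T/a0))) := by
    intro q2 _
    apply fubFirst _ (hA2meas q2) _ (by positivity)
    · intro g hg
      rw [hA2def] at hg
      simp only [Set.mem_iUnion] at hg
      obtain ⟨q0, _, hbox, _⟩ := hg
      exact ⟨hbox.2.1, hbox.2.2⟩
    · intro y z
      have hsub2 : {x : ℝ | (x, y, z) ∈ A2 q2}
          ⊆ {g : ℝ | g ∈ Set.Ioc (1:ℝ) 4 ∧ ∃ q : ℤ, q ≠ 0 ∧
              |a0 * g * q + (a2 * z * (q2:ℝ))| ≤ T} := by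
        intro x hx
        simp only [Set.mem_setOf_eq, hA2def, Set.mem_iUnion] at hx
        obtain ⟨q0, hq0, hbox, habs⟩ := hx
        exact ⟨hbox.1, q0, hq0, habs⟩
      exact le_trans (measure_mono hsub2) (oneD a0 _ T ha0 hT h2T0)
  -- put everything together
  calc volume {g : ℝ × ℝ × ℝ |
        g.1 ∈ Set.Ioc (1:ℝ) 4 ∧ g.2.1 ∈ Set.Ioc (1:ℝ) 4 ∧ g.2.2 ∈ Set.Ioc (1:ℝ) 4 ∧
        ∃ q0 q1 q2 : ℤ, (q0, q1, q2) ≠ (0, 0, 0) ∧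
          |q0| ≤ 2 ^ R0 ∧ |q1| ≤ 2 ^ R1 ∧ |q2| ≤ 2 ^ R2 ∧
          |a0 * g.1 * (q0 : ℝ) + a1 * g.2.1 * (q1 : ℝ) + a2 * g.2.2 * (q2 : ℝ)| ≤ T}
      ≤ volume ((⋃ p ∈ F1, A1 p) ∪ (⋃ q2 ∈ F2, A2 q2)) := measure_mono hincl
    _ ≤ volume (⋃ p ∈ F1, A1 p) + volume (⋃ q2 ∈ F2, A2 q2) := measure_union_le _ _
    _ ≤ (∑ p ∈ F1, volume (A1 p)) + ∑ q2 ∈ F2, volume (A2 q2) := by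
        exact add_le_add (measure_biUnion_finset_le _ _) (measure_biUnion_finset_le _ _)
    _ ≤ F1.card • ENNReal.ofReal (9*(20*(T/a1))) + F2.card • ENNReal.ofReal (9*(20*(T/a0))) := by
        exact add_le_add (Finset.sum_le_card_nsmul _ _ _ hvolA1) (Finset.sum_le_card_nsmul _ _ _ hvolA2)
    _ = ENNReal.ofReal ((F1.card:ℝ) * (9*(20*(T/a1))))
        + ENNReal.ofReal ((F2.card:ℝ) * (9*(20*(T/a0)))) := by
        rw [nsmul_eq_mul, nsmul_eq_mul, ← ENNReal.ofReal_natCast F1.card,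
          ← ENNReal.ofReal_natCast F2.card,
          ← ENNReal.ofReal_mul (by positivity : (0:ℝ) ≤ (F1.card:ℝ)),
          ← ENNReal.ofReal_mul (by positivity : (0:ℝ) ≤ (F2.card:ℝ))]
    _ ≤ ENNReal.ofReal δ := by
        rw [← ENNReal.ofReal_add (by positivity) (by positivity)]
        apply ENNReal.ofReal_le_ofReal
        linarith only [ht1, ht2, hδpos]
end

section
/- Let δ > 0 and let B̃ ⊆ (1,4]³ be a Lebesgue-measurable set of triples (g0,g1,g2) with three-dimensional Lebesgue measure μ₃(B̃) ≤ δ. Define B = {(h11,h12,h21,h22) ∈ (1,2]⁴ : (h11·h12, h11·h22, h12·h21) ∈ B̃}. Then the four-dimensional Lebesgue measure of B satisfies μ₄(B) ≤ δ. -/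
open MeasureTheory

section Stmt6Aux
open ContinuousLinearMap

noncomputable def elin : (Fin 4 → ℝ) ≃ₗ[ℝ] ℝ × ℝ × ℝ × ℝ where
  toFun v := (v 0, v 1, v 2, v 3)
  invFun p := ![p.1, p.2.1, p.2.2.1, p.2.2.2]
  map_add' v w := rfl
  map_smul' c v := rfl
  left_inv v := by funext i; fin_cases i <;> rfl
  right_inv p := rfl

noncomputable def bE : Module.Basis (Fin 4) ℝ (ℝ × ℝ × ℝ × ℝ) := Module.Basis.ofEquivFun elin.symm

noncomputable def P1 : (ℝ × ℝ × ℝ × ℝ) →L[ℝ] ℝ := fst ℝ ℝ (ℝ×ℝ×ℝ)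
noncomputable def P2 : (ℝ × ℝ × ℝ × ℝ) →L[ℝ] ℝ := (fst ℝ ℝ (ℝ×ℝ)).comp (snd ℝ ℝ (ℝ×ℝ×ℝ))
noncomputable def P3 : (ℝ × ℝ × ℝ × ℝ) →L[ℝ] ℝ :=
  ((fst ℝ ℝ ℝ).comp (snd ℝ ℝ (ℝ×ℝ))).comp (snd ℝ ℝ (ℝ×ℝ×ℝ))
noncomputable def P4 : (ℝ × ℝ × ℝ × ℝ) →L[ℝ] ℝ :=
  ((snd ℝ ℝ ℝ).comp (snd ℝ ℝ (ℝ×ℝ))).comp (snd ℝ ℝ (ℝ×ℝ×ℝ))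

noncomputable def fder (p : ℝ × ℝ × ℝ × ℝ) : (ℝ × ℝ × ℝ × ℝ) →L[ℝ] (ℝ × ℝ × ℝ × ℝ) :=
  P4.prod ((p.1 • P2 + p.2.1 • P1).prod
    ((p.1 • P4 + p.2.2.2 • P1).prod (p.2.1 • P3 + p.2.2.1 • P2)))

theorem elin_apply' (v : Fin 4 → ℝ) : elin v = (v 0, v 1, v 2, v 3) := rfl
theorem elin_symm_apply' (p : ℝ × ℝ × ℝ × ℝ) : elin.symm p = ![p.1, p.2.1, p.2.2.1, p.2.2.2] := rfl

theorem fder_det (p : ℝ × ℝ × ℝ × ℝ) : (fder p).det = p.1 * p.2.1 * p.2.2.2 := by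
  rw [ContinuousLinearMap.det, ← LinearMap.det_toMatrix bE]
  have hm : (LinearMap.toMatrix bE bE ((fder p) : (ℝ×ℝ×ℝ×ℝ) →ₗ[ℝ] (ℝ×ℝ×ℝ×ℝ))) =
      Matrix.of ![![0,0,0,1], ![p.2.1,p.1,0,0], ![p.2.2.2,0,0,p.1], ![0,p.2.2.1,p.2.1,0]] := by
    ext i j
    rw [LinearMap.toMatrix_apply]
    fin_cases i <;> fin_cases j <;>
      simp [bE, fder, P1, P2, P3, P4, elin_apply', elin_symm_apply', Module.Basis.coe_ofEquivFun,
        Module.Basis.ofEquivFun_repr_apply]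
  rw [hm]
  simp [Matrix.det_succ_row_zero, Fin.sum_univ_succ, Fin.castSucc, Fin.castAdd, Fin.castLE, Fin.succAbove]
  ring

/-- the map transferring channel gains to products -/
noncomputable def fmap (p : ℝ × ℝ × ℝ × ℝ) : ℝ × ℝ × ℝ × ℝ :=
  (p.2.2.2, p.1 * p.2.1, p.1 * p.2.2.2, p.2.1 * p.2.2.1)

theorem fmap_hasFDerivAt (p : ℝ × ℝ × ℝ × ℝ) : HasFDerivAt fmap (fder p) p := by
  have h1 : HasFDerivAt (fun q : ℝ×ℝ×ℝ×ℝ => q.1) P1 p := hasFDerivAt_fst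
  have h2 : HasFDerivAt (fun q : ℝ×ℝ×ℝ×ℝ => q.2.1)
      ((fst ℝ ℝ (ℝ×ℝ)).comp (snd ℝ ℝ (ℝ×ℝ×ℝ))) p := hasFDerivAt_snd.fst
  have h3 : HasFDerivAt (fun q : ℝ×ℝ×ℝ×ℝ => q.2.2.1)
      ((fst ℝ ℝ ℝ).comp ((snd ℝ ℝ (ℝ×ℝ)).comp (snd ℝ ℝ (ℝ×ℝ×ℝ)))) p :=
    hasFDerivAt_snd.snd.fst
  have h4 : HasFDerivAt (fun q : ℝ×ℝ×ℝ×ℝ => q.2.2.2)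
      ((snd ℝ ℝ ℝ).comp ((snd ℝ ℝ (ℝ×ℝ)).comp (snd ℝ ℝ (ℝ×ℝ×ℝ)))) p :=
    hasFDerivAt_snd.snd.snd
  have hD := h4.prodMk ((h1.mul h2).prodMk ((h1.mul h4).prodMk (h2.mul h3)))
  exact hD

end Stmt6Aux

/-- Lemma 7 of the paper, transferring a measure bound on products
of channel gains to a measure bound on the channel gains themselves. -/
theorem stmt_6 (δ : ℝ) (hδ : 0 < δ)
    (Btilde : Set (ℝ × ℝ × ℝ))
    (hBsub : Btilde ⊆ Set.Ioc (1:ℝ) 4 ×ˢ (Set.Ioc (1:ℝ) 4 ×ˢ Set.Ioc (1:ℝ) 4))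
    (hBmeas : MeasurableSet Btilde)
    (hBvol : volume Btilde ≤ ENNReal.ofReal δ) :
    volume {h : ℝ × ℝ × ℝ × ℝ |
        h.1 ∈ Set.Ioc (1:ℝ) 2 ∧ h.2.1 ∈ Set.Ioc (1:ℝ) 2 ∧
        h.2.2.1 ∈ Set.Ioc (1:ℝ) 2 ∧ h.2.2.2 ∈ Set.Ioc (1:ℝ) 2 ∧
        (h.1 * h.2.1, h.1 * h.2.2.2, h.2.1 * h.2.2.1) ∈ Btilde}
      ≤ ENNReal.ofReal δ := by
  set B : Set (ℝ × ℝ × ℝ × ℝ) := {h : ℝ × ℝ × ℝ × ℝ |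
        h.1 ∈ Set.Ioc (1:ℝ) 2 ∧ h.2.1 ∈ Set.Ioc (1:ℝ) 2 ∧
        h.2.2.1 ∈ Set.Ioc (1:ℝ) 2 ∧ h.2.2.2 ∈ Set.Ioc (1:ℝ) 2 ∧
        (h.1 * h.2.1, h.1 * h.2.2.2, h.2.1 * h.2.2.1) ∈ Btilde} with hB
  have hmeasB : MeasurableSet B := by
    have h1 : Measurable fun h : ℝ×ℝ×ℝ×ℝ =>
        (h.1 * h.2.1, h.1 * h.2.2.2, h.2.1 * h.2.2.1) := by fun_prop
    have : B = ((fun h : ℝ×ℝ×ℝ×ℝ => h.1) ⁻¹' Set.Ioc 1 2) ∩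
        ((fun h : ℝ×ℝ×ℝ×ℝ => h.2.1) ⁻¹' Set.Ioc 1 2) ∩
        ((fun h : ℝ×ℝ×ℝ×ℝ => h.2.2.1) ⁻¹' Set.Ioc 1 2) ∩
        ((fun h : ℝ×ℝ×ℝ×ℝ => h.2.2.2) ⁻¹' Set.Ioc 1 2) ∩
        ((fun h : ℝ×ℝ×ℝ×ℝ => (h.1 * h.2.1, h.1 * h.2.2.2, h.2.1 * h.2.2.1)) ⁻¹' Btilde) := by
      ext x; simp [hB]; tauto
    rw [this]
    exact ((((measurable_fst measurableSet_Ioc).inter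
      (measurable_snd.fst measurableSet_Ioc)).inter
      (measurable_snd.snd.fst measurableSet_Ioc)).inter
      (measurable_snd.snd.snd measurableSet_Ioc)).inter (h1 hBmeas)
  -- derivative within B
  have hf' : ∀ p ∈ B, HasFDerivWithinAt fmap (fder p) B p := fun p _ =>
    (fmap_hasFDerivAt p).hasFDerivWithinAt
  -- injectivity
  have hinj : Set.InjOn fmap B := by
    intro p hp q hq hfe
    obtain ⟨hp1, hp2, hp3, hp4, -⟩ := hp
    obtain ⟨hq1, hq2, hq3, hq4, -⟩ := hq
    have e1 : p.2.2.2 = q.2.2.2 := congrArg Prod.fst hfe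
    have e2 : p.1 * p.2.1 = q.1 * q.2.1 := congrArg (fun x => x.2.1) hfe
    have e3 : p.1 * p.2.2.2 = q.1 * q.2.2.2 := congrArg (fun x => x.2.2.1) hfe
    have e4 : p.2.1 * p.2.2.1 = q.2.1 * q.2.2.1 := congrArg (fun x => x.2.2.2) hfe
    have hq4pos : (0:ℝ) < q.2.2.2 := lt_trans one_pos hq4.1
    have f1 : p.1 = q.1 := by
      rw [e1] at e3
      exact mul_right_cancel₀ (ne_of_gt hq4pos) e3
    have f2 : p.2.1 = q.2.1 := by
      rw [f1] at e2
      exact mul_left_cancel₀ (ne_of_gt (lt_trans one_pos hq1.1)) e2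
    have f3 : p.2.2.1 = q.2.2.1 := by
      rw [f2] at e4
      exact mul_left_cancel₀ (ne_of_gt (lt_trans one_pos hq2.1)) e4
    exact Prod.ext f1 (Prod.ext f2 (Prod.ext f3 e1))
  -- step 1 : volume B ≤ ∫⁻ det
  have step1 : volume B ≤ ∫⁻ x in B, ENNReal.ofReal |(fder x).det| := by
    calc volume B = ∫⁻ _ in B, 1 := (setLIntegral_one B).symm
      _ ≤ ∫⁻ x in B, ENNReal.ofReal |(fder x).det| := by
          apply setLIntegral_mono' hmeasB
          intro x hx
          rw [fder_det]
          rw [ENNReal.one_le_ofReal]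
          obtain ⟨hx1, hx2, -, hx4, -⟩ := hx
          have h1 : (1:ℝ) ≤ x.1 := le_of_lt hx1.1
          have h2 : (1:ℝ) ≤ x.2.1 := le_of_lt hx2.1
          have h4 : (1:ℝ) ≤ x.2.2.2 := le_of_lt hx4.1
          have hab : (1:ℝ) ≤ x.1 * x.2.1 := by nlinarith
          calc (1:ℝ) ≤ x.1 * x.2.1 * x.2.2.2 := by nlinarith
            _ ≤ |x.1 * x.2.1 * x.2.2.2| := le_abs_self _
  haveI i2 : (volume : Measure (ℝ×ℝ)).IsAddHaarMeasure := by
    rw [Measure.volume_eq_prod]; infer_instance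
  haveI i3 : (volume : Measure (ℝ×ℝ×ℝ)).IsAddHaarMeasure := by
    rw [Measure.volume_eq_prod]; infer_instance
  haveI i4 : (volume : Measure (ℝ×ℝ×ℝ×ℝ)).IsAddHaarMeasure := by
    rw [Measure.volume_eq_prod]; infer_instance
  -- step 2 : ∫⁻ det ≤ volume (fmap '' B)
  have step2 : ∫⁻ x in B, ENNReal.ofReal |(fder x).det| ≤ volume (fmap '' B) :=
    lintegral_abs_det_fderiv_le_addHaar_image volume hmeasB hf' hinj
  -- step 3 : image is contained in a product set
  have step3 : fmap '' B ⊆ Set.Ioc (1:ℝ) 2 ×ˢ Btilde := by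
    rintro - ⟨p, hp, rfl⟩
    obtain ⟨-, -, -, hp4, hpB⟩ := hp
    exact ⟨hp4, hpB⟩
  have step4 : volume (Set.Ioc (1:ℝ) 2 ×ˢ Btilde) ≤ ENNReal.ofReal δ := by
    rw [Measure.volume_eq_prod, Measure.prod_prod, Real.volume_Ioc]
    norm_num
    exact hBvol
  calc volume B ≤ ∫⁻ x in B, ENNReal.ofReal |(fder x).det| := step1
    _ ≤ volume (fmap '' B) := step2
    _ ≤ volume (Set.Ioc (1:ℝ) 2 ×ˢ Btilde) := measure_mono step3
    _ ≤ ENNReal.ofReal δ := step4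
end

section
/- Let n1 and R̄3 be nonnegative integers with R̄3 ≤ n1. Let ū0, ū1, ū2 ∈ 𝔽₂^{n1}, not all zero, be such that n(ūk) ≤ n1 − R̄3 for every k ∈ {0,1,2} with ūk ≠ 0. Let B″ = {(g0,g1,g2) ∈ (1,2]³ : the components with index i ≤ n1 − R̄3 of Ḡ(g0)·ū0 + Ḡ(g1)·ū1 + Ḡ(g2)·ū2 are all zero}. Then μ(B″) ≤ 2^{R̄3 − n1 + m}, where m = min{n(ū0), n(ū1), n(ū2)}; moreover, if exactly one index k ∈ {0,1,2} attains this minimum, then μ(B″) = 0. -/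
open MeasureTheory Matrix

/-- The `j`-th binary digit of a real number `g`, viewed in `𝔽₂`:
`[g]_j = ⌊2^j g⌋ − 2⌊2^{j−1} g⌋`. -/
noncomputable def binDigit (g : ℝ) (j : ℕ) : ZMod 2 :=
  ((⌊(2:ℝ) ^ (j : ℤ) * g⌋ - 2 * ⌊(2:ℝ) ^ ((j : ℤ) - 1) * g⌋ : ℤ) : ZMod 2)

/-- The `n × n` lower-triangular Toeplitz matrix over `𝔽₂` whose `(i,j)` entry
equals `[g]_{i−j}` for `j ≤ i` and `0` for `i < j`. -/
noncomputable def Gmat (n : ℕ) (g : ℝ) : Matrix (Fin n) (Fin n) (ZMod 2) :=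
  fun i j => if (j : ℕ) ≤ (i : ℕ) then binDigit g ((i : ℕ) - (j : ℕ)) else 0

/-- `n(ū)`: the least (1-based) index `i` with `ū_i ≠ 0`, with `n(0) = +∞`. -/
noncomputable def firstIdx {n : ℕ} (u : Fin n → ZMod 2) : ℕ∞ :=
  ⨅ (i : Fin n) (_ : u i ≠ 0), (((i : ℕ) + 1 : ℕ) : ℕ∞)

/-! ### Auxiliary integer / floor lemmas -/

lemma int_ediv_ediv (a b c : ℤ) (hb : 0 < b) (hc : 0 < c) : a / b / c = a / (b * c) := by
  have hbc : 0 < b * c := mul_pos hb hc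
  set q := a / b / c with hq
  have h1 : q * (b * c) ≤ a := by
    have hqc : q * c ≤ a / b := Int.ediv_mul_le (a / b) (ne_of_gt hc)
    have := (Int.le_ediv_iff_mul_le hb).mp hqc
    calc q * (b * c) = q * c * b := by ring
      _ ≤ a := this
  have h2 : a < (q + 1) * (b * c) := by
    have hlt : a / b < (q + 1) * c := by
      have := Int.lt_ediv_add_one_mul_self (a / b) hc
      simpa [hq] using this
    have := (Int.ediv_lt_iff_lt_mul hb).mp hlt
    calc a < (q + 1) * c * b := this
      _ = (q + 1) * (b * c) := by ring
  have hle : q ≤ a / (b * c) := (Int.le_ediv_iff_mul_le hbc).mpr h1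
  have hlt : a / (b * c) < q + 1 := (Int.ediv_lt_iff_lt_mul hbc).mpr h2
  omega

lemma ediv_pow_split (a : ℤ) (s e : ℕ) (hse : s ≤ e) : a / 2^e = (a / 2^s) / 2^(e-s) := by
  rw [int_ediv_ediv a (2^s) (2^(e-s)) (by positivity) (by positivity), ← pow_add]
  congr 2
  omega

lemma floor_div_int' (a : ℝ) (n : ℤ) (hn : 0 < n) : ⌊a / (n:ℝ)⌋ = ⌊a⌋ / n := by
  have hn' : (0:ℝ) < (n:ℝ) := by exact_mod_cast hn
  have hdm := Int.mul_ediv_add_emod ⌊a⌋ n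
  have hr0 : 0 ≤ ⌊a⌋ % n := Int.emod_nonneg _ (ne_of_gt hn)
  have hr1 : ⌊a⌋ % n < n := Int.emod_lt_of_pos _ hn
  rw [Int.floor_eq_iff]
  constructor
  · rw [le_div_iff₀ hn']
    have h1 : n * (⌊a⌋ / n) ≤ ⌊a⌋ := by omega
    calc ((⌊a⌋ / n : ℤ) : ℝ) * n = ((n * (⌊a⌋ / n) : ℤ) : ℝ) := by push_cast; ring
      _ ≤ (⌊a⌋ : ℝ) := by exact_mod_cast h1
      _ ≤ a := Int.floor_le a
  · rw [div_lt_iff₀ hn']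
    have h2 : ⌊a⌋ < n * (⌊a⌋ / n + 1) := by rw [mul_add, mul_one]; omega
    calc a < (⌊a⌋ : ℝ) + 1 := Int.lt_floor_add_one a
      _ ≤ ((n * (⌊a⌋ / n + 1) : ℤ) : ℝ) := by exact_mod_cast h2
      _ = ((⌊a⌋ / n : ℤ) + 1) * (n:ℝ) := by push_cast; ring

lemma floor_pow_mul (g : ℝ) (K t : ℕ) (ht : t ≤ K) :
    ⌊(2:ℝ)^(t:ℤ) * g⌋ = ⌊(2:ℝ)^(K:ℤ) * g⌋ / 2^(K-t) := by
  have hc : ((2^(K-t) : ℤ) : ℝ) = (2:ℝ)^((K:ℤ) - t) := by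
    push_cast
    rw [← zpow_natCast (2:ℝ) (K-t)]
    congr 1
    omega
  have h2 : (2:ℝ)^(t:ℤ) * g = ((2:ℝ)^(K:ℤ) * g) / ((2^(K-t) : ℤ) : ℝ) := by
    rw [hc, eq_div_iff (by positivity : ((2:ℝ)^((K:ℤ) - t)) ≠ 0)]
    rw [mul_right_comm, ← zpow_add₀ (by norm_num : (2:ℝ) ≠ 0)]
    ring_nf
  rw [h2, floor_div_int' _ _ (by positivity)]

/-! ### Digits of the scaled floor -/

def dig (N : ℤ) (K t : ℕ) : ZMod 2 :=
  ((N / 2^(K-t) - 2 * (N / 2^(K-t+1)) : ℤ) : ZMod 2)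

lemma floor_lb {g : ℝ} (hg : g ∈ Set.Ioo (1:ℝ) 2) (K : ℕ) :
    2^K ≤ ⌊(2:ℝ)^(K:ℤ) * g⌋ := by
  rw [Int.le_floor]
  push_cast
  rw [zpow_natCast]
  nlinarith [hg.1, (by positivity : (0:ℝ) < (2:ℝ)^K)]

lemma floor_ub {g : ℝ} (hg : g ∈ Set.Ioo (1:ℝ) 2) (K : ℕ) :
    ⌊(2:ℝ)^(K:ℤ) * g⌋ < 2^(K+1) := by
  rw [Int.floor_lt]
  push_cast
  rw [zpow_natCast, pow_succ]
  nlinarith [hg.2, (by positivity : (0:ℝ) < (2:ℝ)^K)]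

lemma binDigit_eq_dig {g : ℝ} (hg : g ∈ Set.Ioo (1:ℝ) 2) (K t : ℕ) (ht : t ≤ K) :
    binDigit g t = dig ⌊(2:ℝ)^(K:ℤ) * g⌋ K t := by
  unfold binDigit dig
  rcases Nat.eq_zero_or_pos t with h0 | hpos
  · subst h0
    have e1 : ⌊(2:ℝ)^((0:ℕ):ℤ) * g⌋ = ⌊(2:ℝ)^(K:ℤ) * g⌋ / 2^(K-0) :=
      floor_pow_mul g K 0 (Nat.zero_le K)
    have e2 : ⌊(2:ℝ)^(((0:ℕ):ℤ) - 1) * g⌋ = 0 := by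
      rw [Int.floor_eq_zero_iff]
      constructor
      · have : (2:ℝ)^(((0:ℕ):ℤ) - 1) = 1/2 := by norm_num
        rw [this]; nlinarith [hg.1]
      · have : (2:ℝ)^(((0:ℕ):ℤ) - 1) = 1/2 := by norm_num
        rw [this]; nlinarith [hg.2]
    have e3 : ⌊(2:ℝ)^(K:ℤ) * g⌋ / 2^(K-0+1) = 0 := by
      apply Int.ediv_eq_zero_of_lt
      · exact le_trans (by positivity) (floor_lb hg K)
      · simpa using floor_ub hg K
    rw [e1, e2, e3]
  · have e1 : ⌊(2:ℝ)^(t:ℤ) * g⌋ = ⌊(2:ℝ)^(K:ℤ) * g⌋ / 2^(K-t) := floor_pow_mul g K t ht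
    have e2 : ⌊(2:ℝ)^((t:ℤ) - 1) * g⌋ = ⌊(2:ℝ)^(K:ℤ) * g⌋ / 2^(K-t+1) := by
      have := floor_pow_mul g K (t-1) (by omega)
      have ha : ((t-1 : ℕ) : ℤ) = (t:ℤ) - 1 := by omega
      have hb : K - (t-1) = K - t + 1 := by omega
      rw [ha, hb] at this
      exact this
    rw [e1, e2]

lemma binDigit_zero_eq_one {g : ℝ} (hg : g ∈ Set.Ioo (1:ℝ) 2) : binDigit g 0 = 1 := by
  unfold binDigit
  have h1 : ⌊(2:ℝ)^((0:ℕ):ℤ) * g⌋ = 1 := by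
    rw [Int.floor_eq_iff]
    constructor
    · push_cast; nlinarith [hg.1]
    · push_cast; nlinarith [hg.2]
  have h2 : ⌊(2:ℝ)^(((0:ℕ):ℤ) - 1) * g⌋ = 0 := by
    rw [Int.floor_eq_zero_iff]
    constructor
    · have : (2:ℝ)^(((0:ℕ):ℤ) - 1) = 1/2 := by norm_num
      rw [this]; nlinarith [hg.1]
    · have : (2:ℝ)^(((0:ℕ):ℤ) - 1) = 1/2 := by norm_num
      rw [this]; nlinarith [hg.2]
  rw [h1, h2]
  decide

/-! ### The matrix-vector entries in terms of digits -/

def Efun (n1 : ℕ) (u : Fin n1 → ZMod 2) (N : ℤ) (i : Fin n1) : ZMod 2 :=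
  ∑ j : Fin n1, (if (j:ℕ) ≤ (i:ℕ) then dig N n1 ((i:ℕ)-(j:ℕ)) else 0) * u j

lemma Gmat_mulVec (n1 : ℕ) (g : ℝ) (u : Fin n1 → ZMod 2) (i : Fin n1) :
    (Gmat n1 g *ᵥ u) i
      = ∑ j : Fin n1, (if (j:ℕ) ≤ (i:ℕ) then binDigit g ((i:ℕ)-(j:ℕ)) else 0) * u j := by
  simp only [Matrix.mulVec, dotProduct, Gmat]

lemma Efun_transfer (n1 : ℕ) (u : Fin n1 → ZMod 2) {g : ℝ} (hg : g ∈ Set.Ioo (1:ℝ) 2)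
    (i : Fin n1) :
    (Gmat n1 g *ᵥ u) i = Efun n1 u ⌊(2:ℝ)^(n1:ℤ) * g⌋ i := by
  rw [Gmat_mulVec]
  unfold Efun
  refine Finset.sum_congr rfl (fun j _ => ?_)
  rcases le_or_gt ((j:ℕ)) ((i:ℕ)) with hle | hlt
  · rw [if_pos hle, if_pos hle, binDigit_eq_dig hg n1 ((i:ℕ)-(j:ℕ)) (by omega)]
  · rw [if_neg (by omega), if_neg (by omega)]

/-! ### The core injectivity lemma -/

lemma core_inj (n1 K D mm : ℕ) (hD : D ≤ K)
    (u : Fin n1 → ZMod 2) (i0 : Fin n1) (hi0 : (i0:ℕ) + 1 = mm)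
    (hu1 : u i0 = 1) (hu0 : ∀ j : Fin n1, (j:ℕ) + 1 < mm → u j = 0)
    (hrows : mm + D ≤ n1)
    (N N' : ℤ) (hN1 : 2^K ≤ N) (hN2 : N < 2^(K+1))
    (hN1' : 2^K ≤ N') (hN2' : N' < 2^(K+1))
    (hmod : N % 2^(K-D) = N' % 2^(K-D))
    (heq : ∀ i : Fin n1, mm ≤ (i:ℕ)+1 → (i:ℕ)+1 ≤ mm + D →
      (∑ j : Fin n1, (if (j:ℕ) ≤ (i:ℕ) then dig N K ((i:ℕ)-(j:ℕ)) else 0) * u j)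
      = ∑ j : Fin n1, (if (j:ℕ) ≤ (i:ℕ) then dig N' K ((i:ℕ)-(j:ℕ)) else 0) * u j) :
    N = N' := by
  have hmm : 1 ≤ mm := by omega
  have hq : ∀ j, j ≤ D → N / 2^(K-j) = N' / 2^(K-j) := by
    intro j
    induction j with
    | zero =>
      intro _
      have l1 : (1:ℤ) ≤ N / 2^(K-0) := by
        rw [Int.le_ediv_iff_mul_le (by positivity)]
        simpa using hN1
      have l2 : N / 2^(K-0) < 2 := by
        rw [Int.ediv_lt_iff_lt_mul (by positivity)]
        calc N < 2^(K+1) := hN2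
          _ = 2 * 2^(K-0) := by rw [Nat.sub_zero, pow_succ]; ring
      have l1' : (1:ℤ) ≤ N' / 2^(K-0) := by
        rw [Int.le_ediv_iff_mul_le (by positivity)]
        simpa using hN1'
      have l2' : N' / 2^(K-0) < 2 := by
        rw [Int.ediv_lt_iff_lt_mul (by positivity)]
        calc N' < 2^(K+1) := hN2'
          _ = 2 * 2^(K-0) := by rw [Nat.sub_zero, pow_succ]; ring
      omega
    | succ j ih =>
      intro hjD
      have hAj : N / 2^(K-j) = N' / 2^(K-j) := ih (by omega)
      have hquot : ∀ e, K - j ≤ e → N / 2^e = N' / 2^e := by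
        intro e he
        rw [ediv_pow_split N (K-j) e he, ediv_pow_split N' (K-j) e he, hAj]
      have hdig : ∀ t, t ≤ j → dig N K t = dig N' K t := by
        intro t htj
        unfold dig
        rw [hquot (K-t) (by omega), hquot (K-t+1) (by omega)]
      have hin1 : mm + j < n1 := by omega
      set i : Fin n1 := ⟨mm + j, hin1⟩ with hidef
      have hival : (i:ℕ) = mm + j := rfl
      have hsum := heq i (by rw [hival]; omega) (by rw [hival]; omega)
      set fN : Fin n1 → ZMod 2 :=
        fun j' => (if (j':ℕ) ≤ (i:ℕ) then dig N K ((i:ℕ)-(j':ℕ)) else 0) * u j' with hfN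
      set fN' : Fin n1 → ZMod 2 :=
        fun j' => (if (j':ℕ) ≤ (i:ℕ) then dig N' K ((i:ℕ)-(j':ℕ)) else 0) * u j' with hfN'
      have hterm : ∀ j' : Fin n1, j' ≠ i0 → fN j' = fN' j' := by
        intro j' hj'
        rw [hfN, hfN']
        simp only
        rcases lt_or_ge ((j':ℕ) + 1) mm with hlt | hge
        · rw [hu0 j' hlt, mul_zero, mul_zero]
        · have hne : (j':ℕ) ≠ (i0:ℕ) := fun h => hj' (Fin.ext h)
          have hgt : mm ≤ (j':ℕ) := by omega
          rcases le_or_gt ((j':ℕ)) ((i:ℕ)) with hle2 | hlt2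
          · rw [if_pos hle2, if_pos hle2, hdig ((i:ℕ)-(j':ℕ)) (by rw [hival]; omega)]
          · rw [if_neg (by omega), if_neg (by omega)]
      have hsum' : ∑ j', fN j' = ∑ j', fN' j' := hsum
      have e1 := Finset.add_sum_erase Finset.univ fN (Finset.mem_univ i0)
      have e2 := Finset.add_sum_erase Finset.univ fN' (Finset.mem_univ i0)
      have e3 : ∑ x ∈ Finset.univ.erase i0, fN x = ∑ x ∈ Finset.univ.erase i0, fN' x :=
        Finset.sum_congr rfl (fun x hx => hterm x (Finset.ne_of_mem_erase hx))
      have hkey : fN i0 = fN' i0 := by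
        have : fN i0 + ∑ x ∈ Finset.univ.erase i0, fN x
            = fN' i0 + ∑ x ∈ Finset.univ.erase i0, fN x := by
          rw [e1, hsum', ← e2, e3]
        exact add_right_cancel this
      have hii0 : (i0:ℕ) ≤ (i:ℕ) := by rw [hival]; omega
      have hidx : (i:ℕ) - (i0:ℕ) = j + 1 := by rw [hival]; omega
      have hdigj1 : dig N K (j+1) = dig N' K (j+1) := by
        have := hkey
        rw [hfN, hfN'] at this
        simp only [if_pos hii0, hidx, hu1, mul_one] at this
        exact this
      have hx2 : (N / 2^(K-(j+1))) / 2 = N / 2^(K-j) := by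
        rw [int_ediv_ediv N (2^(K-(j+1))) 2 (by positivity) (by norm_num)]
        congr 1
        rw [← pow_succ]
        congr 1
        omega
      have hy2 : (N' / 2^(K-(j+1))) / 2 = N' / 2^(K-j) := by
        rw [int_ediv_ediv N' (2^(K-(j+1))) 2 (by positivity) (by norm_num)]
        congr 1
        rw [← pow_succ]
        congr 1
        omega
      have hexp : K - (j+1) + 1 = K - j := by omega
      have hdN : dig N K (j+1) = (((N / 2^(K-(j+1))) % 2 : ℤ) : ZMod 2) := by
        unfold dig
        rw [hexp]
        congr 1
        rw [← hx2, Int.emod_def]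
      have hdN' : dig N' K (j+1) = (((N' / 2^(K-(j+1))) % 2 : ℤ) : ZMod 2) := by
        unfold dig
        rw [hexp]
        congr 1
        rw [← hy2, Int.emod_def]
      have hcast : (((N / 2^(K-(j+1))) % 2 : ℤ) : ZMod 2)
          = (((N' / 2^(K-(j+1))) % 2 : ℤ) : ZMod 2) := by
        rw [← hdN, ← hdN', hdigj1]
      have hmod2 : (N / 2^(K-(j+1))) % 2 = (N' / 2^(K-(j+1))) % 2 := by
        have := (ZMod.intCast_eq_intCast_iff' _ _ _).mp hcast
        simpa using this
      have d1 := Int.mul_ediv_add_emod (N / 2^(K-(j+1))) 2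
      have d2 := Int.mul_ediv_add_emod (N' / 2^(K-(j+1))) 2
      rw [hx2] at d1
      rw [hy2] at d2
      omega
  have hAD := hq D (le_refl D)
  have d1 := Int.mul_ediv_add_emod N (2^(K-D))
  have d2 := Int.mul_ediv_add_emod N' (2^(K-D))
  rw [hAD] at d1
  omega

/-! ### Measure-theoretic helpers -/

lemma vol_plane1 : volume {p : ℝ×ℝ×ℝ | p.1 = 2} = 0 := by
  have h : {p : ℝ×ℝ×ℝ | p.1 = 2} = ({2} : Set ℝ) ×ˢ (Set.univ : Set (ℝ×ℝ)) := by
    ext ⟨x, y, z⟩; simp [Set.mem_prod, eq_comm]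
  rw [h, Measure.volume_eq_prod, Measure.prod_prod]
  simp

lemma vol_plane2 : volume {p : ℝ×ℝ×ℝ | p.2.1 = 2} = 0 := by
  have h : {p : ℝ×ℝ×ℝ | p.2.1 = 2}
      = (Set.univ : Set ℝ) ×ˢ (({2} : Set ℝ) ×ˢ (Set.univ : Set ℝ)) := by
    ext ⟨x, y, z⟩; simp [Set.mem_prod, eq_comm]
  rw [h, Measure.volume_eq_prod, Measure.prod_prod, Measure.volume_eq_prod, Measure.prod_prod]
  simp

lemma vol_plane3 : volume {p : ℝ×ℝ×ℝ | p.2.2 = 2} = 0 := by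
  have h : {p : ℝ×ℝ×ℝ | p.2.2 = 2}
      = (Set.univ : Set ℝ) ×ˢ ((Set.univ : Set ℝ) ×ˢ ({2} : Set ℝ)) := by
    ext ⟨x, y, z⟩; simp [Set.mem_prod, eq_comm]
  rw [h, Measure.volume_eq_prod, Measure.prod_prod, Measure.volume_eq_prod, Measure.prod_prod]
  simp

lemma vol_box (a b c : ℤ) (K : ℕ) :
    volume ((Set.Ico ((a:ℝ)/2^K) (((a:ℝ)+1)/2^K)) ×ˢ
      ((Set.Ico ((b:ℝ)/2^K) (((b:ℝ)+1)/2^K)) ×ˢ (Set.Ico ((c:ℝ)/2^K) (((c:ℝ)+1)/2^K))))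
      = ENNReal.ofReal (((2:ℝ)^K)⁻¹ * (((2:ℝ)^K)⁻¹ * ((2:ℝ)^K)⁻¹)) := by
  have h : ∀ x : ℤ, ((x:ℝ)+1)/2^K - (x:ℝ)/2^K = ((2:ℝ)^K)⁻¹ := by
    intro x
    field_simp
    ring
  rw [Measure.volume_eq_prod, Measure.prod_prod, Measure.volume_eq_prod, Measure.prod_prod,
    Real.volume_Ico, Real.volume_Ico, Real.volume_Ico, h a, h b, h c,
    ← ENNReal.ofReal_mul (by positivity), ← ENNReal.ofReal_mul (by positivity)]

lemma mem_floor_Ico (g : ℝ) (K : ℕ) :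
    g ∈ Set.Ico ((⌊(2:ℝ)^(K:ℤ)*g⌋:ℝ)/2^K) (((⌊(2:ℝ)^(K:ℤ)*g⌋:ℝ)+1)/2^K) := by
  have hp : (0:ℝ) < 2^K := by positivity
  have hz : (2:ℝ)^(K:ℤ) = (2:ℝ)^K := zpow_natCast 2 K
  constructor
  · rw [div_le_iff₀ hp]
    calc ((⌊(2:ℝ)^(K:ℤ)*g⌋:ℤ):ℝ) ≤ (2:ℝ)^(K:ℤ)*g := Int.floor_le _
      _ = g * 2^K := by rw [hz]; ring
  · rw [lt_div_iff₀ hp]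
    calc g * 2^K = (2:ℝ)^(K:ℤ)*g := by rw [hz]; ring
      _ < ((⌊(2:ℝ)^(K:ℤ)*g⌋:ℤ):ℝ) + 1 := Int.lt_floor_add_one _

/-! ### firstIdx helpers -/

lemma firstIdx_le {n : ℕ} (u : Fin n → ZMod 2) (i : Fin n) (h : u i ≠ 0) :
    firstIdx u ≤ (((i:ℕ)+1 : ℕ) : ℕ∞) := iInf₂_le i h

lemma le_firstIdx {n : ℕ} (u : Fin n → ZMod 2) (c : ℕ∞)
    (h : ∀ i, u i ≠ 0 → c ≤ (((i:ℕ)+1:ℕ):ℕ∞)) : c ≤ firstIdx u := le_iInf₂ h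

lemma firstIdx_zero {n : ℕ} : firstIdx (0 : Fin n → ZMod 2) = ⊤ :=
  le_antisymm le_top (le_iInf₂ fun _ hi => (hi rfl).elim)

/-- the per-tuple measure bound from the proof of Lemma 4 of the
paper. -/
theorem stmt_8 (n1 R3 : ℕ) (hR3 : R3 ≤ n1)
    (u0 u1 u2 : Fin n1 → ZMod 2) (hne : ¬(u0 = 0 ∧ u1 = 0 ∧ u2 = 0))
    (h0 : u0 ≠ 0 → firstIdx u0 ≤ ((n1 - R3 : ℕ) : ℕ∞))
    (h1 : u1 ≠ 0 → firstIdx u1 ≤ ((n1 - R3 : ℕ) : ℕ∞))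
    (h2 : u2 ≠ 0 → firstIdx u2 ≤ ((n1 - R3 : ℕ) : ℕ∞))
    (m : ℕ) (hm : (m : ℕ∞) = min (firstIdx u0) (min (firstIdx u1) (firstIdx u2)))
    (B : Set (ℝ × ℝ × ℝ))
    (hB : B = {g : ℝ × ℝ × ℝ |
        g.1 ∈ Set.Ioc (1:ℝ) 2 ∧ g.2.1 ∈ Set.Ioc (1:ℝ) 2 ∧ g.2.2 ∈ Set.Ioc (1:ℝ) 2 ∧
        ∀ i : Fin n1, (i : ℕ) + 1 ≤ n1 - R3 →
          (Gmat n1 g.1 *ᵥ u0 + Gmat n1 g.2.1 *ᵥ u1 + Gmat n1 g.2.2 *ᵥ u2) i = 0}) :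
    volume B ≤ ENNReal.ofReal ((2:ℝ) ^ ((R3 : ℤ) - (n1 : ℤ) + (m : ℤ))) ∧
      ((∃! k : Fin 3, ![firstIdx u0, firstIdx u1, firstIdx u2] k = (m : ℕ∞)) →
        volume B = 0) := by
  classical
  subst hB
  have hone : ∀ x : ZMod 2, x ≠ 0 → x = 1 := by decide
  have hmin0 : (m:ℕ∞) ≤ firstIdx u0 := by rw [hm]; exact min_le_left _ _
  have hmin1 : (m:ℕ∞) ≤ firstIdx u1 := by
    rw [hm]; exact le_trans (min_le_right _ _) (min_le_left _ _)
  have hmin2 : (m:ℕ∞) ≤ firstIdx u2 := by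
    rw [hm]; exact le_trans (min_le_right _ _) (min_le_right _ _)
  have hlow : ∀ (u : Fin n1 → ZMod 2), (m:ℕ∞) ≤ firstIdx u →
      ∀ j : Fin n1, (j:ℕ)+1 < m → u j = 0 := by
    intro u hu j hj
    by_contra hne0
    have h2' : (m:ℕ∞) ≤ (((j:ℕ)+1 : ℕ) : ℕ∞) := le_trans hu (firstIdx_le u j hne0)
    have : m ≤ (j:ℕ)+1 := by exact_mod_cast h2'
    omega
  have hlow0 := hlow u0 hmin0
  have hlow1 := hlow u1 hmin1
  have hlow2 := hlow u2 hmin2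
  have hatt : firstIdx u0 = (m:ℕ∞) ∨ firstIdx u1 = (m:ℕ∞) ∨ firstIdx u2 = (m:ℕ∞) := by
    rcases min_choice (firstIdx u0) (min (firstIdx u1) (firstIdx u2)) with h | h
    · left; rw [← h]; exact hm.symm
    · rcases min_choice (firstIdx u1) (firstIdx u2) with h' | h'
      · right; left; rw [← h', ← h]; exact hm.symm
      · right; right; rw [← h', ← h]; exact hm.symm
  have hspec : ∀ (u : Fin n1 → ZMod 2), firstIdx u = (m:ℕ∞) →
      (u ≠ 0 → firstIdx u ≤ ((n1 - R3 : ℕ) : ℕ∞)) →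
      1 ≤ m ∧ m ≤ n1 - R3 ∧ ∃ i0 : Fin n1, (i0:ℕ)+1 = m ∧ u i0 = 1 := by
    intro u hu hle
    have hu0 : u ≠ 0 := by
      intro h
      rw [h, firstIdx_zero] at hu
      exact absurd hu.symm (by simp)
    have h1m : 1 ≤ m := by
      have hh : ((1:ℕ) : ℕ∞) ≤ firstIdx u := by
        refine le_firstIdx u _ (fun i hi => ?_)
        exact_mod_cast Nat.succ_le_succ (Nat.zero_le _)
      rw [hu] at hh
      exact_mod_cast hh
    have hmle : m ≤ n1 - R3 := by
      have hh := hle hu0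
      rw [hu] at hh
      exact_mod_cast hh
    refine ⟨h1m, hmle, ?_⟩
    by_contra hc
    push_neg at hc
    have hh : (((m+1 : ℕ)) : ℕ∞) ≤ firstIdx u := by
      refine le_firstIdx u _ (fun i hi => ?_)
      have hge : (m:ℕ∞) ≤ (((i:ℕ)+1 : ℕ) : ℕ∞) := le_trans hu.ge (firstIdx_le u i hi)
      have hge' : m ≤ (i:ℕ)+1 := by exact_mod_cast hge
      have hne' := hc i
      have : (i:ℕ)+1 ≠ m := fun hh' => (hne' hh') (hone _ hi)
      exact_mod_cast Nat.succ_le_of_lt (by omega)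
    rw [hu] at hh
    have : m+1 ≤ m := by exact_mod_cast hh
    omega
  have hmm : 1 ≤ m ∧ m ≤ n1 - R3 := by
    rcases hatt with h | h | h
    · exact ⟨(hspec u0 h h0).1, (hspec u0 h h0).2.1⟩
    · exact ⟨(hspec u1 h h1).1, (hspec u1 h h1).2.1⟩
    · exact ⟨(hspec u2 h h2).1, (hspec u2 h h2).2.1⟩
  obtain ⟨hm1, hmle⟩ := hmm
  set D := n1 - R3 - m with hDdef
  have hDle : D ≤ n1 := by omega
  have hmD : m + D = n1 - R3 := by omega
  set T : Finset ℤ := Finset.Icc (2^n1) (2^(n1+1) - 1) with hTdef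
  set S : Finset (ℤ×ℤ×ℤ) := Finset.filter
    (fun N => ∀ i : Fin n1, (i:ℕ)+1 ≤ n1 - R3 →
      Efun n1 u0 N.1 i + Efun n1 u1 N.2.1 i + Efun n1 u2 N.2.2 i = 0)
    (T ×ˢ T ×ˢ T) with hSdef
  set Box : ℤ×ℤ×ℤ → Set (ℝ×ℝ×ℝ) := fun N =>
    (Set.Ico ((N.1:ℝ)/2^n1) (((N.1:ℝ)+1)/2^n1)) ×ˢ
    ((Set.Ico ((N.2.1:ℝ)/2^n1) (((N.2.1:ℝ)+1)/2^n1)) ×ˢ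
     (Set.Ico ((N.2.2:ℝ)/2^n1) (((N.2.2:ℝ)+1)/2^n1))) with hBoxdef
  -- covering
  have hcover : {g : ℝ × ℝ × ℝ |
        g.1 ∈ Set.Ioc (1:ℝ) 2 ∧ g.2.1 ∈ Set.Ioc (1:ℝ) 2 ∧ g.2.2 ∈ Set.Ioc (1:ℝ) 2 ∧
        ∀ i : Fin n1, (i : ℕ) + 1 ≤ n1 - R3 →
          (Gmat n1 g.1 *ᵥ u0 + Gmat n1 g.2.1 *ᵥ u1 + Gmat n1 g.2.2 *ᵥ u2) i = 0}
      ⊆ ({p : ℝ×ℝ×ℝ | p.1 = 2} ∪ {p : ℝ×ℝ×ℝ | p.2.1 = 2} ∪ {p : ℝ×ℝ×ℝ | p.2.2 = 2})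
        ∪ ⋃ N ∈ S, Box N := by
    rintro p ⟨hp1, hp2, hp3, hpe⟩
    by_cases hc1 : p.1 = 2
    · exact Or.inl (Or.inl (Or.inl hc1))
    by_cases hc2 : p.2.1 = 2
    · exact Or.inl (Or.inl (Or.inr hc2))
    by_cases hc3 : p.2.2 = 2
    · exact Or.inl (Or.inr hc3)
    have hg1 : p.1 ∈ Set.Ioo (1:ℝ) 2 := ⟨hp1.1, lt_of_le_of_ne hp1.2 hc1⟩
    have hg2 : p.2.1 ∈ Set.Ioo (1:ℝ) 2 := ⟨hp2.1, lt_of_le_of_ne hp2.2 hc2⟩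
    have hg3 : p.2.2 ∈ Set.Ioo (1:ℝ) 2 := ⟨hp3.1, lt_of_le_of_ne hp3.2 hc3⟩
    refine Or.inr (Set.mem_biUnion (?_ :
      (⌊(2:ℝ)^(n1:ℤ)*p.1⌋, ⌊(2:ℝ)^(n1:ℤ)*p.2.1⌋, ⌊(2:ℝ)^(n1:ℤ)*p.2.2⌋) ∈ S) ?_)
    · rw [hSdef, Finset.mem_filter]
      constructor
      · refine Finset.mem_product.mpr ⟨?_, Finset.mem_product.mpr ⟨?_, ?_⟩⟩ <;>
          (dsimp only; rw [hTdef, Finset.mem_Icc])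
        · exact ⟨floor_lb hg1 n1, by have := floor_ub hg1 n1; omega⟩
        · exact ⟨floor_lb hg2 n1, by have := floor_ub hg2 n1; omega⟩
        · exact ⟨floor_lb hg3 n1, by have := floor_ub hg3 n1; omega⟩
      · intro i hi
        have he := hpe i hi
        rw [Pi.add_apply, Pi.add_apply] at he
        rw [Efun_transfer n1 u0 hg1 i, Efun_transfer n1 u1 hg2 i,
          Efun_transfer n1 u2 hg3 i] at he
        exact he
    · simp only [hBoxdef]
      exact ⟨mem_floor_Ico p.1 n1, mem_floor_Ico p.2.1 n1, mem_floor_Ico p.2.2 n1⟩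
  have hplanes : volume ({p : ℝ×ℝ×ℝ | p.1 = 2} ∪ {p : ℝ×ℝ×ℝ | p.2.1 = 2}
      ∪ {p : ℝ×ℝ×ℝ | p.2.2 = 2}) = 0 :=
    measure_union_null (measure_union_null vol_plane1 vol_plane2) vol_plane3
  have hcT : T.card = 2^n1 := by
    rw [hTdef, Int.card_Icc]
    have h : ((2:ℤ)^(n1+1) - 1 + 1 - 2^n1) = ((2^n1 : ℕ) : ℤ) := by push_cast; ring
    rw [h, Int.toNat_natCast]
  have hcI : (Finset.Ico (0:ℤ) (2^(n1-D))).card = 2^(n1-D) := by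
    rw [Int.card_Ico]
    have h : ((2:ℤ)^(n1-D) - 0) = ((2^(n1-D) : ℕ) : ℤ) := by push_cast; ring
    rw [h, Int.toNat_natCast]
  have hpow1 : 2^(n1-D) * (2^n1 * 2^n1) = 2^(3*n1-D) := by
    rw [← pow_add, ← pow_add]; congr 1; omega
  have hpow2 : 2^n1 * (2^(n1-D) * 2^n1) = 2^(3*n1-D) := by
    rw [← pow_add, ← pow_add]; congr 1; omega
  have hpow3 : 2^n1 * (2^n1 * 2^(n1-D)) = 2^(3*n1-D) := by
    rw [← pow_add, ← pow_add]; congr 1; omega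
  have hcard : S.card ≤ 2^(3*n1-D) := by
    rcases hatt with hA | hA | hA
    · obtain ⟨-, -, i0, hi0, hu1⟩ := hspec u0 hA h0
      have hmaps : ∀ a ∈ S,
          (a.1 % 2^(n1-D), a.2) ∈ (Finset.Ico (0:ℤ) (2^(n1-D))) ×ˢ (T ×ˢ T) := by
        intro a ha
        obtain ⟨hmem, -⟩ := Finset.mem_filter.mp ha
        obtain ⟨-, h23⟩ := Finset.mem_product.mp hmem
        refine Finset.mem_product.mpr ⟨?_, h23⟩
        rw [Finset.mem_Ico]
        exact ⟨Int.emod_nonneg _ (by positivity), Int.emod_lt_of_pos _ (by positivity)⟩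
      have hinj : Set.InjOn (fun a : ℤ×ℤ×ℤ => (a.1 % 2^(n1-D), a.2)) ↑S := by
        intro a ha b hb hab
        obtain ⟨haT, hPa⟩ := Finset.mem_filter.mp (Finset.mem_coe.mp ha)
        obtain ⟨hbT, hPb⟩ := Finset.mem_filter.mp (Finset.mem_coe.mp hb)
        have hab2 : (a.1 % 2^(n1-D), a.2) = (b.1 % 2^(n1-D), b.2) := hab
        simp only [Prod.mk.injEq] at hab2
        obtain ⟨h1', h2'⟩ := hab2
        obtain ⟨haT1, -⟩ := Finset.mem_product.mp haT
        obtain ⟨hbT1, -⟩ := Finset.mem_product.mp hbT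
        rw [hTdef, Finset.mem_Icc] at haT1 hbT1
        have heqE : ∀ i : Fin n1, m ≤ (i:ℕ)+1 → (i:ℕ)+1 ≤ m + D →
            (∑ j : Fin n1, (if (j:ℕ) ≤ (i:ℕ) then dig a.1 n1 ((i:ℕ)-(j:ℕ)) else 0) * u0 j)
            = ∑ j : Fin n1, (if (j:ℕ) ≤ (i:ℕ) then dig b.1 n1 ((i:ℕ)-(j:ℕ)) else 0) * u0 j := by
          intro i _ hi2
          have e1 := hPa i (by omega)
          have e2 := hPb i (by omega)
          rw [h2'] at e1
          have h : Efun n1 u0 a.1 i = Efun n1 u0 b.1 i := by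
            linear_combination e1 - e2
          exact h
        have hfst : a.1 = b.1 :=
          core_inj n1 n1 D m hDle u0 i0 hi0 hu1 hlow0 (by omega) a.1 b.1
            haT1.1 (by omega) hbT1.1 (by omega) h1' heqE
        exact Prod.ext hfst h2'
      calc S.card ≤ ((Finset.Ico (0:ℤ) (2^(n1-D))) ×ˢ (T ×ˢ T)).card :=
            Finset.card_le_card_of_injOn _ hmaps hinj
        _ = 2^(3*n1-D) := by
            rw [Finset.card_product, Finset.card_product, hcI, hcT]
            exact hpow1
    · obtain ⟨-, -, i0, hi0, hu1⟩ := hspec u1 hA h1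
      have hmaps : ∀ a ∈ S,
          (a.1, a.2.1 % 2^(n1-D), a.2.2) ∈ T ×ˢ ((Finset.Ico (0:ℤ) (2^(n1-D))) ×ˢ T) := by
        intro a ha
        obtain ⟨hmem, -⟩ := Finset.mem_filter.mp ha
        obtain ⟨ha1, h23⟩ := Finset.mem_product.mp hmem
        obtain ⟨-, ha22⟩ := Finset.mem_product.mp h23
        refine Finset.mem_product.mpr ⟨ha1, Finset.mem_product.mpr ⟨?_, ha22⟩⟩
        rw [Finset.mem_Ico]
        exact ⟨Int.emod_nonneg _ (by positivity), Int.emod_lt_of_pos _ (by positivity)⟩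
      have hinj : Set.InjOn (fun a : ℤ×ℤ×ℤ => (a.1, a.2.1 % 2^(n1-D), a.2.2)) ↑S := by
        intro a ha b hb hab
        obtain ⟨haT, hPa⟩ := Finset.mem_filter.mp (Finset.mem_coe.mp ha)
        obtain ⟨hbT, hPb⟩ := Finset.mem_filter.mp (Finset.mem_coe.mp hb)
        have hab2 : (a.1, a.2.1 % 2^(n1-D), a.2.2) = (b.1, b.2.1 % 2^(n1-D), b.2.2) := hab
        simp only [Prod.mk.injEq] at hab2
        obtain ⟨h1', h21, h22⟩ := hab2
        obtain ⟨-, haT23⟩ := Finset.mem_product.mp haT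
        obtain ⟨-, hbT23⟩ := Finset.mem_product.mp hbT
        obtain ⟨haT21, -⟩ := Finset.mem_product.mp haT23
        obtain ⟨hbT21, -⟩ := Finset.mem_product.mp hbT23
        rw [hTdef, Finset.mem_Icc] at haT21 hbT21
        have heqE : ∀ i : Fin n1, m ≤ (i:ℕ)+1 → (i:ℕ)+1 ≤ m + D →
            (∑ j : Fin n1, (if (j:ℕ) ≤ (i:ℕ) then dig a.2.1 n1 ((i:ℕ)-(j:ℕ)) else 0) * u1 j)
            = ∑ j : Fin n1, (if (j:ℕ) ≤ (i:ℕ) then dig b.2.1 n1 ((i:ℕ)-(j:ℕ)) else 0) * u1 j := by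
          intro i _ hi2
          have e1 := hPa i (by omega)
          have e2 := hPb i (by omega)
          rw [h1', h22] at e1
          have h : Efun n1 u1 a.2.1 i = Efun n1 u1 b.2.1 i := by
            linear_combination e1 - e2
          exact h
        have hsnd : a.2.1 = b.2.1 :=
          core_inj n1 n1 D m hDle u1 i0 hi0 hu1 hlow1 (by omega) a.2.1 b.2.1
            haT21.1 (by omega) hbT21.1 (by omega) h21 heqE
        exact Prod.ext h1' (Prod.ext hsnd h22)
      calc S.card ≤ (T ×ˢ ((Finset.Ico (0:ℤ) (2^(n1-D))) ×ˢ T)).card :=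
            Finset.card_le_card_of_injOn _ hmaps hinj
        _ = 2^(3*n1-D) := by
            rw [Finset.card_product, Finset.card_product, hcI, hcT]
            exact hpow2
    · obtain ⟨-, -, i0, hi0, hu1⟩ := hspec u2 hA h2
      have hmaps : ∀ a ∈ S,
          (a.1, a.2.1, a.2.2 % 2^(n1-D)) ∈ T ×ˢ (T ×ˢ (Finset.Ico (0:ℤ) (2^(n1-D)))) := by
        intro a ha
        obtain ⟨hmem, -⟩ := Finset.mem_filter.mp ha
        obtain ⟨ha1, h23⟩ := Finset.mem_product.mp hmem
        obtain ⟨ha21, -⟩ := Finset.mem_product.mp h23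
        refine Finset.mem_product.mpr ⟨ha1, Finset.mem_product.mpr ⟨ha21, ?_⟩⟩
        rw [Finset.mem_Ico]
        exact ⟨Int.emod_nonneg _ (by positivity), Int.emod_lt_of_pos _ (by positivity)⟩
      have hinj : Set.InjOn (fun a : ℤ×ℤ×ℤ => (a.1, a.2.1, a.2.2 % 2^(n1-D))) ↑S := by
        intro a ha b hb hab
        obtain ⟨haT, hPa⟩ := Finset.mem_filter.mp (Finset.mem_coe.mp ha)
        obtain ⟨hbT, hPb⟩ := Finset.mem_filter.mp (Finset.mem_coe.mp hb)
        have hab2 : (a.1, a.2.1, a.2.2 % 2^(n1-D)) = (b.1, b.2.1, b.2.2 % 2^(n1-D)) := hab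
        simp only [Prod.mk.injEq] at hab2
        obtain ⟨h1', h21, h22⟩ := hab2
        obtain ⟨-, haT23⟩ := Finset.mem_product.mp haT
        obtain ⟨-, hbT23⟩ := Finset.mem_product.mp hbT
        obtain ⟨-, haT22⟩ := Finset.mem_product.mp haT23
        obtain ⟨-, hbT22⟩ := Finset.mem_product.mp hbT23
        rw [hTdef, Finset.mem_Icc] at haT22 hbT22
        have heqE : ∀ i : Fin n1, m ≤ (i:ℕ)+1 → (i:ℕ)+1 ≤ m + D →
            (∑ j : Fin n1, (if (j:ℕ) ≤ (i:ℕ) then dig a.2.2 n1 ((i:ℕ)-(j:ℕ)) else 0) * u2 j)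
            = ∑ j : Fin n1, (if (j:ℕ) ≤ (i:ℕ) then dig b.2.2 n1 ((i:ℕ)-(j:ℕ)) else 0) * u2 j := by
          intro i _ hi2
          have e1 := hPa i (by omega)
          have e2 := hPb i (by omega)
          rw [h1', h21] at e1
          have h : Efun n1 u2 a.2.2 i = Efun n1 u2 b.2.2 i := by
            linear_combination e1 - e2
          exact h
        have htrd : a.2.2 = b.2.2 :=
          core_inj n1 n1 D m hDle u2 i0 hi0 hu1 hlow2 (by omega) a.2.2 b.2.2
            haT22.1 (by omega) hbT22.1 (by omega) h22 heqE
        exact Prod.ext h1' (Prod.ext h21 htrd)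
      calc S.card ≤ (T ×ˢ (T ×ˢ (Finset.Ico (0:ℤ) (2^(n1-D))))).card :=
            Finset.card_le_card_of_injOn _ hmaps hinj
        _ = 2^(3*n1-D) := by
            rw [Finset.card_product, Finset.card_product, hcI, hcT]
            exact hpow3
  constructor
  · -- the measure bound
    refine le_trans (measure_mono hcover) ?_
    refine le_trans (measure_union_le _ _) ?_
    rw [hplanes, zero_add]
    refine le_trans (measure_biUnion_finset_le _ _) ?_
    have hval : ∀ N ∈ S, volume (Box N)
        = ENNReal.ofReal (((2:ℝ)^n1)⁻¹ * (((2:ℝ)^n1)⁻¹ * ((2:ℝ)^n1)⁻¹)) := by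
      intro N _
      simp only [hBoxdef]
      exact vol_box N.1 N.2.1 N.2.2 n1
    rw [Finset.sum_congr rfl hval, Finset.sum_const, nsmul_eq_mul]
    refine le_trans (mul_le_mul_left
      (show ((S.card : ℕ) : ENNReal) ≤ ((2^(3*n1-D):ℕ) : ENNReal) by exact_mod_cast hcard) _) ?_
    rw [← ENNReal.ofReal_natCast, ← ENNReal.ofReal_mul (by positivity)]
    have hreal : ((2^(3*n1-D):ℕ):ℝ) * (((2:ℝ)^n1)⁻¹ * (((2:ℝ)^n1)⁻¹ * ((2:ℝ)^n1)⁻¹))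
        = (2:ℝ)^((R3:ℤ) - (n1:ℤ) + (m:ℤ)) := by
      have hc1 : ((2^(3*n1-D):ℕ):ℝ) = (2:ℝ)^(3*n1-D) := by push_cast; ring
      have hc2 : ((2:ℝ)^n1)⁻¹ * (((2:ℝ)^n1)⁻¹ * ((2:ℝ)^n1)⁻¹) = ((2:ℝ)^(3*n1))⁻¹ := by
        rw [← mul_inv, ← mul_inv, ← pow_add, ← pow_add,
          show n1+(n1+n1) = 3*n1 by ring]
      have hc3 : (R3:ℤ) - (n1:ℤ) + (m:ℤ) = -(D:ℤ) := by omega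
      rw [hc1, hc2, hc3, _root_.zpow_neg, zpow_natCast]
      field_simp
      rw [← pow_add]
      congr 1
      omega
    rw [hreal]
  · -- part 2: exactly one coordinate attains the minimum
    intro hexu
    obtain ⟨k, hk, huk⟩ := hexu
    have hrowlt : m - 1 < n1 := by omega
    -- a generic finishing move, specialized three times below
    rcases hatt with hA | hA | hA
    · -- u0 attains
      obtain ⟨-, -, i0, hi0, hu01⟩ := hspec u0 hA h0
      have hk0 : k = 0 := (huk 0 (by simpa using hA)).symm
      have hnot1 : firstIdx u1 ≠ (m:ℕ∞) := by
        intro h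
        have h10 := huk 1 (by simpa using h)
        rw [hk0] at h10
        exact absurd h10 (by decide)
      have hnot2 : firstIdx u2 ≠ (m:ℕ∞) := by
        intro h
        have h20 := huk 2 (by simpa using h)
        rw [hk0] at h20
        exact absurd h20 (by decide)
      have hoth1 : ∀ j : Fin n1, (j:ℕ)+1 ≤ m → u1 j = 0 := by
        intro j hj
        rcases lt_or_eq_of_le hj with h | h
        · exact hlow1 j h
        · by_contra hne'
          apply hnot1
          refine le_antisymm ?_ hmin1
          have hh := firstIdx_le u1 j hne'
          rw [h] at hh
          exact hh
      have hoth2 : ∀ j : Fin n1, (j:ℕ)+1 ≤ m → u2 j = 0 := by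
        intro j hj
        rcases lt_or_eq_of_le hj with h | h
        · exact hlow2 j h
        · by_contra hne'
          apply hnot2
          refine le_antisymm ?_ hmin2
          have hh := firstIdx_le u2 j hne'
          rw [h] at hh
          exact hh
      refine measure_mono_null ?_ vol_plane1
      rintro p ⟨hp1, hp2, hp3, hpe⟩
      by_contra hc1
      have hg1 : p.1 ∈ Set.Ioo (1:ℝ) 2 := ⟨hp1.1, lt_of_le_of_ne hp1.2 hc1⟩
      have he := hpe i0 (by omega)
      rw [Pi.add_apply, Pi.add_apply, Gmat_mulVec, Gmat_mulVec, Gmat_mulVec] at he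
      have hz1 : (∑ j : Fin n1,
          (if (j:ℕ) ≤ (i0:ℕ) then binDigit p.2.1 ((i0:ℕ)-(j:ℕ)) else 0) * u1 j) = 0 := by
        refine Finset.sum_eq_zero (fun j _ => ?_)
        rcases le_or_gt ((j:ℕ)) ((i0:ℕ)) with hle | hlt
        · rw [hoth1 j (by omega), mul_zero]
        · rw [if_neg (by omega), zero_mul]
      have hz2 : (∑ j : Fin n1,
          (if (j:ℕ) ≤ (i0:ℕ) then binDigit p.2.2 ((i0:ℕ)-(j:ℕ)) else 0) * u2 j) = 0 := by
        refine Finset.sum_eq_zero (fun j _ => ?_)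
        rcases le_or_gt ((j:ℕ)) ((i0:ℕ)) with hle | hlt
        · rw [hoth2 j (by omega), mul_zero]
        · rw [if_neg (by omega), zero_mul]
      have hfirst : (∑ j : Fin n1,
          (if (j:ℕ) ≤ (i0:ℕ) then binDigit p.1 ((i0:ℕ)-(j:ℕ)) else 0) * u0 j)
          = binDigit p.1 0 := by
        rw [Finset.sum_eq_single_of_mem i0 (Finset.mem_univ i0) ?_]
        · rw [if_pos (le_refl _), Nat.sub_self, hu01, mul_one]
        · intro b _ hb
          rcases lt_or_ge ((b:ℕ)+1) m with h | h
          · rw [hlow0 b h, mul_zero]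
          · have hgt : (i0:ℕ) < (b:ℕ) := by
              have hne' : (b:ℕ) ≠ (i0:ℕ) := fun hh => hb (Fin.ext hh)
              omega
            rw [if_neg (by omega), zero_mul]
      rw [hz1, hz2, hfirst, add_zero, add_zero, binDigit_zero_eq_one hg1] at he
      exact absurd he (by decide)
    · -- u1 attains
      obtain ⟨-, -, i0, hi0, hu11⟩ := hspec u1 hA h1
      have hk0 : k = 1 := (huk 1 (by simpa using hA)).symm
      have hnot0 : firstIdx u0 ≠ (m:ℕ∞) := by
        intro h
        have h10 := huk 0 (by simpa using h)
        rw [hk0] at h10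
        exact absurd h10 (by decide)
      have hnot2 : firstIdx u2 ≠ (m:ℕ∞) := by
        intro h
        have h20 := huk 2 (by simpa using h)
        rw [hk0] at h20
        exact absurd h20 (by decide)
      have hoth0 : ∀ j : Fin n1, (j:ℕ)+1 ≤ m → u0 j = 0 := by
        intro j hj
        rcases lt_or_eq_of_le hj with h | h
        · exact hlow0 j h
        · by_contra hne'
          apply hnot0
          refine le_antisymm ?_ hmin0
          have hh := firstIdx_le u0 j hne'
          rw [h] at hh
          exact hh
      have hoth2 : ∀ j : Fin n1, (j:ℕ)+1 ≤ m → u2 j = 0 := by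
        intro j hj
        rcases lt_or_eq_of_le hj with h | h
        · exact hlow2 j h
        · by_contra hne'
          apply hnot2
          refine le_antisymm ?_ hmin2
          have hh := firstIdx_le u2 j hne'
          rw [h] at hh
          exact hh
      refine measure_mono_null ?_ vol_plane2
      rintro p ⟨hp1, hp2, hp3, hpe⟩
      by_contra hc2
      have hg2 : p.2.1 ∈ Set.Ioo (1:ℝ) 2 := ⟨hp2.1, lt_of_le_of_ne hp2.2 hc2⟩
      have he := hpe i0 (by omega)
      rw [Pi.add_apply, Pi.add_apply, Gmat_mulVec, Gmat_mulVec, Gmat_mulVec] at he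
      have hz0 : (∑ j : Fin n1,
          (if (j:ℕ) ≤ (i0:ℕ) then binDigit p.1 ((i0:ℕ)-(j:ℕ)) else 0) * u0 j) = 0 := by
        refine Finset.sum_eq_zero (fun j _ => ?_)
        rcases le_or_gt ((j:ℕ)) ((i0:ℕ)) with hle | hlt
        · rw [hoth0 j (by omega), mul_zero]
        · rw [if_neg (by omega), zero_mul]
      have hz2 : (∑ j : Fin n1,
          (if (j:ℕ) ≤ (i0:ℕ) then binDigit p.2.2 ((i0:ℕ)-(j:ℕ)) else 0) * u2 j) = 0 := by
        refine Finset.sum_eq_zero (fun j _ => ?_)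
        rcases le_or_gt ((j:ℕ)) ((i0:ℕ)) with hle | hlt
        · rw [hoth2 j (by omega), mul_zero]
        · rw [if_neg (by omega), zero_mul]
      have hfirst : (∑ j : Fin n1,
          (if (j:ℕ) ≤ (i0:ℕ) then binDigit p.2.1 ((i0:ℕ)-(j:ℕ)) else 0) * u1 j)
          = binDigit p.2.1 0 := by
        rw [Finset.sum_eq_single_of_mem i0 (Finset.mem_univ i0) ?_]
        · rw [if_pos (le_refl _), Nat.sub_self, hu11, mul_one]
        · intro b _ hb
          rcases lt_or_ge ((b:ℕ)+1) m with h | h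
          · rw [hlow1 b h, mul_zero]
          · have hgt : (i0:ℕ) < (b:ℕ) := by
              have hne' : (b:ℕ) ≠ (i0:ℕ) := fun hh => hb (Fin.ext hh)
              omega
            rw [if_neg (by omega), zero_mul]
      rw [hz0, hz2, hfirst, zero_add, add_zero, binDigit_zero_eq_one hg2] at he
      exact absurd he (by decide)
    · -- u2 attains
      obtain ⟨-, -, i0, hi0, hu21⟩ := hspec u2 hA h2
      have hk0 : k = 2 := (huk 2 (by simpa using hA)).symm
      have hnot0 : firstIdx u0 ≠ (m:ℕ∞) := by
        intro h
        have h10 := huk 0 (by simpa using h)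
        rw [hk0] at h10
        exact absurd h10 (by decide)
      have hnot1 : firstIdx u1 ≠ (m:ℕ∞) := by
        intro h
        have h20 := huk 1 (by simpa using h)
        rw [hk0] at h20
        exact absurd h20 (by decide)
      have hoth0 : ∀ j : Fin n1, (j:ℕ)+1 ≤ m → u0 j = 0 := by
        intro j hj
        rcases lt_or_eq_of_le hj with h | h
        · exact hlow0 j h
        · by_contra hne'
          apply hnot0
          refine le_antisymm ?_ hmin0
          have hh := firstIdx_le u0 j hne'
          rw [h] at hh
          exact hh
      have hoth1 : ∀ j : Fin n1, (j:ℕ)+1 ≤ m → u1 j = 0 := by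
        intro j hj
        rcases lt_or_eq_of_le hj with h | h
        · exact hlow1 j h
        · by_contra hne'
          apply hnot1
          refine le_antisymm ?_ hmin1
          have hh := firstIdx_le u1 j hne'
          rw [h] at hh
          exact hh
      refine measure_mono_null ?_ vol_plane3
      rintro p ⟨hp1, hp2, hp3, hpe⟩
      by_contra hc3
      have hg3 : p.2.2 ∈ Set.Ioo (1:ℝ) 2 := ⟨hp3.1, lt_of_le_of_ne hp3.2 hc3⟩
      have he := hpe i0 (by omega)
      rw [Pi.add_apply, Pi.add_apply, Gmat_mulVec, Gmat_mulVec, Gmat_mulVec] at he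
      have hz0 : (∑ j : Fin n1,
          (if (j:ℕ) ≤ (i0:ℕ) then binDigit p.1 ((i0:ℕ)-(j:ℕ)) else 0) * u0 j) = 0 := by
        refine Finset.sum_eq_zero (fun j _ => ?_)
        rcases le_or_gt ((j:ℕ)) ((i0:ℕ)) with hle | hlt
        · rw [hoth0 j (by omega), mul_zero]
        · rw [if_neg (by omega), zero_mul]
      have hz1 : (∑ j : Fin n1,
          (if (j:ℕ) ≤ (i0:ℕ) then binDigit p.2.1 ((i0:ℕ)-(j:ℕ)) else 0) * u1 j) = 0 := by
        refine Finset.sum_eq_zero (fun j _ => ?_)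
        rcases le_or_gt ((j:ℕ)) ((i0:ℕ)) with hle | hlt
        · rw [hoth1 j (by omega), mul_zero]
        · rw [if_neg (by omega), zero_mul]
      have hfirst : (∑ j : Fin n1,
          (if (j:ℕ) ≤ (i0:ℕ) then binDigit p.2.2 ((i0:ℕ)-(j:ℕ)) else 0) * u2 j)
          = binDigit p.2.2 0 := by
        rw [Finset.sum_eq_single_of_mem i0 (Finset.mem_univ i0) ?_]
        · rw [if_pos (le_refl _), Nat.sub_self, hu21, mul_one]
        · intro b _ hb
          rcases lt_or_ge ((b:ℕ)+1) m with h | h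
          · rw [hlow2 b h, mul_zero]
          · have hgt : (i0:ℕ) < (b:ℕ) := by
              have hne' : (b:ℕ) ≠ (i0:ℕ) := fun hh => hb (Fin.ext hh)
              omega
            rw [if_neg (by omega), zero_mul]
      rw [hz0, hz1, hfirst, zero_add, zero_add, binDigit_zero_eq_one hg3] at he
      exact absurd he (by decide)
end
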